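/- arXiv:1002.3338 — 4 statements merged into one kernel-verified Lean document; each statement's English description precedes it below -/
import Mathlib

section
/- Let D ⊆ ℝℙⁿ be an open properly convex set. Then there exists a sequence (D_k) of open subsets of D with closure(D_k) compact and contained in D_{k+1} for every k, and ⋃_k D_k = D, such that, in an affine chart ℝⁿ = ℝℙⁿ \ H in which D is bounded, each D_k is a bounded strictly convex open subset of ℝⁿ whose boundary is a real-analytic hypersurface (near every boundary point, ∂D_k is the zero set of a real-analytic function with nonvanishing gradient). -/
noncomputable section

abbrev RV (n : ℕ) : Type := Fin (n + 1) → ℝ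
abbrev RP (n : ℕ) : Type := Projectivization ℝ (RV n)

/-- The quotient topology on a projectivization. -/
instance projTopology {K V : Type*} [DivisionRing K] [AddCommGroup V] [Module K V]
    [TopologicalSpace V] : TopologicalSpace (Projectivization K V) :=
  inferInstanceAs (TopologicalSpace (Quotient (projectivizationSetoid K V)))

/-- Real projective lines. -/
def isLineR {n : ℕ} (L : Set (RP n)) : Prop :=
  ∃ W : Submodule ℝ (RV n), Module.finrank ℝ W = 2 ∧ L = {x | x.rep ∈ W}

/-- Convexity in real projective space. -/
def convexR {n : ℕ} (D : Set (RP n)) : Prop :=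
  (∀ L, isLineR L → ¬ L ⊆ D) ∧ ∀ L, isLineR L → IsPreconnected (D ∩ L)

/-- Projective hyperplanes in real projective space. -/
def isHypR {n : ℕ} (H : Set (RP n)) : Prop :=
  ∃ ξ : Module.Dual ℝ (RV n), ξ ≠ 0 ∧ H = {x | ξ x.rep = 0}

/-- Proper convexity in real projective space. -/
def properlyConvexR {n : ℕ} (D : Set (RP n)) : Prop :=
  convexR D ∧ (∀ H, isHypR H → ¬ D ⊆ H) ∧
    ∀ L, isLineR L → ∀ p ∈ L, ¬ (L \ {p}) ⊆ D

/-- The affine chart `ℝⁿ = ℝℙⁿ \ H` of real projective space associated to `g ∈ GL(n+1,ℝ)`,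
sending `x` to the class of `g (x, 1)`. -/
def chartMap {n : ℕ} (g : Matrix.GeneralLinearGroup (Fin (n + 1)) ℝ) (x : Fin n → ℝ) : RP n :=
  Projectivization.mk ℝ ((g : Matrix (Fin (n + 1)) (Fin (n + 1)) ℝ).mulVec (Fin.snoc x 1))
    (by
      intro h0
      have h1 : ((↑g⁻¹ : Matrix (Fin (n + 1)) (Fin (n + 1)) ℝ) *
          (↑g : Matrix (Fin (n + 1)) (Fin (n + 1)) ℝ)).mulVec (Fin.snoc x 1) = 0 := by
        rw [← Matrix.mulVec_mulVec, h0, Matrix.mulVec_zero]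
      rw [Units.inv_mul, Matrix.one_mulVec] at h1
      have h2 := congrFun h1 (Fin.last n)
      simp [Fin.snoc_last] at h2)

/-- A bounded convex open set in `ℝⁿ` is strictly convex if its boundary contains no
nondegenerate line segment. -/
def strictlyConvexSet {n : ℕ} (A : Set (Fin n → ℝ)) : Prop :=
  ∀ x ∈ frontier A, ∀ y ∈ frontier A, x ≠ y → ¬ segment ℝ x y ⊆ frontier A

/-- The boundary of `A ⊆ ℝⁿ` is a real-analytic hypersurface: near every boundary point it
is the zero set of a real-analytic function with nonvanishing gradient. -/
def analyticBoundary {n : ℕ} (A : Set (Fin n → ℝ)) : Prop :=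
  ∀ a ∈ frontier A, ∃ (U : Set (Fin n → ℝ)) (f : (Fin n → ℝ) → ℝ),
    IsOpen U ∧ a ∈ U ∧ (∀ x ∈ U, AnalyticAt ℝ f x) ∧
    frontier A ∩ U = {x ∈ U | f x = 0} ∧
    ∀ x ∈ frontier A ∩ U, fderiv ℝ f x ≠ 0

section EuclideanPart
set_option maxHeartbeats 1000000
open Set

/-- Sum of squares is strictly convex. -/
lemma strictConvexOn_sumSq {n : ℕ} :
    StrictConvexOn ℝ Set.univ (fun x : Fin n → ℝ => ∑ j, x j ^ 2) := by
  refine ⟨convex_univ, ?_⟩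
  intro x _ y _ hxy a b ha hb hab
  obtain ⟨j0, hj0⟩ := Function.ne_iff.1 hxy
  have hsq := Even.strictConvexOn_pow (even_two) two_ne_zero
  have key : ∀ j, (a • x + b • y) j ^ 2 ≤ a * x j ^ 2 + b * y j ^ 2 := by
    intro j
    have := hsq.convexOn.2 (Set.mem_univ (x j)) (Set.mem_univ (y j)) ha.le hb.le hab
    simpa [smul_eq_mul] using this
  have keyj : (a • x + b • y) j0 ^ 2 < a * x j0 ^ 2 + b * y j0 ^ 2 := by
    have := hsq.2 (Set.mem_univ (x j0)) (Set.mem_univ (y j0)) hj0 ha hb hab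
    simpa [smul_eq_mul] using this
  have h1 : ∑ j, (a • x + b • y) j ^ 2 < ∑ j, (a * x j ^ 2 + b * y j ^ 2) :=
    Finset.sum_lt_sum (fun j _ => key j) ⟨j0, Finset.mem_univ _, keyj⟩
  calc ∑ j, (a • x + b • y) j ^ 2 < ∑ j, (a * x j ^ 2 + b * y j ^ 2) := h1
    _ = a • ∑ j, x j ^ 2 + b • ∑ j, y j ^ 2 := by
        rw [Finset.sum_add_distrib, ← Finset.mul_sum, ← Finset.mul_sum]; simp [smul_eq_mul]

/-- Convexity of exp of an affine function. -/
lemma convexOn_exp_affine {n : ℕ} (ℓ : (Fin n → ℝ) →L[ℝ] ℝ) (c M : ℝ) :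
    ConvexOn ℝ Set.univ (fun x => Real.exp (M * (ℓ x - c))) := by
  refine ⟨convex_univ, ?_⟩
  intro x _ y _ a b ha hb hab
  have h1 : M * (ℓ (a • x + b • y) - c) = a * (M * (ℓ x - c)) + b * (M * (ℓ y - c)) := by
    have : ℓ (a • x + b • y) = a * ℓ x + b * ℓ y := by
      simp [map_add, map_smul, smul_eq_mul]
    rw [this]; linear_combination (M * c) * hab
  show Real.exp (M * (ℓ (a • x + b • y) - c)) ≤
    a • Real.exp (M * (ℓ x - c)) + b • Real.exp (M * (ℓ y - c))
  rw [h1]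
  have := convexOn_exp.2 (Set.mem_univ (M * (ℓ x - c))) (Set.mem_univ (M * (ℓ y - c))) ha hb hab
  simpa [smul_eq_mul] using this

lemma convexOn_finsetSum {ι E : Type*} [AddCommGroup E] [Module ℝ E] (t : Finset ι)
    {f : ι → E → ℝ} (h : ∀ i ∈ t, ConvexOn ℝ Set.univ (f i)) :
    ConvexOn ℝ Set.univ (fun x => ∑ i ∈ t, f i x) := by
  classical
  induction t using Finset.cons_induction with
  | empty => simpa using convexOn_const (0 : ℝ) convex_univ
  | cons i t hi ih =>
      simp_rw [Finset.sum_cons]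
      exact (h i (Finset.mem_cons_self i t)).add (ih fun j hj => h j (Finset.mem_cons_of_mem hj))

/-- A convex differentiable function has nonzero derivative at any non-minimum point. -/
lemma fderiv_ne_zero_of_lt {E : Type*} [NormedAddCommGroup E] [NormedSpace ℝ E]
    {f : E → ℝ} (hf : ConvexOn ℝ Set.univ f) {x z : E}
    (hd : DifferentiableAt ℝ f x) (hlt : f z < f x) : fderiv ℝ f x ≠ 0 := by
  intro h0
  set g : ℝ → ℝ := fun t => f (x + t • (z - x)) with hg
  have hγ : HasDerivAt (fun t : ℝ => x + t • (z - x)) (z - x) 0 := by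
    simpa using ((hasDerivAt_id (0 : ℝ)).smul_const (z - x)).const_add x
  have hgd : HasDerivAt g 0 0 := by
    have hx0 : x = x + (0:ℝ) • (z - x) := by simp
    have hF : HasFDerivAt f (fderiv ℝ f x) (x + (0:ℝ) • (z - x)) := hx0 ▸ hd.hasFDerivAt
    have h2 := hF.comp_hasDerivAt 0 hγ
    rw [h0, ContinuousLinearMap.zero_apply] at h2; exact h2
  have hslope : ∀ t ∈ Set.Ioo (0 : ℝ) 1, slope g 0 t ≤ f z - f x := by
    intro t ht
    have hcomb : x + t • (z - x) = (1 - t) • x + t • z := by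
      rw [smul_sub, sub_smul, one_smul]; abel
    have := hf.2 (Set.mem_univ x) (Set.mem_univ z)
      (by linarith [ht.2] : (0:ℝ) ≤ 1 - t) ht.1.le (by ring)
    rw [← hcomb] at this
    have hgt : g t ≤ (1 - t) * f x + t * f z := by simpa [g, smul_eq_mul] using this
    have : g t - g 0 ≤ t * (f z - f x) := by
      have hg0 : g 0 = f x := by simp [g]
      rw [hg0]; nlinarith
    rw [slope_def_field]
    simp only [sub_zero]
    rw [div_le_iff₀ ht.1]
    linarith [this]
  have hlim : Filter.Tendsto (slope g 0) (nhdsWithin 0 (Set.Ioi 0)) (nhds 0) := by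
    have := hasDerivAt_iff_tendsto_slope.1 hgd
    exact this.mono_left (nhdsWithin_mono 0 (fun t ht => ne_of_gt ht))
  have hle : (0 : ℝ) ≤ f z - f x := by
    refine le_of_tendsto hlim ?_
    filter_upwards [Ioo_mem_nhdsGT_of_mem (by constructor <;> norm_num : (0:ℝ) ∈ Set.Ico 0 1)]
      with t ht using hslope t ht
  linarith


/-- Frontier of a sublevel set of a continuous convex function. -/
lemma frontier_sublevel {n : ℕ} {f : (Fin n → ℝ) → ℝ} (hconv : ConvexOn ℝ Set.univ f)
    (hcont : Continuous f) {c₀ : Fin n → ℝ} (hc₀ : f c₀ < 1) :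
    frontier {x | f x < 1} = {x | f x = 1} := by
  have hopen : IsOpen {x : Fin n → ℝ | f x < 1} := isOpen_lt hcont continuous_const
  ext x
  constructor
  · intro hx
    have h2 : x ∉ {x | f x < 1} := by
      have := hx.2; rwa [hopen.interior_eq] at this
    have hle : f x ≤ 1 := by
      have hcl : closure {x : Fin n → ℝ | f x < 1} ⊆ {x | f x ≤ 1} :=
        closure_minimal (fun y hy => (le_of_lt hy : f y ≤ 1)) (isClosed_le hcont continuous_const)
      exact hcl hx.1
    exact le_antisymm hle (not_lt.1 (by simpa using h2))
  · intro hx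
    have hxnot : x ∉ {x : Fin n → ℝ | f x < 1} := by
      intro h
      have h1 : f x = 1 := hx
      have h2 : f x < 1 := h
      linarith
    constructor
    · have hγ : Continuous (fun t : ℝ => c₀ + t • (x - c₀)) := by continuity
      have ht : Filter.Tendsto (fun t : ℝ => c₀ + t • (x - c₀))
          (nhdsWithin 1 (Set.Iio 1)) (nhds x) := by
        have h1 : Filter.Tendsto (fun t : ℝ => c₀ + t • (x - c₀))
            (nhdsWithin 1 (Set.Iio 1)) (nhds (c₀ + (1:ℝ) • (x - c₀))) :=
          (hγ.tendsto 1).mono_left nhdsWithin_le_nhds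
        simpa using h1
      refine mem_closure_of_tendsto ht ?_
      filter_upwards [Ioo_mem_nhdsLT_of_mem
        (by constructor <;> norm_num : (1:ℝ) ∈ Set.Ioc 0 1)] with t htIoo
      have hcomb : c₀ + t • (x - c₀) = (1 - t) • c₀ + t • x := by
        rw [smul_sub, sub_smul, one_smul]; abel
      have := hconv.2 (Set.mem_univ c₀) (Set.mem_univ x)
        (by linarith [htIoo.2] : (0:ℝ) ≤ 1 - t) htIoo.1.le (by ring)
      rw [← hcomb] at this
      have hfx : f x = 1 := hx
      have hcvx : f (c₀ + t • (x - c₀)) ≤ (1 - t) * f c₀ + t * f x := by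
        simpa [smul_eq_mul] using this
      have hlt1 : f (c₀ + t • (x - c₀)) < 1 := by nlinarith [htIoo.1, htIoo.2]
      exact hlt1
    · rwa [hopen.interior_eq]

lemma StrictConvexOn.mul_pos {E : Type*} [AddCommGroup E] [Module ℝ E] {s : Set E}
    {f : E → ℝ} (hf : StrictConvexOn ℝ s f) {c : ℝ} (hc : 0 < c) :
    StrictConvexOn ℝ s (fun x => c * f x) := by
  refine ⟨hf.1, fun x hx y hy hxy a b ha hb hab => ?_⟩
  have := hf.2 hx hy hxy ha hb hab
  simp only [smul_eq_mul] at this ⊢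
  nlinarith

/-- Main construction: a strictly convex analytic body between a compact convex set and an
open convex bounded set. -/
lemma exists_good {n : ℕ} (C B : Set (Fin n → ℝ)) (hCc : IsCompact C) (hCne : C.Nonempty)
    (hCconv : Convex ℝ C) (hBo : IsOpen B) (hBconv : Convex ℝ B)
    (hBb : Bornology.IsBounded B) (hCB : C ⊆ B) :
    ∃ S, IsOpen S ∧ Convex ℝ S ∧ Bornology.IsBounded S ∧ C ⊆ S ∧ S ⊆ B ∧
      strictlyConvexSet S ∧ analyticBoundary S := by
  classical
  obtain ⟨c₀, hc₀⟩ := hCne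
  -- separating functionals at frontier points
  have hsep : ∀ y : Fin n → ℝ, ∃ p : ((Fin n → ℝ) →L[ℝ] ℝ) × ℝ,
      y ∈ frontier B → ((∀ a ∈ C, p.1 a < p.2) ∧ p.2 < p.1 y) := by
    intro y
    by_cases hy : y ∈ frontier B
    · have hyB : y ∉ B := by
        have := hy.2; rwa [hBo.interior_eq] at this
      have hyC : y ∉ C := fun h => hyB (hCB h)
      obtain ⟨ℓ, u, h1, h2⟩ := geometric_hahn_banach_closed_point hCconv hCc.isClosed hyC
      exact ⟨(ℓ, u), fun _ => ⟨h1, h2⟩⟩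
    · exact ⟨(0, 0), fun h => absurd h hy⟩
  choose p hp using hsep
  set ℓ : (Fin n → ℝ) → ((Fin n → ℝ) →L[ℝ] ℝ) := fun y => (p y).1 with hℓdef
  set u : (Fin n → ℝ) → ℝ := fun y => (p y).2 with hudef
  -- compact frontier and finite subcover
  have hfrC : IsCompact (frontier B) := by
    refine Metric.isCompact_of_isClosed_isBounded isClosed_frontier ?_
    exact hBb.closure.subset frontier_subset_closure
  have hcov : frontier B ⊆ ⋃ y ∈ frontier B, {w | u y < ℓ y w} := by
    intro y hy
    exact Set.mem_biUnion hy ((hp y hy).2)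
  obtain ⟨s, hs_sub, hs_fin, hs_cover⟩ := hfrC.elim_finite_subcover_image
    (fun y _ => isOpen_lt continuous_const (ℓ y).continuous) hcov
  set T : Finset (Fin n → ℝ) := hs_fin.toFinset with hTdef
  have hTsub : ∀ y ∈ T, y ∈ frontier B := fun y hy => hs_sub (hs_fin.mem_toFinset.1 hy)
  -- constants
  set r : ℝ := 1 / (2 * ((T.card : ℝ) + 1)) with hrdef
  have hr0 : 0 < r := by positivity
  have hr1 : r < 1 := by
    rw [hrdef, div_lt_one (by positivity)]
    have : (0:ℝ) ≤ (T.card : ℝ) := Nat.cast_nonneg _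
    linarith
  have hlogr : 0 < -Real.log r := by
    have := Real.log_neg hr0 hr1
    linarith
  have hη : ∀ y : Fin n → ℝ, ∃ η : ℝ, 0 < η ∧ (y ∈ T → ∀ a ∈ C, ℓ y a - u y ≤ -η) := by
    intro y
    by_cases hyT : y ∈ T
    · obtain ⟨a₀, ha₀, hmax⟩ := hCc.exists_isMaxOn ⟨c₀, hc₀⟩ (ℓ y).continuous.continuousOn
      refine ⟨u y - ℓ y a₀, ?_, fun _ a ha => ?_⟩
      · linarith [(hp y (hTsub y hyT)).1 a₀ ha₀]
      · have := hmax ha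
        simp only [Set.mem_setOf_eq] at this
        linarith
    · exact ⟨1, one_pos, fun h => absurd h hyT⟩
  choose η hηpos hηle using hη
  set M : (Fin n → ℝ) → ℝ := fun y => (-Real.log r) / (η y) with hMdef
  have hMpos : ∀ y, 0 < M y := fun y => div_pos hlogr (hηpos y)
  have htermC : ∀ y ∈ T, ∀ a ∈ C, Real.exp (M y * (ℓ y a - u y)) ≤ r := by
    intro y hyT a ha
    have h1 : M y * (ℓ y a - u y) ≤ M y * (-η y) :=
      mul_le_mul_of_nonneg_left (hηle y hyT a ha) (hMpos y).le
    have h2 : M y * (-η y) = Real.log r := by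
      rw [hMdef]
      field_simp
      rw [mul_div_assoc, div_self (hηpos y).ne', mul_one]
    calc Real.exp (M y * (ℓ y a - u y)) ≤ Real.exp (Real.log r) :=
          Real.exp_le_exp.2 (h1.trans_eq h2)
      _ = r := Real.exp_log hr0
  -- the quadratic part
  set q : (Fin n → ℝ) → ℝ := fun x => ∑ j, x j ^ 2 with hqdef
  have hqcont : Continuous q := by
    apply continuous_finset_sum
    exact fun j _ => (continuous_apply j).pow 2
  have hq0 : ∀ x, 0 ≤ q x := fun x => Finset.sum_nonneg fun j _ => sq_nonneg _
  obtain ⟨a₁, _, hqmax⟩ := hCc.exists_isMaxOn ⟨c₀, hc₀⟩ hqcont.continuousOn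
  set Q : ℝ := q a₁ with hQdef
  have hQ0 : 0 ≤ Q := hq0 a₁
  set ε : ℝ := 1 / (4 * (Q + 1)) with hεdef
  have hε : 0 < ε := by positivity
  have hqC : ∀ a ∈ C, ε * q a ≤ 1 / 4 := by
    intro a ha
    have h1 : q a ≤ Q := hqmax ha
    have h2 : ε * q a ≤ ε * Q := mul_le_mul_of_nonneg_left h1 hε.le
    have h3 : ε * Q ≤ 1 / 4 := by
      rw [hεdef]
      rw [div_mul_eq_mul_div, div_le_div_iff₀ (by positivity) (by norm_num)]
      nlinarith
    linarith
  -- the function F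
  obtain ⟨F, hF⟩ : ∃ F : (Fin n → ℝ) → ℝ, ∀ x,
      F x = (∑ y ∈ T, Real.exp (M y * (ℓ y x - u y))) + ε * q x := ⟨_, fun _ => rfl⟩
  have hFfun : F = fun x => (∑ y ∈ T, Real.exp (M y * (ℓ y x - u y))) + ε * q x :=
    funext hF
  have hFan : ∀ x, AnalyticAt ℝ F x := by
    intro x
    rw [hFfun]
    apply AnalyticAt.add
    · apply Finset.analyticAt_fun_sum
      intro y _
      exact (((analyticAt_const (v := M y)).mul
        (((ℓ y).analyticAt x).sub analyticAt_const)).rexp)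
    · refine (analyticAt_const (v := ε)).mul ?_
      rw [hqdef]
      exact Finset.analyticAt_fun_sum _ fun j _ =>
        ((ContinuousLinearMap.proj (R := ℝ) (φ := fun _ : Fin n => ℝ) j).analyticAt x).pow 2
  have hFcont : Continuous F := continuous_iff_continuousAt.2 fun x => (hFan x).continuousAt
  have hFconv : ConvexOn ℝ Set.univ F := by
    rw [hFfun]
    apply ConvexOn.add
    · exact convexOn_finsetSum T fun y _ => convexOn_exp_affine (ℓ y) (u y) (M y)
    · have := ((strictConvexOn_sumSq (n := n)).mul_pos hε).convexOn
      simpa [hqdef] using this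
  have hFstrict : StrictConvexOn ℝ Set.univ F := by
    rw [hFfun]
    apply ConvexOn.add_strictConvexOn
    · exact convexOn_finsetSum T fun y _ => convexOn_exp_affine (ℓ y) (u y) (M y)
    · have := (strictConvexOn_sumSq (n := n)).mul_pos hε
      simpa [hqdef] using this
  -- F < 1 on C
  have hFC : ∀ a ∈ C, F a < 1 := by
    intro a ha
    have hsum : (∑ y ∈ T, Real.exp (M y * (ℓ y a - u y))) ≤ (T.card : ℝ) * r := by
      have := Finset.sum_le_card_nsmul T (fun y => Real.exp (M y * (ℓ y a - u y))) r
        (fun y hy => htermC y hy a ha)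
      simpa [nsmul_eq_mul] using this
    have hcr : (T.card : ℝ) * r ≤ 1 / 2 := by
      rw [hrdef]
      rw [mul_one_div, div_le_div_iff₀ (by positivity) (by norm_num)]
      have : (0:ℝ) ≤ (T.card : ℝ) := Nat.cast_nonneg _
      linarith
    have hq4 := hqC a ha
    rw [hF a]
    linarith
  have hSopen : IsOpen {x | F x < 1} := isOpen_lt hFcont continuous_const
  have hCS : C ⊆ {x | F x < 1} := fun a ha => hFC a ha
  have hc₀S : F c₀ < 1 := hFC c₀ hc₀
  have hfront : frontier {x | F x < 1} = {x | F x = 1} := frontier_sublevel hFconv hFcont hc₀S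
  -- S ⊆ B
  have hSP : ∀ x, F x < 1 → ∀ y ∈ T, ℓ y x ≤ u y := by
    intro x hxS y hyT
    by_contra hgt
    push_neg at hgt
    have h1 : (1:ℝ) < Real.exp (M y * (ℓ y x - u y)) := by
      rw [show (1:ℝ) = Real.exp 0 by simp]
      apply Real.exp_lt_exp.2
      have := hMpos y
      nlinarith
    have h2 : Real.exp (M y * (ℓ y x - u y)) ≤ ∑ z ∈ T, Real.exp (M z * (ℓ z x - u z)) :=
      Finset.single_le_sum (f := fun z => Real.exp (M z * (ℓ z x - u z)))
        (fun z _ => (Real.exp_pos _).le) hyT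
    have h3 : 0 ≤ ε * q x := mul_nonneg hε.le (hq0 x)
    rw [hF x] at hxS
    linarith
  have hPconv : Convex ℝ {w | ∀ y ∈ T, ℓ y w ≤ u y} := by
    have heq : {w : Fin n → ℝ | ∀ y ∈ T, ℓ y w ≤ u y} = ⋂ y ∈ T, {w | ℓ y w ≤ u y} := by
      ext w; simp
    rw [heq]
    exact convex_iInter₂ fun y _ => convex_halfSpace_le
      ⟨fun a b => (ℓ y).map_add a b, fun c a => (ℓ y).map_smul c a⟩ (u y)
  have hPfr : ∀ w, (∀ y ∈ T, ℓ y w ≤ u y) → w ∉ frontier B := by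
    intro w hwP hwfr
    obtain ⟨y, hy, hwy⟩ := Set.mem_iUnion₂.1 (hs_cover hwfr)
    have hyT : y ∈ T := hs_fin.mem_toFinset.2 hy
    exact absurd (hwP y hyT) (not_le.2 hwy)
  have hPB : {w | ∀ y ∈ T, ℓ y w ≤ u y} ⊆ B := by
    intro x hxP
    by_contra hxB
    have hxcl : x ∉ closure B := by
      intro hcl
      rcases (closure_eq_interior_union_frontier B ▸ hcl) with h | h
      · exact hxB (hBo.interior_eq ▸ h)
      · exact hPfr x hxP h
    have hpre : IsPreconnected {w | ∀ y ∈ T, ℓ y w ≤ u y} := hPconv.isPreconnected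
    have hcover : {w | ∀ y ∈ T, ℓ y w ≤ u y} ⊆ B ∪ (closure B)ᶜ := by
      intro w hw
      by_cases hwc : w ∈ closure B
      · rcases (closure_eq_interior_union_frontier B ▸ hwc) with h | h
        · exact Or.inl (hBo.interior_eq ▸ h)
        · exact absurd h (hPfr w hw)
      · exact Or.inr hwc
    have hP1 : ({w | ∀ y ∈ T, ℓ y w ≤ u y} ∩ B).Nonempty :=
      ⟨c₀, fun y hy => ((hp y (hTsub y hy)).1 c₀ hc₀).le, hCB hc₀⟩
    have hP2 : ({w | ∀ y ∈ T, ℓ y w ≤ u y} ∩ (closure B)ᶜ).Nonempty := ⟨x, hxP, hxcl⟩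
    obtain ⟨w, _, hwB, hwc⟩ := hpre B (closure B)ᶜ hBo isClosed_closure.isOpen_compl
      hcover hP1 hP2
    exact hwc (subset_closure hwB)
  have hSB : {x | F x < 1} ⊆ B := fun x hx => hPB (fun y hy => hSP x hx y hy)
  -- bounded
  have hSbdd : Bornology.IsBounded {x | F x < 1} := by
    have hsub : {x | F x < 1} ⊆ Metric.closedBall 0 (Real.sqrt (1 / ε)) := by
      intro x hx
      have hx' : F x < 1 := hx
      rw [hF x] at hx'
      have h1 : 0 ≤ ∑ y ∈ T, Real.exp (M y * (ℓ y x - u y)) :=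
        Finset.sum_nonneg fun y _ => (Real.exp_pos _).le
      have hq1 : q x ≤ 1 / ε := by
        rw [le_div_iff₀ hε]
        have hcomm : q x * ε = ε * q x := mul_comm _ _
        linarith
      rw [Metric.mem_closedBall, dist_zero_right]
      rw [pi_norm_le_iff_of_nonneg (Real.sqrt_nonneg _)]
      intro j
      have h3 : x j ^ 2 ≤ q x := by
        rw [hqdef]
        exact Finset.single_le_sum (fun i _ => sq_nonneg (x i)) (Finset.mem_univ j)
      have h4 : ‖x j‖ = Real.sqrt (x j ^ 2) := by
        rw [Real.sqrt_sq_eq_abs, Real.norm_eq_abs]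
      rw [h4]
      exact Real.sqrt_le_sqrt (by linarith)
    exact Metric.isBounded_closedBall.subset hsub
  -- strict convexity of the set
  have hSstrict : strictlyConvexSet {x | F x < 1} := by
    intro x hx y hy hxy hseg
    have hxF : F x = 1 := by rw [hfront] at hx; exact hx
    have hyF : F y = 1 := by rw [hfront] at hy; exact hy
    have hmid : (1/2 : ℝ) • x + (1/2 : ℝ) • y ∈ segment ℝ x y :=
      ⟨1/2, 1/2, by norm_num, by norm_num, by norm_num, rfl⟩
    have h1 := hFstrict.2 (Set.mem_univ x) (Set.mem_univ y) hxy
      (by norm_num : (0:ℝ) < 1/2) (by norm_num : (0:ℝ) < 1/2) (by norm_num)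
    have h2 : F ((1/2 : ℝ) • x + (1/2 : ℝ) • y) < 1 := by
      have heq1 : (1/2 : ℝ) • F x + (1/2 : ℝ) • F y = 1 := by
        rw [hxF, hyF]; norm_num
      calc F ((1/2 : ℝ) • x + (1/2 : ℝ) • y) < (1/2 : ℝ) • F x + (1/2 : ℝ) • F y := h1
        _ = 1 := heq1
    have hm := hseg hmid
    rw [hfront] at hm
    have hm' : F ((1/2 : ℝ) • x + (1/2 : ℝ) • y) = 1 := hm
    linarith
  -- analytic boundary
  have hSan : analyticBoundary {x | F x < 1} := by
    intro a _
    refine ⟨Set.univ, fun x => F x - 1, isOpen_univ, Set.mem_univ a,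
      fun x _ => (hFan x).sub analyticAt_const, ?_, ?_⟩
    · ext x
      simp only [Set.mem_inter_iff, Set.mem_univ, and_true, Set.mem_setOf_eq, true_and]
      rw [hfront]
      simp only [Set.mem_setOf_eq]
      constructor
      · intro h; rw [h]; ring
      · intro h; linarith
    · intro x hx
      have hxF : F x = 1 := by
        have h5 := hx.1; rw [hfront] at h5; exact h5
      have hderiv : fderiv ℝ (fun x => F x - 1) x = fderiv ℝ F x := by
        simp [fderiv_sub_const]
      rw [hderiv]
      exact fderiv_ne_zero_of_lt hFconv (hFan x).differentiableAt (show F c₀ < F x by rw [hxF]; exact hc₀S)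
  have hSconv : Convex ℝ {x | F x < 1} := by
    have h6 := hFconv.convex_lt 1
    have heq : {x ∈ Set.univ | F x < 1} = {x | F x < 1} := by ext x; simp
    rwa [heq] at h6
  exact ⟨{x | F x < 1}, hSopen, hSconv, hSbdd, hCS, hSB, hSstrict, hSan⟩

/-- Exhaustion of a bounded convex open set by strictly convex analytic bodies. -/
lemma exists_exhaustion {n : ℕ} (A : Set (Fin n → ℝ)) (hAo : IsOpen A) (hAconv : Convex ℝ A)
    (hAb : Bornology.IsBounded A) (hAne : A.Nonempty) :
    ∃ S : ℕ → Set (Fin n → ℝ),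
      (∀ k, IsOpen (S k) ∧ Convex ℝ (S k) ∧ Bornology.IsBounded (S k) ∧
        strictlyConvexSet (S k) ∧ analyticBoundary (S k) ∧ S k ⊆ A ∧
        closure (S k) ⊆ S (k + 1)) ∧ (⋃ k, S k) = A := by
  classical
  obtain ⟨p, hp⟩ := hAne
  set t : ℕ → ℝ := fun k => ((k : ℝ) + 1) / ((k : ℝ) + 2) with htdef
  have ht0 : ∀ k, 0 < t k := fun k => by positivity
  have ht1 : ∀ k, t k < 1 := fun k => by
    rw [htdef, div_lt_one (by positivity)]; linarith
  set Ak : ℕ → Set (Fin n → ℝ) := fun k => AffineMap.homothety p (t k) '' A with hAkdef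
  have hhom_apply : ∀ (s : ℝ) (z : Fin n → ℝ),
      AffineMap.homothety p s z = s • (z - p) + p := fun s z => rfl
  have hAk_sub : ∀ k, Ak k ⊆ A := by
    intro k z hz
    obtain ⟨w, hw, rfl⟩ := hz
    rw [hhom_apply]
    have hcomb : t k • (w - p) + p = t k • w + (1 - t k) • p := by
      rw [smul_sub, sub_smul, one_smul]; abel
    rw [hcomb]
    exact hAconv hw hp (ht0 k).le (by linarith [ht1 k]) (by ring)
  have hAk_conv : ∀ k, Convex ℝ (Ak k) := fun k =>
    hAconv.affine_image (AffineMap.homothety p (t k))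
  have hAk_open : ∀ k, IsOpen (Ak k) := fun k =>
    (AffineMap.homothety_isOpenMap p (t k) (ht0 k).ne') A hAo
  have hAk_mem : ∀ k, p ∈ Ak k := fun k =>
    ⟨p, hp, by rw [hhom_apply]; simp⟩
  have hAk_bdd : ∀ k, Bornology.IsBounded (Ak k) := fun k => hAb.subset (hAk_sub k)
  have hcl_sub : ∀ k, closure (Ak k) ⊆ Ak (k + 1) := by
    intro k
    have hrat : 1 < t (k + 1) / t k := by
      rw [one_lt_div (ht0 k), htdef]
      rw [div_lt_div_iff₀ (by positivity) (by positivity)]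
      push_cast
      nlinarith
    have h1 := (hAk_conv k).closure_subset_image_homothety_interior_of_one_lt
      (by rw [(hAk_open k).interior_eq]; exact hAk_mem k) (t (k + 1) / t k) hrat
    refine h1.trans ?_
    rw [(hAk_open k).interior_eq]
    have h2 : AffineMap.homothety p (t (k + 1) / t k) '' Ak k = Ak (k + 1) := by
      rw [hAkdef]
      simp only
      rw [← Set.image_comp]
      have hfun : (⇑(AffineMap.homothety p (t (k + 1) / t k)) ∘
          ⇑(AffineMap.homothety p (t k))) = ⇑(AffineMap.homothety p (t (k + 1))) := by
        funext z
        rw [Function.comp_apply, ← AffineMap.comp_apply, ← AffineMap.homothety_mul,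
          div_mul_cancel₀ _ (ht0 k).ne']
      rw [hfun]
    rw [h2]
  have hcl_cpt : ∀ k, IsCompact (closure (Ak k)) := fun k =>
    Metric.isCompact_of_isClosed_isBounded isClosed_closure (hAk_bdd k).closure
  have hgood : ∀ k, ∃ S, IsOpen S ∧ Convex ℝ S ∧ Bornology.IsBounded S ∧
      closure (Ak k) ⊆ S ∧ S ⊆ Ak (k + 1) ∧ strictlyConvexSet S ∧ analyticBoundary S :=
    fun k => exists_good (closure (Ak k)) (Ak (k + 1)) (hcl_cpt k)
      ⟨p, subset_closure (hAk_mem k)⟩ (hAk_conv k).closure (hAk_open (k + 1))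
      (hAk_conv (k + 1)) (hAk_bdd (k + 1)) (hcl_sub k)
  choose S hS1 hS2 hS3 hS4 hS5 hS6 hS7 using hgood
  refine ⟨S, fun k => ⟨hS1 k, hS2 k, hS3 k, hS6 k, hS7 k, (hS5 k).trans (hAk_sub (k+1)), ?_⟩, ?_⟩
  · -- closure (S k) ⊆ S (k+1)
    have h1 : closure (S k) ⊆ closure (Ak (k + 1)) := closure_mono (hS5 k)
    exact h1.trans (hS4 (k + 1))
  · apply Set.eq_of_subset_of_subset
    · exact Set.iUnion_subset fun k => (hS5 k).trans (hAk_sub (k + 1))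
    · intro x hx
      obtain ⟨ε, hε, hball⟩ := Metric.isOpen_iff.1 hAo x hx
      obtain ⟨k, hk⟩ := exists_nat_gt (‖x - p‖ / ε)
      have hknn : (0:ℝ) ≤ (k:ℝ) := Nat.cast_nonneg _
      have hxk : x ∈ Ak k := by
        refine ⟨AffineMap.homothety p (t k)⁻¹ x, ?_, ?_⟩
        · apply hball
          rw [Metric.mem_ball, hhom_apply, dist_eq_norm]
          have heq : (t k)⁻¹ • (x - p) + p - x = ((t k)⁻¹ - 1) • (x - p) := by
            rw [sub_smul, one_smul]; abel
          rw [heq, norm_smul, Real.norm_eq_abs]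
          have hinv : (t k)⁻¹ - 1 = 1 / ((k : ℝ) + 1) := by
            rw [htdef]
            simp only
            rw [inv_div]
            rw [div_sub_one (by positivity)]
            norm_num
          rw [hinv, abs_of_pos (by positivity)]
          rw [div_mul_eq_mul_div, one_mul, div_lt_iff₀ (by positivity)]
          have h2 : ‖x - p‖ < ε * ((k : ℝ)) + ε * 1 := by
            have := (div_lt_iff₀ hε).1 hk
            nlinarith
          nlinarith
        · rw [← AffineMap.comp_apply, ← AffineMap.homothety_mul,
            mul_inv_cancel₀ (ht0 k).ne', AffineMap.homothety_one, AffineMap.id_apply]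
      exact Set.mem_iUnion.2 ⟨k, (hS4 k) (subset_closure hxk)⟩

end EuclideanPart


section ChartPart
set_option maxHeartbeats 1000000
open Set Topology

variable {n : ℕ}

/-- The underlying matrix of `g`. -/
private def Gm (g : Matrix.GeneralLinearGroup (Fin (n + 1)) ℝ) :
    Matrix (Fin (n + 1)) (Fin (n + 1)) ℝ := g

/-- The underlying matrix of `g⁻¹`. -/
private def Gi (g : Matrix.GeneralLinearGroup (Fin (n + 1)) ℝ) :
    Matrix (Fin (n + 1)) (Fin (n + 1)) ℝ := (g⁻¹ : Matrix.GeneralLinearGroup (Fin (n + 1)) ℝ)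

variable (g : Matrix.GeneralLinearGroup (Fin (n + 1)) ℝ)

private lemma Gi_Gm_mulVec (v : RV n) : (Gi g).mulVec ((Gm g).mulVec v) = v := by
  rw [Matrix.mulVec_mulVec, show Gi g * Gm g = 1 from Units.inv_mul g, Matrix.one_mulVec]

private lemma Gm_Gi_mulVec (v : RV n) : (Gm g).mulVec ((Gi g).mulVec v) = v := by
  rw [Matrix.mulVec_mulVec, show Gm g * Gi g = 1 from Units.mul_inv g, Matrix.one_mulVec]

private lemma Gi_injective : Function.Injective ((Gi g).mulVec) := by
  intro v w h
  have := congrArg ((Gm g).mulVec) h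
  rwa [Gm_Gi_mulVec, Gm_Gi_mulVec] at this

/-- The vector representing the chart point of `x`. -/
private def cvec (x : Fin n → ℝ) : RV n := (Gm g).mulVec (Fin.snoc x 1)

private lemma GiGm : Gi g * Gm g = 1 := Units.inv_mul g

private lemma cvec_ne_zero (x : Fin n → ℝ) : cvec g x ≠ 0 := by
  intro h0
  have h1 := congrArg ((Gi g).mulVec) h0
  simp only [cvec] at h1
  rw [Gi_Gm_mulVec, Matrix.mulVec_zero] at h1
  have h2 := congrFun h1 (Fin.last n)
  simp [Fin.snoc_last] at h2

private lemma chartMap_eq_mk (x : Fin n → ℝ) :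
    chartMap g x = Projectivization.mk ℝ (cvec g x) (cvec_ne_zero g x) := rfl

/-- The "last coordinate" functional in the chart. -/
private def lfun (v : RV n) : ℝ := (Gi g).mulVec v (Fin.last n)

/-- The "affine part" in the chart. -/
private def hfun (v : RV n) : Fin n → ℝ := Fin.init ((Gi g).mulVec v)

private lemma lfun_smul (c : ℝ) (v : RV n) : lfun g (c • v) = c * lfun g v := by
  simp [lfun, Matrix.mulVec_smul]

private lemma hfun_smul (c : ℝ) (v : RV n) : hfun g (c • v) = c • hfun g v := by
  funext j
  simp [hfun, Matrix.mulVec_smul, Fin.init]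

private lemma lfun_cvec (x : Fin n → ℝ) : lfun g (cvec g x) = 1 := by
  show (Gi g).mulVec ((Gm g).mulVec (Fin.snoc x 1)) (Fin.last n) = 1
  rw [Gi_Gm_mulVec]
  simp [Fin.snoc_last]

private lemma hfun_cvec (x : Fin n → ℝ) : hfun g (cvec g x) = x := by
  funext j
  show Fin.init ((Gi g).mulVec ((Gm g).mulVec (Fin.snoc x 1))) j = x j
  rw [Gi_Gm_mulVec]
  simp [Fin.init, Fin.snoc_castSucc]

private lemma hl_ne_zero {v : RV n} (hv : v ≠ 0) (hl : lfun g v = 0) : hfun g v ≠ 0 := by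
  intro hh
  apply hv
  have hw : (Gi g).mulVec v = 0 := by
    funext i
    refine Fin.lastCases ?_ ?_ i
    · exact hl
    · intro j; exact congrFun hh j
  have := congrArg ((Gm g).mulVec) hw
  rwa [Gm_Gi_mulVec, Matrix.mulVec_zero] at this

/-- Membership characterization for chart points. -/
private lemma mk_eq_chartMap_iff {v : RV n} (hv : v ≠ 0) (x : Fin n → ℝ) :
    Projectivization.mk ℝ v hv = chartMap g x ↔ lfun g v ≠ 0 ∧ hfun g v = lfun g v • x := by
  rw [chartMap_eq_mk, Projectivization.mk_eq_mk_iff']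
  constructor
  · rintro ⟨a, ha⟩
    have ha0 : a ≠ 0 := by rintro rfl; rw [zero_smul] at ha; exact hv ha.symm
    rw [← ha, lfun_smul, hfun_smul, lfun_cvec, hfun_cvec, mul_one]
    exact ⟨ha0, rfl⟩
  · rintro ⟨hl, hh⟩
    refine ⟨lfun g v, ?_⟩
    have hw : (Gi g).mulVec v = lfun g v • (Fin.snoc x 1 : RV n) := by
      funext i
      refine Fin.lastCases ?_ ?_ i
      · show (Gi g).mulVec v (Fin.last n) = (lfun g v • (Fin.snoc x 1 : RV n)) (Fin.last n)
        simp only [Pi.smul_apply, Fin.snoc_last, smul_eq_mul, mul_one]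
        rfl
      · intro j
        show (Gi g).mulVec v (Fin.castSucc j) = (lfun g v • (Fin.snoc x 1 : RV n)) (Fin.castSucc j)
        have h5 := congrFun hh j
        simp only [Pi.smul_apply, Fin.snoc_castSucc, smul_eq_mul]
        exact h5
    have h6 := congrArg ((Gm g).mulVec) hw
    rw [Gm_Gi_mulVec, Matrix.mulVec_smul] at h6
    conv_rhs => rw [h6]
    rfl

private lemma chartMap_injective : Function.Injective (chartMap g) := by
  intro x y hxy
  rw [chartMap_eq_mk, mk_eq_chartMap_iff] at hxy
  obtain ⟨h1, h2⟩ := hxy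
  rw [lfun_cvec, hfun_cvec, one_smul] at h2
  exact h2

/-- The canonical projection onto projective space. -/
private def piRP : {v : RV n // v ≠ 0} → RP n := fun v => Projectivization.mk ℝ v.1 v.2

private lemma piRP_quotientMap : IsQuotientMap (piRP (n := n)) :=
  isQuotientMap_quot_mk

private lemma lfun_continuous : Continuous (lfun g) := by
  show Continuous fun v => (Gi g).mulVec v (Fin.last n)
  simp only [Matrix.mulVec, dotProduct]
  exact continuous_finset_sum _ fun j _ => continuous_const.mul (continuous_apply j)

private lemma hfun_continuous : Continuous (hfun g) := by
  refine continuous_pi fun j => ?_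
  show Continuous fun v => (Gi g).mulVec v (Fin.castSucc j)
  simp only [Matrix.mulVec, dotProduct]
  exact continuous_finset_sum _ fun i _ => continuous_const.mul (continuous_apply i)

private lemma chartMap_continuous : Continuous (chartMap g) := by
  have hsnoc : Continuous fun x : Fin n → ℝ => (Fin.snoc x (1:ℝ) : RV n) := by
    refine continuous_pi fun i => ?_
    refine Fin.lastCases ?_ ?_ i
    · simp only [Fin.snoc_last]; exact continuous_const
    · intro j; simp only [Fin.snoc_castSucc]; exact continuous_apply j
  have hcvec : Continuous (cvec g) := by
    refine continuous_pi fun i => ?_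
    show Continuous fun x => (Gm g).mulVec (Fin.snoc x 1) i
    simp only [Matrix.mulVec, dotProduct]
    exact continuous_finset_sum _ fun j _ =>
      continuous_const.mul ((continuous_apply j).comp hsnoc)
  have : chartMap g = piRP ∘ fun x => (⟨cvec g x, cvec_ne_zero g x⟩ : {v : RV n // v ≠ 0}) :=
    rfl
  rw [this]
  exact (piRP_quotientMap).continuous.comp (hcvec.subtype_mk _)

private lemma piRP_preimage_image (S : Set (Fin n → ℝ)) :
    piRP ⁻¹' (chartMap g '' S) =
      {v : {v : RV n // v ≠ 0} | lfun g v.1 ≠ 0 ∧ (lfun g v.1)⁻¹ • hfun g v.1 ∈ S} := by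
  ext ⟨v, hv⟩
  simp only [Set.mem_preimage, Set.mem_image, Set.mem_setOf_eq]
  constructor
  · rintro ⟨x, hxS, hx⟩
    have h := (mk_eq_chartMap_iff g hv x).1 hx.symm
    refine ⟨h.1, ?_⟩
    rw [h.2, inv_smul_smul₀ h.1]
    exact hxS
  · rintro ⟨hl, hS⟩
    refine ⟨(lfun g v)⁻¹ • hfun g v, hS, ?_⟩
    exact ((mk_eq_chartMap_iff g hv _).2 ⟨hl, (smul_inv_smul₀ hl (hfun g v)).symm⟩).symm

private lemma isOpen_chart_image {S : Set (Fin n → ℝ)} (hS : IsOpen S) :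
    IsOpen (chartMap g '' S) := by
  rw [← (piRP_quotientMap (n := n)).isOpen_preimage, piRP_preimage_image]
  have hO : IsOpen {v : {v : RV n // v ≠ 0} | lfun g v.1 ≠ 0} :=
    isOpen_compl_singleton.preimage ((lfun_continuous g).comp continuous_subtype_val)
  have hΦ : ContinuousOn (fun v : {v : RV n // v ≠ 0} => (lfun g v.1)⁻¹ • hfun g v.1)
      {v | lfun g v.1 ≠ 0} := by
    refine ContinuousOn.fun_smul ?_ ((hfun_continuous g).comp continuous_subtype_val).continuousOn
    exact (((lfun_continuous g).comp continuous_subtype_val).continuousOn).inv₀ fun v hv => hv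
  have := hΦ.isOpen_inter_preimage hO hS
  convert this using 1
  rfl

private lemma isClosed_chart_image {K : Set (Fin n → ℝ)} (hK : IsCompact K) :
    IsClosed (chartMap g '' K) := by
  obtain ⟨r, hr⟩ := hK.isBounded.subset_closedBall 0
  set R : ℝ := max r 0 with hR
  have hR0 : 0 ≤ R := le_max_right _ _
  have hRb : ∀ z ∈ K, ‖z‖ ≤ R := fun z hz => by
    have := hr hz
    rw [Metric.mem_closedBall, dist_zero_right] at this
    exact this.trans (le_max_left _ _)
  rw [← isOpen_compl_iff, ← (piRP_quotientMap (n := n)).isOpen_preimage,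
    Set.preimage_compl, piRP_preimage_image]
  have heq : ({v : {v : RV n // v ≠ 0} | lfun g v.1 ≠ 0 ∧ (lfun g v.1)⁻¹ • hfun g v.1 ∈ K})ᶜ =
      {v : {v : RV n // v ≠ 0} | R * |lfun g v.1| < ‖hfun g v.1‖} ∪
      {v : {v : RV n // v ≠ 0} | lfun g v.1 ≠ 0 ∧ (lfun g v.1)⁻¹ • hfun g v.1 ∈ Kᶜ} := by
    ext ⟨v, hv⟩
    simp only [Set.mem_compl_iff, Set.mem_setOf_eq, Set.mem_union, not_and]
    constructor
    · intro h
      by_cases hl : lfun g v = 0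
      · left
        rw [hl, abs_zero, mul_zero]
        exact norm_pos_iff.2 (hl_ne_zero g hv hl)
      · right
        exact ⟨hl, h hl⟩
    · rintro (h | h)
      · intro hl hKmem
        have h1 : ‖(lfun g v)⁻¹ • hfun g v‖ ≤ R := hRb _ hKmem
        have h2 : 0 < |lfun g v| := abs_pos.2 hl
        rw [norm_smul, norm_inv, Real.norm_eq_abs] at h1
        have h3 : ‖hfun g v‖ ≤ R * |lfun g v| := by
          rw [inv_mul_le_iff₀ h2] at h1
          linarith [h1]
        linarith
      · exact fun _ => h.2
  rw [heq]
  apply IsOpen.union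
  · exact isOpen_lt (continuous_const.mul (((lfun_continuous g).comp
      continuous_subtype_val).abs)) ((hfun_continuous g).comp continuous_subtype_val).norm
  · have hO : IsOpen {v : {v : RV n // v ≠ 0} | lfun g v.1 ≠ 0} :=
      isOpen_compl_singleton.preimage ((lfun_continuous g).comp continuous_subtype_val)
    have hΦ : ContinuousOn (fun v : {v : RV n // v ≠ 0} => (lfun g v.1)⁻¹ • hfun g v.1)
        {v | lfun g v.1 ≠ 0} := by
      refine ContinuousOn.fun_smul ?_ ((hfun_continuous g).comp continuous_subtype_val).continuousOn
      exact (((lfun_continuous g).comp continuous_subtype_val).continuousOn).inv₀ fun v hv => hv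
    have := hΦ.isOpen_inter_preimage hO hK.isClosed.isOpen_compl
    convert this using 1
    rfl

private lemma cvec_line (x y : Fin n → ℝ) (s : ℝ) :
    cvec g (x + s • (y - x)) = (1 - s) • cvec g x + s • cvec g y := by
  have hsnoc : (Fin.snoc (x + s • (y - x)) 1 : RV n) =
      (1 - s) • (Fin.snoc x 1 : RV n) + s • (Fin.snoc y 1 : RV n) := by
    funext i
    refine Fin.lastCases ?_ ?_ i
    · simp only [Fin.snoc_last, Pi.add_apply, Pi.smul_apply, smul_eq_mul]
      ring
    · intro j'
      simp only [Fin.snoc_castSucc, Pi.add_apply, Pi.smul_apply, smul_eq_mul, Pi.sub_apply]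
      ring
  simp only [cvec]
  rw [hsnoc, Matrix.mulVec_add, Matrix.mulVec_smul, Matrix.mulVec_smul]

private lemma chart_preimage_convex (D : Set (RP n))
    (hpre : ∀ L, isLineR L → IsPreconnected (D ∩ L))
    (hrange : D ⊆ Set.range (chartMap g)) :
    Convex ℝ (chartMap g ⁻¹' D) := by
  intro x hx y hy a b ha hb hab
  by_cases hxy : x = y
  · subst hxy
    have h1 : a • x + b • x = x := by rw [← add_smul, hab, one_smul]
    show chartMap g (a • x + b • x) ∈ D
    rw [h1]; exact hx
  obtain ⟨j, hj⟩ := Function.ne_iff.1 hxy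
  have hyx : y j - x j ≠ 0 := sub_ne_zero.2 (Ne.symm hj)
  set T : Set ℝ := {s : ℝ | chartMap g (x + s • (y - x)) ∈ D} with hT
  have h0T : (0:ℝ) ∈ T := by
    show chartMap g (x + (0:ℝ) • (y - x)) ∈ D
    rw [show x + (0:ℝ) • (y - x) = x by simp]
    exact hx
  have h1T : (1:ℝ) ∈ T := by
    show chartMap g (x + (1:ℝ) • (y - x)) ∈ D
    rw [show x + (1:ℝ) • (y - x) = y by simp]
    exact hy
  have hclaim : ∀ u, 0 < u → u < 1 → u ∈ T := by
    intro u hu0 hu1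
    by_contra huT
    set W : Submodule ℝ (RV n) := Submodule.span ℝ {cvec g x, cvec g y} with hW
    have hindep : LinearIndependent ℝ ![cvec g x, cvec g y] := by
      rw [LinearIndependent.pair_iff]
      intro c d hcd
      have h1 := congrArg ((Gi g).mulVec) hcd
      rw [Matrix.mulVec_add, Matrix.mulVec_smul, Matrix.mulVec_smul, Matrix.mulVec_zero] at h1
      simp only [cvec] at h1
      rw [Gi_Gm_mulVec, Gi_Gm_mulVec] at h1
      have hlast := congrFun h1 (Fin.last n)
      have hjj := congrFun h1 (Fin.castSucc j)
      simp only [Pi.add_apply, Pi.smul_apply, Fin.snoc_last, smul_eq_mul, mul_one,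
        Pi.zero_apply] at hlast
      simp only [Pi.add_apply, Pi.smul_apply, Fin.snoc_castSucc, smul_eq_mul,
        Pi.zero_apply] at hjj
      have hd : d * (y j - x j) = 0 := by linear_combination hjj - (x j) * hlast
      have hd0 : d = 0 := by
        rcases mul_eq_zero.1 hd with h | h
        · exact h
        · exact absurd h hyx
      constructor
      · rw [hd0] at hlast; linarith
      · exact hd0
    have hrank : Module.finrank ℝ W = 2 := by
      have hr : Set.range ![cvec g x, cvec g y] = {cvec g x, cvec g y} := by
        ext w
        constructor
        · rintro ⟨i, rfl⟩
          fin_cases i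
          · left; rfl
          · right; rfl
        · rintro (rfl | rfl)
          · exact ⟨0, rfl⟩
          · exact ⟨1, rfl⟩
      rw [hW, ← hr, finrank_span_eq_card hindep]
      simp
    have hline : isLineR {q : RP n | q.rep ∈ W} := ⟨W, hrank, rfl⟩
    have hpreL := hpre _ hline
    set aF : RV n → ℝ := fun v =>
      ((Gi g).mulVec v (Fin.castSucc j) - x j * (Gi g).mulVec v (Fin.last n)) / (y j - x j)
      with haF
    set Qv : RV n → ℝ := fun v => lfun g v * (aF v - u * lfun g v) with hQ
    have hQsmul : ∀ (c : ℝ) (v : RV n), Qv (c • v) = c ^ 2 * Qv v := by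
      intro c v
      simp only [hQ, haF, lfun, Matrix.mulVec_smul, Pi.smul_apply, smul_eq_mul]
      ring
    have hQcont : Continuous Qv := by
      have hc1 : Continuous fun v : RV n => (Gi g).mulVec v (Fin.castSucc j) := by
        simp only [Matrix.mulVec, dotProduct]
        exact continuous_finset_sum _ fun i _ => continuous_const.mul (continuous_apply i)
      have hc2 := lfun_continuous g
      rw [hQ, haF]
      exact hc2.mul ((((hc1.sub (continuous_const.mul hc2)).div_const _)).sub
        (continuous_const.mul hc2))
    have hsq_pos : ∀ c : ℝ, c ≠ 0 → 0 < c ^ 2 := by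
      intro c hc
      rcases lt_or_gt_of_ne hc with h | h
      · nlinarith
      · nlinarith
    -- key computation
    have hkey : ∀ q ∈ D ∩ {q : RP n | q.rep ∈ W}, ∃ τ, τ ∈ T ∧
        Qv q.rep = (lfun g q.rep) ^ 2 * (τ - u) ∧ lfun g q.rep ≠ 0 ∧
        chartMap g (x + τ • (y - x)) = q := by
      intro q hq
      obtain ⟨z, hz⟩ := hrange hq.1
      obtain ⟨c, d, hcd⟩ := Submodule.mem_span_pair.1 hq.2
      have hmk : Projectivization.mk ℝ q.rep q.rep_nonzero = chartMap g z := by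
        rw [Projectivization.mk_rep]; exact hz.symm
      obtain ⟨hl, hh⟩ := (mk_eq_chartMap_iff g q.rep_nonzero z).1 hmk
      have hwv : (Gi g).mulVec q.rep =
          c • (Fin.snoc x 1 : RV n) + d • (Fin.snoc y 1 : RV n) := by
        conv_lhs => rw [← hcd]
        rw [Matrix.mulVec_add, Matrix.mulVec_smul, Matrix.mulVec_smul]
        simp only [cvec]
        rw [Gi_Gm_mulVec, Gi_Gm_mulVec]
      have hlv : lfun g q.rep = c + d := by
        show (Gi g).mulVec q.rep (Fin.last n) = c + d
        rw [hwv]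
        simp [Fin.snoc_last]
      have hcd0 : c + d ≠ 0 := by rw [← hlv]; exact hl
      set τ : ℝ := d / (c + d) with hτ
      have hz_eq : z = x + τ • (y - x) := by
        funext i
        have hhi := congrFun hh i
        have hcomp : hfun g q.rep i = c * x i + d * y i := by
          show (Gi g).mulVec q.rep (Fin.castSucc i) = _
          rw [hwv]
          simp [Fin.snoc_castSucc]
        rw [hcomp] at hhi
        rw [hlv] at hhi
        have hhi' : c * x i + d * y i = (c + d) * z i := hhi
        show z i = x i + τ * (y i - x i)
        rw [hτ]
        field_simp
        linear_combination (-1 : ℝ) * hhi'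
      have hτT : τ ∈ T := by
        show chartMap g (x + τ • (y - x)) ∈ D
        rw [← hz_eq, hz]
        exact hq.1
      refine ⟨τ, hτT, ?_, hl, by rw [← hz_eq]; exact hz⟩
      have haFv : aF q.rep = d := by
        rw [haF]
        show ((Gi g).mulVec q.rep (Fin.castSucc j) - x j *
          (Gi g).mulVec q.rep (Fin.last n)) / (y j - x j) = d
        rw [hwv]
        simp only [Pi.add_apply, Pi.smul_apply, Fin.snoc_castSucc, Fin.snoc_last,
          smul_eq_mul, mul_one]
        field_simp
        ring
      rw [hQ]
      simp only
      rw [haFv, hlv, hτ]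
      field_simp
    -- the open sets
    have hU1open : IsOpen {q : RP n | Qv q.rep < 0} := by
      rw [← (piRP_quotientMap (n := n)).isOpen_preimage]
      have heq : piRP ⁻¹' {q : RP n | Qv q.rep < 0} =
          {v : {v : RV n // v ≠ 0} | Qv v.1 < 0} := by
        ext ⟨v, hv⟩
        simp only [Set.mem_preimage, Set.mem_setOf_eq]
        obtain ⟨a, ha⟩ := Projectivization.exists_smul_eq_mk_rep ℝ v hv
        rw [Units.smul_def] at ha
        have hrep : Qv (piRP ⟨v, hv⟩).rep = (a : ℝ) ^ 2 * Qv v := by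
          rw [show (piRP ⟨v, hv⟩).rep = (a : ℝ) • v from ha.symm, hQsmul]
        rw [hrep]
        have ha2 : 0 < (a : ℝ) ^ 2 := hsq_pos _ a.ne_zero
        constructor
        · intro h; nlinarith
        · intro h; nlinarith
      rw [heq]
      exact isOpen_lt (hQcont.comp continuous_subtype_val) continuous_const
    have hU2open : IsOpen {q : RP n | 0 < Qv q.rep} := by
      rw [← (piRP_quotientMap (n := n)).isOpen_preimage]
      have heq : piRP ⁻¹' {q : RP n | 0 < Qv q.rep} =
          {v : {v : RV n // v ≠ 0} | 0 < Qv v.1} := by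
        ext ⟨v, hv⟩
        simp only [Set.mem_preimage, Set.mem_setOf_eq]
        obtain ⟨a, ha⟩ := Projectivization.exists_smul_eq_mk_rep ℝ v hv
        rw [Units.smul_def] at ha
        have hrep : Qv (piRP ⟨v, hv⟩).rep = (a : ℝ) ^ 2 * Qv v := by
          rw [show (piRP ⟨v, hv⟩).rep = (a : ℝ) • v from ha.symm, hQsmul]
        rw [hrep]
        have ha2 : 0 < (a : ℝ) ^ 2 := hsq_pos _ a.ne_zero
        constructor
        · intro h; nlinarith
        · intro h; nlinarith
      rw [heq]
      exact isOpen_lt continuous_const (hQcont.comp continuous_subtype_val)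
    -- membership in the line
    have hmemL : ∀ s' : ℝ, (chartMap g (x + s' • (y - x))).rep ∈ W := by
      intro s'
      rw [chartMap_eq_mk]
      obtain ⟨a, ha⟩ := Projectivization.exists_smul_eq_mk_rep ℝ
        (cvec g (x + s' • (y - x))) (cvec_ne_zero g _)
      rw [Units.smul_def] at ha
      rw [← ha]
      apply Submodule.smul_mem
      rw [cvec_line]
      exact Submodule.mem_span_pair.2 ⟨1 - s', s', rfl⟩
    -- sign at a point of T
    have hsign : ∀ s' ∈ T, ∃ τ, τ = s' ∧
        Qv (chartMap g (x + s' • (y - x))).rep =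
          (lfun g (chartMap g (x + s' • (y - x))).rep) ^ 2 * (τ - u) ∧
        lfun g (chartMap g (x + s' • (y - x))).rep ≠ 0 := by
      intro s' hs'
      obtain ⟨τ, hτT, hQeq, hl, hchart⟩ := hkey (chartMap g (x + s' • (y - x))) ⟨hs', hmemL s'⟩
      have hts : τ = s' := by
        have h1 := chartMap_injective g hchart
        have h2 := congrFun h1 j
        have h3 : x j + τ * (y j - x j) = x j + s' * (y j - x j) := h2
        have h4 : τ * (y j - x j) = s' * (y j - x j) := by linarith
        exact mul_right_cancel₀ hyx h4
      exact ⟨τ, hts, hQeq, hl⟩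
    have hQ0' : Qv (chartMap g (x + (0:ℝ) • (y - x))).rep < 0 := by
      obtain ⟨τ, hτ0, hQeq, hl⟩ := hsign 0 h0T
      rw [hQeq, hτ0]
      have := hsq_pos _ hl
      nlinarith
    have hQ1' : 0 < Qv (chartMap g (x + (1:ℝ) • (y - x))).rep := by
      obtain ⟨τ, hτ1, hQeq, hl⟩ := hsign 1 h1T
      rw [hQeq, hτ1]
      have := hsq_pos _ hl
      nlinarith
    -- cover
    have hcover : D ∩ {q : RP n | q.rep ∈ W} ⊆
        {q : RP n | Qv q.rep < 0} ∪ {q : RP n | 0 < Qv q.rep} := by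
      intro q hq
      obtain ⟨τ, hτT, hQeq, hl, _⟩ := hkey q hq
      have hτu : τ ≠ u := fun h => huT (h ▸ hτT)
      have hl2 := hsq_pos _ hl
      rcases hτu.lt_or_gt with h | h
      · left; show Qv q.rep < 0; rw [hQeq]; nlinarith
      · right; show 0 < Qv q.rep; rw [hQeq]; nlinarith
    obtain ⟨q, hqDL, hq1, hq2⟩ := hpreL _ _ hU1open hU2open hcover
      ⟨chartMap g (x + (0:ℝ) • (y - x)), ⟨h0T, hmemL 0⟩, hQ0'⟩
      ⟨chartMap g (x + (1:ℝ) • (y - x)), ⟨h1T, hmemL 1⟩, hQ1'⟩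
    have hq1' : Qv q.rep < 0 := hq1
    have hq2' : 0 < Qv q.rep := hq2
    linarith
  -- conclude
  show chartMap g (a • x + b • y) ∈ D
  have hcomb : a • x + b • y = x + b • (y - x) := by
    rw [show a = 1 - b by linarith]
    funext i
    simp only [Pi.add_apply, Pi.smul_apply, smul_eq_mul, Pi.sub_apply]
    ring
  rw [hcomb]
  rcases eq_or_lt_of_le hb with hb0 | hb0
  · rw [show b = (0:ℝ) from hb0.symm]
    exact h0T
  · rcases eq_or_lt_of_le (show b ≤ 1 by linarith) with hb1 | hb1
    · rw [hb1]
      exact h1T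
    · exact hclaim b hb0 hb1

end ChartPart


/-- An open properly convex set `D ⊆ ℝℙⁿ` admits an exhaustion by open
sets `D_k` with compact closures `closure (D_k) ⊆ D_{k+1}`, which in an affine chart in
which `D` is bounded are bounded strictly convex open sets with real-analytic boundary. -/
theorem exhaustion_by_strictly_convex_analytic
    (n : ℕ) (D : Set (RP n)) (hD : IsOpen D) (hpc : properlyConvexR D)
    (g : Matrix.GeneralLinearGroup (Fin (n + 1)) ℝ)
    (hrange : D ⊆ Set.range (chartMap g))
    (hbdd : Bornology.IsBounded (chartMap g ⁻¹' D)) :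
    ∃ Dk : ℕ → Set (RP n),
      (∀ k, IsOpen (Dk k)) ∧ (∀ k, Dk k ⊆ D) ∧
      (∀ k, IsCompact (closure (Dk k)) ∧ closure (Dk k) ⊆ Dk (k + 1)) ∧
      (⋃ k, Dk k) = D ∧
      ∀ k, Bornology.IsBounded (chartMap g ⁻¹' Dk k) ∧
        IsOpen (chartMap g ⁻¹' Dk k) ∧ Convex ℝ (chartMap g ⁻¹' Dk k) ∧
        strictlyConvexSet (chartMap g ⁻¹' Dk k) ∧ analyticBoundary (chartMap g ⁻¹' Dk k) := by
  classical
  have hAopen : IsOpen (chartMap g ⁻¹' D) := hD.preimage (chartMap_continuous g)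
  have hAconv : Convex ℝ (chartMap g ⁻¹' D) := chart_preimage_convex g D hpc.1.2 hrange
  have hDne : D.Nonempty := by
    rcases Set.eq_empty_or_nonempty D with h | h
    · exfalso
      have hξ0 : (LinearMap.proj (Fin.last n) : Module.Dual ℝ (RV n)) ≠ 0 := by
        intro h0
        have h1 := LinearMap.congr_fun h0 (Pi.single (Fin.last n) 1)
        simp [LinearMap.proj_apply] at h1
      exact hpc.2.1 {x : RP n | (LinearMap.proj (Fin.last n) : Module.Dual ℝ (RV n)) x.rep = 0}
        ⟨_, hξ0, rfl⟩ (by rw [h]; exact Set.empty_subset _)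
    · exact h
  have hAne : (chartMap g ⁻¹' D).Nonempty := by
    obtain ⟨q, hq⟩ := hDne
    obtain ⟨z, hz⟩ := hrange hq
    exact ⟨z, by rw [Set.mem_preimage, hz]; exact hq⟩
  obtain ⟨S, hSp, hSu⟩ := exists_exhaustion (chartMap g ⁻¹' D) hAopen hAconv hbdd hAne
  have hSsubA : ∀ k, S k ⊆ chartMap g ⁻¹' D := fun k => (hSp k).2.2.2.2.2.1
  have hScl : ∀ k, closure (S k) ⊆ S (k + 1) := fun k => (hSp k).2.2.2.2.2.2
  have hcpt : ∀ k, IsCompact (closure (S k)) := fun k =>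
    Metric.isCompact_of_isClosed_isBounded isClosed_closure ((hSp k).2.2.1).closure
  have hclosed : ∀ k, IsClosed (chartMap g '' closure (S k)) := fun k =>
    isClosed_chart_image g (hcpt k)
  have hclsub : ∀ k, closure (chartMap g '' S k) ⊆ chartMap g '' closure (S k) := fun k =>
    closure_minimal (Set.image_mono subset_closure) (hclosed k)
  refine ⟨fun k => chartMap g '' S k, ?_, ?_, ?_, ?_, ?_⟩
  · intro k
    exact isOpen_chart_image g (hSp k).1
  · rintro k q ⟨z, hzS, rfl⟩
    exact hSsubA k hzS
  · intro k
    constructor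
    · exact ((hcpt k).image (chartMap_continuous g)).of_isClosed_subset
        isClosed_closure (hclsub k)
    · exact (hclsub k).trans (Set.image_mono (hScl k))
  · have h1 : (⋃ k, chartMap g '' S k) = chartMap g '' (chartMap g ⁻¹' D) := by
      rw [← Set.image_iUnion, hSu]
    rw [h1]
    apply Set.eq_of_subset_of_subset
    · rintro q ⟨z, hz, rfl⟩
      exact hz
    · intro q hq
      obtain ⟨z, hz⟩ := hrange hq
      exact ⟨z, by rw [Set.mem_preimage, hz]; exact hq, hz⟩
  · intro k
    have hpre : chartMap g ⁻¹' (chartMap g '' S k) = S k :=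
      Function.Injective.preimage_image (chartMap_injective g) _
    rw [hpre]
    exact ⟨(hSp k).2.2.1, (hSp k).1, (hSp k).2.1, (hSp k).2.2.2.1, (hSp k).2.2.2.2.1⟩
end
end

section
/- Let D ⊆ ℝℙⁿ be an open convex set, let D̃ be one of the two connected components of π⁻¹(D) ⊆ ℝ^{n+1} (an open convex cone), and let F ⊆ (ℝℙⁿ)* be a compact set whose dual complement is F* = D. For each f ∈ F choose a lift f̃ ∈ (ℝ^{n+1})* \ {0} representing f with f̃ > 0 on D̃, and extend f̃ complex-linearly to (ℂ^{n+1})*. Then the elliptic tube satisfies D^e = {z ∈ ℂℙⁿ : for all f, g ∈ F, Re(f̃(z̃)·conj(g̃(z̃))) > 0 for one (equivalently, every) representative z̃ ∈ ℂ^{n+1}\{0} of z}. -/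
open scoped ComplexConjugate

noncomputable section

abbrev CV (n : ℕ) : Type := Fin (n + 1) → ℂ
abbrev CP (n : ℕ) : Type := Projectivization ℂ (CV n)

/-- Complexification of a real vector. -/
def cplx {n : ℕ} (v : RV n) : CV n := fun i => (v i : ℂ)

/-- The closed (possibly degenerate) projective segment spanned by two lifts. -/
def realSeg {n : ℕ} (v₀ v₁ : RV n) : Set (RP n) :=
  {x | ∃ c₀ c₁ : ℝ, 0 ≤ c₀ * c₁ ∧ ∃ h : c₀ • v₀ + c₁ • v₁ ≠ 0,
    x = Projectivization.mk ℝ (c₀ • v₀ + c₁ • v₁) h}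

/-- The elliptic tube over the closed segment determined by the lifts `v₀ v₁`. -/
def segTube {n : ℕ} (v₀ v₁ : RV n) : Set (CP n) :=
  {z | ∃ c₀ c₁ : ℂ, 0 ≤ (c₀ * conj c₁).re ∧ ∃ h : c₀ • cplx v₀ + c₁ • cplx v₁ ≠ 0,
    z = Projectivization.mk ℂ (c₀ • cplx v₀ + c₁ • cplx v₁) h}

/-- The elliptic tube over a subset `D` of real projective space: the union of the tubes
over all closed segments contained in `D`. -/
def eTube {n : ℕ} (D : Set (RP n)) : Set (CP n) :=
  ⋃ (v₀ : RV n) (v₁ : RV n) (_ : v₀ ≠ 0) (_ : v₁ ≠ 0) (_ : realSeg v₀ v₁ ⊆ D),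
    segTube v₀ v₁

/-- The dual real projective space `(ℝℙⁿ)* = ℙ((ℝ^{n+1})*)`. -/
abbrev RPd (n : ℕ) : Type := Projectivization ℝ (Module.Dual ℝ (RV n))

/-- The standard topology on the dual of `ℝ^{n+1}` (induced by coordinates). -/
instance dualTopR (n : ℕ) : TopologicalSpace (Module.Dual ℝ (RV n)) :=
  TopologicalSpace.induced (fun f => (fun i => f (Pi.single i 1) : RV n)) inferInstance

/-- The complex-linear extension of a real linear functional on `ℝ^{n+1}`. -/
def extLD {n : ℕ} (f : Module.Dual ℝ (RV n)) : Module.Dual ℂ (CV n) :=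
  ∑ i, (f (Pi.single i 1) : ℂ) • (LinearMap.proj i : CV n →ₗ[ℂ] ℂ)

/-- The dual complement of a set `F ⊆ (ℝℙⁿ)*`, identified with a subset of `ℝℙⁿ`:
the set of points whose annihilator misses `F`. -/
def dualCompF {n : ℕ} (F : Set (RPd n)) : Set (RP n) :=
  {x | ∀ ξ ∈ F, ξ.rep x.rep ≠ 0}


open scoped Real
lemma eval_sum {n : ℕ} (f : Module.Dual ℝ (RV n)) (v : RV n) :
    f v = ∑ i, v i * f (Pi.single i 1) := by
  have hv : v = ∑ i, v i • (Pi.single i 1 : RV n) := by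
    funext j
    simp [Pi.single_apply, Finset.sum_apply]
  conv_lhs => rw [hv]
  simp [map_sum, map_smul, smul_eq_mul]

lemma extLD_apply {n : ℕ} (f : Module.Dual ℝ (RV n)) (w : CV n) :
    extLD f w = ∑ i, (f (Pi.single i 1) : ℂ) * w i := by
  simp [extLD, LinearMap.sum_apply, LinearMap.smul_apply, smul_eq_mul]

lemma extLD_cplx {n : ℕ} (f : Module.Dual ℝ (RV n)) (v : RV n) :
    extLD f (cplx v) = (f v : ℂ) := by
  rw [extLD_apply, eval_sum f v]
  push_cast
  simp [cplx, mul_comm]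

lemma cplx_smul {n : ℕ} (t : ℝ) (v : RV n) : cplx (t • v) = (t : ℂ) • cplx v := by
  funext i; simp [cplx]

lemma cplx_add {n : ℕ} (v w : RV n) : cplx (v + w) = cplx v + cplx w := by
  funext i; simp [cplx]

lemma cplx_ne_zero {n : ℕ} {v : RV n} (h : v ≠ 0) : cplx v ≠ 0 := by
  intro hc; apply h; funext i
  have := congrFun hc i
  simpa [cplx, Complex.ext_iff] using this

lemma key_re (α β γ δ : ℝ) (c₀ c₁ μ : ℂ) :
    ((μ * (c₀ * α + c₁ * β)) * conj (μ * (c₀ * γ + c₁ * δ))).re =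
      Complex.normSq μ * (α * γ * Complex.normSq c₀ + β * δ * Complex.normSq c₁
        + (α * δ + β * γ) * (c₀ * conj c₁).re) := by
  simp [Complex.mul_re, Complex.mul_im, Complex.normSq_apply, Complex.conj_re, Complex.conj_im]
  ring

lemma re_coe_mul_exp (r x : ℝ) : ((r : ℂ) * Complex.exp (x * Complex.I)).re = r * Real.cos x := by
  simp [Complex.exp_ofReal_mul_I_re, Complex.mul_re, Complex.exp_ofReal_mul_I_im]

lemma im_coe_mul_exp (r x : ℝ) : ((r : ℂ) * Complex.exp (x * Complex.I)).im = r * Real.sin x := by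
  simp [Complex.mul_im, Complex.exp_ofReal_mul_I_re, Complex.exp_ofReal_mul_I_im]

lemma div_re_eq (a b : ℂ) : (a / b).re = (a * conj b).re / Complex.normSq b := by
  simp [Complex.div_re, Complex.mul_re, Complex.conj_re, Complex.conj_im]
  ring

lemma div_re_pos {a b : ℂ} (hb : b ≠ 0) (h : 0 < (a * conj b).re) : 0 < (a / b).re := by
  rw [div_re_eq]
  exact div_pos h (Complex.normSq_pos.2 hb)

lemma div_mul_conj_div (a b c : ℂ) : (a / c) * conj (b / c) = (a * conj b) / (Complex.normSq c : ℂ) := by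
  rw [map_div₀, div_mul_div_comm, Complex.mul_conj]

lemma polar_mul_conj (A B : ℂ) : A * conj B =
    ((‖A‖ * ‖B‖ : ℝ) : ℂ) * Complex.exp ((A.arg - B.arg : ℝ) * Complex.I) := by
  conv_lhs => rw [← Complex.norm_mul_exp_arg_mul_I A, ← Complex.norm_mul_exp_arg_mul_I B]
  rw [map_mul, Complex.conj_ofReal, ← Complex.exp_conj]
  simp only [map_mul, Complex.conj_I, Complex.conj_ofReal]
  rw [mul_mul_mul_comm, ← Complex.exp_add]
  congr 1
  · push_cast; ring
  · congr 1; push_cast; ring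

lemma exp_mul_polar (φ : ℝ) (r : ℝ) (θ : ℝ) :
    Complex.exp (φ * Complex.I) * ((r : ℂ) * Complex.exp (θ * Complex.I))
      = (r : ℂ) * Complex.exp ((φ + θ : ℝ) * Complex.I) := by
  rw [mul_left_comm, ← Complex.exp_add]
  congr 2
  push_cast; ring

lemma quadrant_rotation {K : Set ℂ} (hKc : IsCompact K) (hKne : K.Nonempty)
    (hK : ∀ a ∈ K, ∀ b ∈ K, 0 < (a * conj b).re) :
    ∃ u : ℂ, ∀ a ∈ K, 0 < (u * a).re ∧ 0 < (u * a).im := by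
  obtain ⟨a₀, ha₀⟩ := hKne
  have hne : ∀ a ∈ K, a ≠ 0 := by
    intro a ha h; have := hK a ha a ha; simp [h] at this
  have ha₀ne : a₀ ≠ 0 := hne a₀ ha₀
  have hre : ∀ a ∈ K, 0 < (a / a₀).re := fun a ha => div_re_pos ha₀ne (hK a ha a₀ ha₀)
  set θ : ℂ → ℝ := fun a => (a / a₀).arg with hθ
  have hθmem : ∀ a ∈ K, -(π/2) < θ a ∧ θ a < π/2 := by
    intro a ha
    have h := (Complex.abs_arg_lt_pi_div_two_iff (z := a / a₀)).2 (Or.inl (hre a ha))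
    rw [abs_lt] at h
    exact h
  have hθcont : ContinuousOn θ K := by
    intro a ha
    have hdc : ContinuousAt (fun x : ℂ => x / a₀) a := (continuous_id.div_const a₀).continuousAt
    exact (ContinuousAt.comp (f := fun x : ℂ => x / a₀) (x := a)
      (Complex.continuousAt_arg (Complex.mem_slitPlane_iff.2 (Or.inl (hre a ha)))) hdc).continuousWithinAt
  obtain ⟨aM, haM, hM⟩ := hKc.exists_isMaxOn ⟨a₀, ha₀⟩ hθcont
  obtain ⟨am, ham, hm⟩ := hKc.exists_isMinOn ⟨a₀, ha₀⟩ hθcont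
  have hdiff : θ aM - θ am < π / 2 := by
    by_contra hcon
    push_neg at hcon
    have h1 : 0 < ((aM / a₀) * conj (am / a₀)).re := by
      rw [div_mul_conj_div]
      rw [show ((Complex.normSq a₀ : ℝ) : ℂ) = (((Complex.normSq a₀ : ℝ)) : ℂ) from rfl]
      apply div_re_pos (by simpa using ha₀ne)
      rw [Complex.conj_ofReal]
      have h2 : (0:ℝ) < Complex.normSq a₀ := Complex.normSq_pos.2 ha₀ne
      rw [Complex.mul_re]
      simp only [Complex.ofReal_re, Complex.ofReal_im, mul_zero, sub_zero]
      exact mul_pos (hK aM haM am ham) h2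
    rw [polar_mul_conj, re_coe_mul_exp] at h1
    have hcos : Real.cos ((aM/a₀).arg - (am/a₀).arg) ≤ 0 := by
      apply Real.cos_nonpos_of_pi_div_two_le_of_le hcon
      obtain ⟨h3, h4⟩ := hθmem aM haM
      obtain ⟨h5, h6⟩ := hθmem am ham
      have hpi := Real.pi_pos
      show (aM/a₀).arg - (am/a₀).arg ≤ π + π/2
      linarith
    nlinarith [norm_nonneg (aM/a₀), norm_nonneg (am/a₀),
      mul_nonneg (norm_nonneg (aM/a₀)) (norm_nonneg (am/a₀))]
  set φ : ℝ := π/4 - (θ aM + θ am)/2 with hφ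
  refine ⟨Complex.exp (φ * Complex.I) / a₀, fun a ha => ?_⟩
  have hua : Complex.exp (φ * Complex.I) / a₀ * a
      = ((‖a / a₀‖ : ℝ) : ℂ) * Complex.exp ((φ + θ a : ℝ) * Complex.I) := by
    have h7 : Complex.exp (↑φ * Complex.I) / a₀ * a = Complex.exp (↑φ * Complex.I) * (a / a₀) := by
      ring
    rw [h7]
    conv_lhs => rw [← Complex.norm_mul_exp_arg_mul_I (a / a₀)]
    exact exp_mul_polar φ _ _
  have habs : 0 < ‖a / a₀‖ :=
    norm_pos_iff.mpr (div_ne_zero (hne a ha) ha₀ne)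
  obtain ⟨h3, h4⟩ := hθmem aM haM
  obtain ⟨h5, h6⟩ := hθmem am ham
  have hMa : θ a ≤ θ aM := hM ha
  have hma : θ am ≤ θ a := hm ha
  have hpi := Real.pi_pos
  have hr1 : 0 < φ + θ a := by rw [hφ]; linarith
  have hr2 : φ + θ a < π / 2 := by rw [hφ]; linarith
  rw [hua, re_coe_mul_exp, im_coe_mul_exp]
  have hr0 : -(π/2) < φ + θ a := by linarith
  have hr3 : φ + θ a < π := lt_trans hr2 (by linarith)
  exact ⟨mul_pos habs (Real.cos_pos_of_mem_Ioo ⟨hr0, hr2⟩),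
    mul_pos habs (Real.sin_pos_of_pos_of_lt_pi hr1 hr3)⟩

def coneD {n : ℕ} (D : Set (RP n)) : Set (RV n) :=
  {v : RV n | ∃ h : v ≠ 0, Projectivization.mk ℝ v h ∈ D}

lemma mk_smul_eq {n : ℕ} (v : RV n) (h : v ≠ 0) {t : ℝ} (ht : t ≠ 0) :
    Projectivization.mk ℝ (t • v) (smul_ne_zero ht h) = Projectivization.mk ℝ v h :=
  (Projectivization.mk_eq_mk_iff ℝ _ _ _ h).2 ⟨Units.mk0 t ht, rfl⟩

lemma coneD_smul {n : ℕ} {D : Set (RP n)} {v : RV n} (hv : v ∈ coneD D) {t : ℝ} (ht : t ≠ 0) :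
    t • v ∈ coneD D := by
  obtain ⟨h, hm⟩ := hv
  exact ⟨smul_ne_zero ht h, by rwa [mk_smul_eq v h ht]⟩

lemma isOpen_proj_iff {n : ℕ} (S : Set (RP n)) :
    IsOpen S ↔ IsOpen {p : {v : RV n // v ≠ 0} | Projectivization.mk ℝ p.1 p.2 ∈ S} :=
  isQuotientMap_quotient_mk'.isOpen_preimage.symm

lemma continuous_projmk {n : ℕ} :
    Continuous (fun p : {v : RV n // v ≠ 0} => Projectivization.mk ℝ p.1 p.2) :=
  continuous_quotient_mk'

lemma coneD_isOpen {n : ℕ} {D : Set (RP n)} (hD : IsOpen D) : IsOpen (coneD D) := by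
  have h1 : IsOpen {p : {v : RV n // v ≠ 0} | Projectivization.mk ℝ p.1 p.2 ∈ D} :=
    (isOpen_proj_iff D).1 hD
  have h2 : IsOpen {v : RV n | v ≠ 0} := isOpen_compl_singleton
  have : coneD D = Subtype.val '' {p : {v : RV n // v ≠ 0} | Projectivization.mk ℝ p.1 p.2 ∈ D} := by
    ext v
    constructor
    · rintro ⟨h, hm⟩; exact ⟨⟨v, h⟩, hm, rfl⟩
    · rintro ⟨⟨u, hu⟩, hm, rfl⟩; exact ⟨hu, hm⟩
  rw [this]
  exact h2.isOpenMap_subtype_val _ h1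

-- ray into component

lemma ray_mem_component {n : ℕ} {D : Set (RP n)} {v : RV n} (hv : v ∈ coneD D)
    {t : ℝ} (ht : 0 < t) : t • v ∈ connectedComponentIn (coneD D) v := by
  have hray : IsPreconnected ((fun s : ℝ => s • v) '' Set.Ioi 0) :=
    (isPreconnected_Ioi).image _ (continuous_id.smul continuous_const).continuousOn
  have hsub : (fun s : ℝ => s • v) '' Set.Ioi 0 ⊆ coneD D := by
    rintro _ ⟨s, hs, rfl⟩
    exact coneD_smul hv (ne_of_gt hs)
  have h1 : v ∈ (fun s : ℝ => s • v) '' Set.Ioi 0 := ⟨1, Set.mem_Ioi.2 one_pos, one_smul ℝ v⟩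
  exact hray.subset_connectedComponentIn h1 hsub ⟨t, Set.mem_Ioi.2 ht, rfl⟩

lemma neg_component {n : ℕ} {D : Set (RP n)} {v w : RV n}
    (h : w ∈ connectedComponentIn (coneD D) v) :
    -w ∈ connectedComponentIn (coneD D) (-v) := by
  have hv : v ∈ coneD D := connectedComponentIn_nonempty_iff.1 ⟨w, h⟩
  have e : (RV n) ≃ₜ (RV n) := Homeomorph.neg (RV n)
  have himg : (Homeomorph.neg (RV n)) '' coneD D = coneD D := by
    ext u
    constructor
    · rintro ⟨x, hx, rfl⟩
      simpa [Homeomorph.neg] using (coneD_smul hx (t := -1) (by norm_num))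
    · intro hu
      refine ⟨-u, ?_, by simp⟩
      simpa using (coneD_smul hu (t := -1) (by norm_num))
  have := (Homeomorph.neg (RV n)).image_connectedComponentIn (s := coneD D) hv
  rw [himg] at this
  have hmem : -w ∈ (Homeomorph.neg (RV n)) '' connectedComponentIn (coneD D) v :=
    ⟨w, h, by simp [Homeomorph.neg]⟩
  rw [this] at hmem
  simpa [Homeomorph.neg] using hmem

theorem two_components {n : ℕ} {D : Set (RP n)} (hDo : IsOpen D) (hDc : convexR D)
    {v₀ w : RV n} (hv₀ : v₀ ∈ coneD D) (hw : w ∈ coneD D) :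
    w ∈ connectedComponentIn (coneD D) v₀ ∨ -w ∈ connectedComponentIn (coneD D) v₀ := by
  obtain ⟨hwne, hwD⟩ := hw
  obtain ⟨hv₀ne, hv₀D⟩ := hv₀
  by_cases hdep : ∃ t : ℝ, w = t • v₀
  · obtain ⟨t, rfl⟩ := hdep
    have htne : t ≠ 0 := by rintro rfl; simp at hwne
    rcases lt_or_gt_of_ne htne with htlt | htgt
    · right
      rw [← neg_smul]
      exact ray_mem_component ⟨hv₀ne, hv₀D⟩ (by linarith)
    · left; exact ray_mem_component ⟨hv₀ne, hv₀D⟩ htgt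
  -- independent case
  have hind : LinearIndependent ℝ ![w, v₀] := by
    rw [LinearIndependent.pair_iff]
    intro s t hst
    by_cases hs : s = 0
    · subst hs
      simp only [zero_smul, zero_add] at hst
      exact ⟨rfl, (smul_eq_zero.1 hst).resolve_right hv₀ne⟩
    · exfalso
      have h2 : s • w = (-t) • v₀ := by rw [neg_smul]; rwa [add_eq_zero_iff_eq_neg] at hst
      have h3 : (-t / s) • v₀ = w := by
        calc (-t/s) • v₀ = s⁻¹ • ((-t) • v₀) := by rw [smul_smul]; congr 1; field_simp
        _ = s⁻¹ • (s • w) := by rw [h2]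
        _ = w := by rw [smul_smul, inv_mul_cancel₀ hs, one_smul]
      exact hdep ⟨-t / s, h3.symm⟩
  have hne_wv : w ≠ v₀ := by
    rintro rfl
    exact hdep ⟨1, (one_smul ℝ w).symm⟩
  -- the planar picture
  set Θ : ℝ × ℝ → RV n := fun p => p.1 • w + p.2 • v₀ with hΘ
  have hΘcont : Continuous Θ :=
    ((continuous_fst.smul continuous_const).add (continuous_snd.smul continuous_const))
  have hΘne : ∀ p : ℝ × ℝ, p ≠ 0 → Θ p ≠ 0 := by
    intro p hp h0
    obtain ⟨h1, h2⟩ := LinearIndependent.pair_iff.1 hind p.1 p.2 h0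
    exact hp (Prod.ext h1 h2)
  have hΘsmul : ∀ (t : ℝ) (p : ℝ × ℝ), Θ (t • p) = t • Θ p := by
    intro t p
    simp only [hΘ, Prod.smul_fst, Prod.smul_snd, smul_eq_mul, smul_add, smul_smul]
  set Ω : Set (ℝ × ℝ) := Θ ⁻¹' (coneD D) with hΩ
  have hΩo : IsOpen Ω := (coneD_isOpen hDo).preimage hΘcont
  have hΩsmul : ∀ {t : ℝ}, t ≠ 0 → ∀ {p}, p ∈ Ω → t • p ∈ Ω := by
    intro t ht p hp
    show Θ (t • p) ∈ coneD D
    rw [hΘsmul]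
    exact coneD_smul hp ht
  have h10 : ((1:ℝ), (0:ℝ)) ∈ Ω := by
    show Θ (1, 0) ∈ coneD D
    simp only [hΘ, one_smul, zero_smul, add_zero]
    exact ⟨hwne, hwD⟩
  have h01 : ((0:ℝ), (1:ℝ)) ∈ Ω := by
    show Θ (0, 1) ∈ coneD D
    simp only [hΘ, one_smul, zero_smul, zero_add]
    exact ⟨hv₀ne, hv₀D⟩
  set C : Set (ℝ × ℝ) := connectedComponentIn Ω (1, 0) with hC
  -- positive axis points belong to C
  have haxis : ∀ {t : ℝ}, 0 < t → (t, (0:ℝ)) ∈ C := by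
    intro t ht
    have hray : IsPreconnected ((fun s : ℝ => ((s, (0:ℝ)) : ℝ × ℝ)) '' Set.Ioi 0) :=
      (isPreconnected_Ioi).image _ (continuous_id.prodMk continuous_const).continuousOn
    have hsub : (fun s : ℝ => ((s, (0:ℝ)) : ℝ × ℝ)) '' Set.Ioi 0 ⊆ Ω := by
      rintro _ ⟨s, hs, rfl⟩
      show ((s, (0:ℝ)) : ℝ × ℝ) ∈ Ω
      have h2 : ((s, (0:ℝ)) : ℝ × ℝ) = s • ((1:ℝ), (0:ℝ)) := by simp
      rw [h2]
      exact hΩsmul (ne_of_gt hs) h10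
    exact hray.subset_connectedComponentIn ⟨1, Set.mem_Ioi.2 one_pos, rfl⟩ hsub
      ⟨t, Set.mem_Ioi.2 ht, rfl⟩
  -- scaling of C
  have hCsmul_pos : ∀ {t : ℝ}, 0 < t → ∀ {p : ℝ × ℝ}, p ∈ C → t • p ∈ C := by
    intro t ht p hp
    set e : ℝ × ℝ ≃ₜ ℝ × ℝ := Homeomorph.smul (Units.mk0 t (ne_of_gt ht)) with he
    have heΩ : e '' Ω = Ω := by
      ext q
      constructor
      · rintro ⟨r, hr, rfl⟩
        exact hΩsmul (ne_of_gt ht) hr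
      · intro hq
        refine ⟨t⁻¹ • q, hΩsmul (by positivity) hq, ?_⟩
        show (Units.mk0 t (ne_of_gt ht)) • (t⁻¹ • q) = q
        rw [Units.smul_def, smul_smul]
        norm_num [mul_inv_cancel₀ (ne_of_gt ht)]
    have himg := e.image_connectedComponentIn (s := Ω) (x := ((1:ℝ), (0:ℝ))) h10
    rw [heΩ] at himg
    have he1 : e ((1:ℝ), (0:ℝ)) = ((t, (0:ℝ)) : ℝ × ℝ) := by
      show (Units.mk0 t (ne_of_gt ht)) • (((1:ℝ), (0:ℝ)) : ℝ × ℝ) = _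
      rw [Units.smul_def]
      simp
    have hCC : e '' C = C := by
      rw [hC, himg, he1]
      exact (connectedComponentIn_eq (haxis ht)).symm
    rw [← hCC]
    exact ⟨p, hp, rfl⟩
  set negC : Set (ℝ × ℝ) := Neg.neg '' C with hnegC
  set U : Set (ℝ × ℝ) := C ∪ negC with hU
  have hCopen : IsOpen C := hΩo.connectedComponentIn
  have hnegCopen : IsOpen negC := (Homeomorph.neg (ℝ × ℝ)).isOpenMap C hCopen
  have hCΩ : C ⊆ Ω := connectedComponentIn_subset _ _
  have hnegmem : ∀ {p : ℝ × ℝ}, p ∈ negC ↔ -p ∈ C := by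
    intro p
    constructor
    · rintro ⟨q, hq, rfl⟩; simpa using hq
    · intro hp; exact ⟨-p, hp, by simp⟩
  have hnegCΩ : negC ⊆ Ω := by
    intro p hp
    have h2 := hCΩ (hnegmem.1 hp)
    have := hΩsmul (t := -1) (by norm_num) h2
    simpa using this
  have hUsmul : ∀ {t : ℝ}, t ≠ 0 → ∀ {p : ℝ × ℝ}, p ∈ U → t • p ∈ U := by
    intro t ht p hp
    rcases lt_or_gt_of_ne ht with htl | htg
    · rcases hp with hp | hp
      · right
        rw [hnegmem]
        have h2 : -(t • p) = (-t) • p := by simp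
        rw [h2]
        exact hCsmul_pos (by linarith) hp
      · left
        have h2 : t • p = (-t) • (-p) := by simp
        rw [h2]
        exact hCsmul_pos (by linarith) (hnegmem.1 hp)
    · rcases hp with hp | hp
      · exact Or.inl (hCsmul_pos htg hp)
      · right
        rw [hnegmem]
        have h2 : -(t • p) = t • (-p) := by simp
        rw [h2]
        exact hCsmul_pos htg (hnegmem.1 hp)
  -- dichotomy
  by_cases hb : ((0:ℝ), (1:ℝ)) ∈ U
  · have himgTC : IsPreconnected (Θ '' C) :=
      isPreconnected_connectedComponentIn.image _ hΘcont.continuousOn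
    have hsubTC : Θ '' C ⊆ coneD D := by
      rintro _ ⟨p, hp, rfl⟩
      exact hCΩ hp
    have hwTC : w ∈ Θ '' C := by
      refine ⟨(1, 0), mem_connectedComponentIn h10, ?_⟩
      simp only [hΘ, one_smul, zero_smul, add_zero]
    rcases hb with hb | hb
    · left
      have hvTC : v₀ ∈ Θ '' C := by
        refine ⟨(0, 1), hb, ?_⟩
        simp only [hΘ, one_smul, zero_smul, zero_add]
      exact himgTC.subset_connectedComponentIn hvTC hsubTC hwTC
    · right
      have hq : ((0:ℝ), (-1:ℝ)) ∈ C := by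
        have := hnegmem.1 hb
        simpa using this
      have hvTC : -v₀ ∈ Θ '' C := by
        refine ⟨(0, -1), hq, ?_⟩
        simp only [hΘ, zero_smul, neg_smul, one_smul, zero_add]
      have hwc : w ∈ connectedComponentIn (coneD D) (-v₀) :=
        himgTC.subset_connectedComponentIn hvTC hsubTC hwTC
      have := neg_component hwc
      rwa [neg_neg] at this
  · exfalso
    set V : Set (ℝ × ℝ) := Ω \ U with hV
    have hOeq : (Homeomorph.neg (ℝ × ℝ)) '' Ω = Ω := by
      ext r
      constructor
      · rintro ⟨x, hx, rfl⟩
        have := hΩsmul (t := -1) (by norm_num) hx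
        simpa using this
      · intro hr
        refine ⟨-r, ?_, by simp⟩
        have := hΩsmul (t := -1) (by norm_num) hr
        simpa using this
    have hVopen : IsOpen V := by
      have hVeq : V = ⋃ p : V, connectedComponentIn Ω p.val := by
        apply Set.Subset.antisymm
        · intro p hp
          exact Set.mem_iUnion.2 ⟨⟨p, hp⟩, mem_connectedComponentIn hp.1⟩
        · rintro q hq
          obtain ⟨⟨p, hp⟩, hq2⟩ := Set.mem_iUnion.1 hq
          refine ⟨connectedComponentIn_subset _ _ hq2, ?_⟩
          intro hqU
          apply hp.2
          have hpq := connectedComponentIn_eq hq2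
          rcases hqU with hqC | hqC
          · have h6 := connectedComponentIn_eq (hqC : q ∈ connectedComponentIn Ω (1,0))
            left
            show p ∈ connectedComponentIn Ω (1,0)
            rw [h6, ← hpq]
            exact mem_connectedComponentIn hp.1
          · right
            rw [hnegmem]
            have hnq : -q ∈ C := hnegmem.1 hqC
            have hq3 : -q ∈ connectedComponentIn Ω (-p) := by
              have hmm : -q ∈ Neg.neg '' connectedComponentIn Ω p := ⟨q, hq2, rfl⟩
              have himgneg := (Homeomorph.neg (ℝ × ℝ)).image_connectedComponentIn
                (s := Ω) (x := p) hp.1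
              rw [hOeq] at himgneg
              have h4 : (Homeomorph.neg (ℝ × ℝ)) '' connectedComponentIn Ω p
                  = Neg.neg '' connectedComponentIn Ω p := rfl
              rw [h4] at himgneg
              rw [himgneg] at hmm
              exact hmm
            have h5 := connectedComponentIn_eq hq3
            have h6 := connectedComponentIn_eq (hnq : -q ∈ connectedComponentIn Ω (1,0))
            show -p ∈ connectedComponentIn Ω (1,0)
            rw [h6, ← h5]
            refine mem_connectedComponentIn ?_
            have := hΩsmul (t := -1) (by norm_num) hp.1
            simpa using this
      rw [hVeq]
      exact isOpen_iUnion (fun p => hΩo.connectedComponentIn)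
    have hVsmul : ∀ {t : ℝ}, t ≠ 0 → ∀ {p : ℝ × ℝ}, p ∈ V → t • p ∈ V := by
      intro t ht p hp
      refine ⟨hΩsmul ht hp.1, fun hU2 => hp.2 ?_⟩
      have := hUsmul (inv_ne_zero ht) hU2
      rwa [smul_smul, inv_mul_cancel₀ ht, one_smul] at this
    have hUΩ : U ⊆ Ω := Set.union_subset hCΩ hnegCΩ
    -- dual functionals
    have hset : LinearIndependent ℝ ((↑) : ({w, v₀} : Set (RV n)) → RV n) := by
      have hr : Set.range ![w, v₀] = {w, v₀} := Matrix.range_cons_cons_empty w v₀ ![]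
      have h := (linearIndepOn_id_range_iff hind.injective).mpr hind
      rw [hr] at h
      exact h
    set bset : Set (RV n) := LinearIndepOn.extend (show LinearIndepOn ℝ id ({w, v₀} : Set (RV n)) from hset) (Set.subset_univ _) with hbset
    set B : Module.Basis bset ℝ (RV n) := Module.Basis.extend hset with hB
    have hwb : w ∈ bset := LinearIndepOn.subset_extend (show LinearIndepOn ℝ id ({w, v₀} : Set (RV n)) from hset) _ (by left; rfl)
    have hv₀b : v₀ ∈ bset := LinearIndepOn.subset_extend (show LinearIndepOn ℝ id ({w, v₀} : Set (RV n)) from hset) _ (by right; rfl)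
    set iw : bset := ⟨w, hwb⟩ with hiw
    set iv : bset := ⟨v₀, hv₀b⟩ with hiv
    have hivw : iw ≠ iv := fun h => hne_wv (congrArg Subtype.val h)
    set φ : Module.Dual ℝ (RV n) := B.coord iw with hφ
    set ψ : Module.Dual ℝ (RV n) := B.coord iv with hψ
    have hφw : φ w = 1 := by
      have h2 : B iw = w := Module.Basis.extend_apply_self hset iw
      rw [hφ, ← h2, Module.Basis.coord_apply, Module.Basis.repr_self, Finsupp.single_eq_same]
    have hφv : φ v₀ = 0 := by
      have h2 : B iv = v₀ := Module.Basis.extend_apply_self hset iv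
      rw [hφ, ← h2, Module.Basis.coord_apply, Module.Basis.repr_self, Finsupp.single_eq_of_ne hivw]
    have hψw : ψ w = 0 := by
      have h2 : B iw = w := Module.Basis.extend_apply_self hset iw
      rw [hψ, ← h2, Module.Basis.coord_apply, Module.Basis.repr_self, Finsupp.single_eq_of_ne (Ne.symm hivw)]
    have hψv : ψ v₀ = 1 := by
      have h2 : B iv = v₀ := Module.Basis.extend_apply_self hset iv
      rw [hψ, ← h2, Module.Basis.coord_apply, Module.Basis.repr_self, Finsupp.single_eq_same]
    set Φ2 : RV n → ℝ × ℝ := fun v => (φ v, ψ v) with hΦ2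
    have hΦ2cont : Continuous Φ2 :=
      (LinearMap.continuous_of_finiteDimensional φ).prodMk
        (LinearMap.continuous_of_finiteDimensional ψ)
    have hΦ2Θ : ∀ p : ℝ × ℝ, Φ2 (Θ p) = p := by
      intro p
      have h1 : φ (Θ p) = p.1 := by
        simp only [hΘ, map_add, map_smul, hφw, hφv, smul_eq_mul, mul_one, mul_zero, add_zero]
      have h2 : ψ (Θ p) = p.2 := by
        simp only [hΘ, map_add, map_smul, hψw, hψv, smul_eq_mul, mul_one, mul_zero, zero_add]
      exact Prod.ext h1 h2
    have hΦ2smul : ∀ (a : ℝ) (v : RV n), Φ2 (a • v) = a • Φ2 v := by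
      intro a v
      simp only [hΦ2, map_smul, Prod.smul_mk, smul_eq_mul]
    -- the line
    set W : Submodule ℝ (RV n) := Submodule.span ℝ ({w, v₀} : Set (RV n)) with hW
    have hrank : Module.finrank ℝ W = 2 := by
      have hr : Set.range ![w, v₀] = {w, v₀} := Matrix.range_cons_cons_empty w v₀ ![]
      rw [hW, ← hr, finrank_span_eq_card hind]
      simp
    set L : Set (RP n) := {x : RP n | x.rep ∈ W} with hL
    have hpre : IsPreconnected (D ∩ L) := hDc.2 L ⟨W, hrank, rfl⟩
    -- the separating open sets
    set A : Set (RP n) :=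
      {x : RP n | ∃ v, ∃ h : v ≠ 0, Projectivization.mk ℝ v h = x ∧ Φ2 v ∈ U} with hA
    set Bs : Set (RP n) :=
      {x : RP n | ∃ v, ∃ h : v ≠ 0, Projectivization.mk ℝ v h = x ∧ Φ2 v ∈ V} with hBs
    have hApre : {p : {v : RV n // v ≠ 0} | Projectivization.mk ℝ p.1 p.2 ∈ A}
        = (fun p : {v : RV n // v ≠ 0} => Φ2 p.1) ⁻¹' U := by
      ext p
      constructor
      · rintro ⟨v, h, hmk, hvU⟩
        obtain ⟨a, ha⟩ := (Projectivization.mk_eq_mk_iff ℝ _ _ h p.2).1 hmk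
        have h3 : Φ2 v = (a : ℝ) • Φ2 p.1 := by rw [← ha, Units.smul_def, hΦ2smul]
        have h4 := hUsmul (t := (a : ℝ)⁻¹) (by simp [a.ne_zero]) (h3 ▸ hvU)
        rwa [smul_smul, inv_mul_cancel₀ (by exact_mod_cast a.ne_zero), one_smul] at h4
      · intro hp
        exact ⟨p.1, p.2, rfl, hp⟩
    have hBspre : {p : {v : RV n // v ≠ 0} | Projectivization.mk ℝ p.1 p.2 ∈ Bs}
        = (fun p : {v : RV n // v ≠ 0} => Φ2 p.1) ⁻¹' V := by
      ext p
      constructor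
      · rintro ⟨v, h, hmk, hvV⟩
        obtain ⟨a, ha⟩ := (Projectivization.mk_eq_mk_iff ℝ _ _ h p.2).1 hmk
        have h3 : Φ2 v = (a : ℝ) • Φ2 p.1 := by rw [← ha, Units.smul_def, hΦ2smul]
        have h4 := hVsmul (t := (a : ℝ)⁻¹) (by simp [a.ne_zero]) (h3 ▸ hvV)
        rwa [smul_smul, inv_mul_cancel₀ (by exact_mod_cast a.ne_zero), one_smul] at h4
      · intro hp
        exact ⟨p.1, p.2, rfl, hp⟩
    have hAopen : IsOpen A := by
      rw [isOpen_proj_iff, hApre]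
      exact (hΦ2cont.comp continuous_subtype_val).isOpen_preimage U
        (hCopen.union hnegCopen)
    have hBsopen : IsOpen Bs := by
      rw [isOpen_proj_iff, hBspre]
      exact (hΦ2cont.comp continuous_subtype_val).isOpen_preimage V hVopen
    -- cover
    have hcover : D ∩ L ⊆ A ∪ Bs := by
      rintro x ⟨hxD, hxL⟩
      obtain ⟨a, b, hab⟩ := Submodule.mem_span_pair.1 hxL
      have hrepne := x.rep_nonzero
      have hΘab : Θ (a, b) = x.rep := by simp only [hΘ]; exact hab
      have habΩ : ((a, b) : ℝ × ℝ) ∈ Ω := by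
        show Θ (a, b) ∈ coneD D
        rw [hΘab]
        exact ⟨hrepne, by rw [Projectivization.mk_rep]; exact hxD⟩
      have hΦrep : Φ2 x.rep = (a, b) := by rw [← hΘab, hΦ2Θ]
      have : ((a,b) : ℝ × ℝ) ∈ U ∪ V := by
        by_cases h : ((a,b) : ℝ × ℝ) ∈ U
        · exact Or.inl h
        · exact Or.inr ⟨habΩ, h⟩
      rcases this with h | h
      · exact Or.inl ⟨x.rep, hrepne, Projectivization.mk_rep x, by rw [hΦrep]; exact h⟩
      · exact Or.inr ⟨x.rep, hrepne, Projectivization.mk_rep x, by rw [hΦrep]; exact h⟩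
    -- nonempty pieces
    have hwL : Projectivization.mk ℝ w hwne ∈ D ∩ L := by
      refine ⟨hwD, ?_⟩
      obtain ⟨a, ha⟩ := Projectivization.exists_smul_eq_mk_rep ℝ w hwne
      show (Projectivization.mk ℝ w hwne).rep ∈ W
      rw [← ha]
      exact Submodule.smul_mem _ _ (Submodule.subset_span (by left; rfl))
    have hvL : Projectivization.mk ℝ v₀ hv₀ne ∈ D ∩ L := by
      refine ⟨hv₀D, ?_⟩
      obtain ⟨a, ha⟩ := Projectivization.exists_smul_eq_mk_rep ℝ v₀ hv₀ne
      show (Projectivization.mk ℝ v₀ hv₀ne).rep ∈ W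
      rw [← ha]
      exact Submodule.smul_mem _ _ (Submodule.subset_span (by right; rfl))
    have hAne : ((D ∩ L) ∩ A).Nonempty := by
      refine ⟨Projectivization.mk ℝ w hwne, hwL, w, hwne, rfl, ?_⟩
      have hΦw : Φ2 w = ((1:ℝ), (0:ℝ)) := by
        simp only [hΦ2, hφw, hψw]
      rw [hΦw]
      exact Or.inl (mem_connectedComponentIn h10)
    have hBne : ((D ∩ L) ∩ Bs).Nonempty := by
      refine ⟨Projectivization.mk ℝ v₀ hv₀ne, hvL, v₀, hv₀ne, rfl, ?_⟩
      have hΦv : Φ2 v₀ = ((0:ℝ), (1:ℝ)) := by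
        simp only [hΦ2, hφv, hψv]
      rw [hΦv]
      exact ⟨h01, hb⟩
    obtain ⟨x, hxDL, hxA, hxB⟩ := hpre A Bs hAopen hBsopen hcover hAne hBne
    obtain ⟨v1, h1, hmk1, hv1U⟩ := hxA
    obtain ⟨v2, h2, hmk2, hv2V⟩ := hxB
    obtain ⟨a, ha⟩ := (Projectivization.mk_eq_mk_iff ℝ _ _ h1 h2).1 (hmk1.trans hmk2.symm)
    have h3 : Φ2 v1 = (a : ℝ) • Φ2 v2 := by rw [← ha, Units.smul_def, hΦ2smul]
    have h4 : Φ2 v1 ∈ V := h3 ▸ hVsmul (t := (a:ℝ)) (by exact_mod_cast a.ne_zero) hv2V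
    exact h4.2 hv1U

lemma extLD_smul {n : ℕ} (t : ℝ) (f : Module.Dual ℝ (RV n)) (w : CV n) :
    extLD (t • f) w = (t : ℂ) * extLD f w := by
  rw [extLD_apply, extLD_apply, Finset.mul_sum]
  congr 1
  funext i
  simp only [LinearMap.smul_apply, smul_eq_mul]
  push_cast
  ring

def dsq {n : ℕ} (f : Module.Dual ℝ (RV n)) : ℝ := ∑ i, (f (Pi.single i 1))^2

lemma dsq_pos {n : ℕ} {f : Module.Dual ℝ (RV n)} (hf : f ≠ 0) : 0 < dsq f := by
  have h0 : 0 ≤ dsq f := Finset.sum_nonneg fun i _ => sq_nonneg _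
  rcases h0.lt_or_eq with h | h
  · exact h
  · exfalso
    have hz : ∀ i, f (Pi.single i 1) = 0 := by
      intro i
      have h2 := (Finset.sum_eq_zero_iff_of_nonneg
        (fun j _ => sq_nonneg (f (Pi.single j 1)))).1 h.symm i (Finset.mem_univ i)
      exact pow_eq_zero_iff (two_ne_zero) |>.1 h2
    apply hf
    apply LinearMap.ext
    intro v
    rw [eval_sum]
    simp [hz]

lemma dsq_smul {n : ℕ} (t : ℝ) (f : Module.Dual ℝ (RV n)) : dsq (t • f) = t^2 * dsq f := by
  simp only [dsq, LinearMap.smul_apply, smul_eq_mul, mul_pow, Finset.mul_sum]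

def PhiMap {n : ℕ} (zt : CV n) (v₀ : RV n) : RPd n → ℂ :=
  Projectivization.lift
    (fun g : {g : Module.Dual ℝ (RV n) // g ≠ 0} =>
      ((g.1 v₀ / dsq g.1 : ℝ) : ℂ) * extLD g.1 zt)
    (by
      rintro ⟨a, ha⟩ ⟨b, hb⟩ t (hab : a = t • b)
      have htne : t ≠ 0 := by
        rintro rfl
        simp at hab
        exact ha hab
      have hd : dsq b ≠ 0 := ne_of_gt (dsq_pos hb)
      subst hab
      simp only
      rw [extLD_smul, dsq_smul]
      have h1 : ((t • b) v₀ : ℝ) = t * b v₀ := rfl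
      rw [h1]
      have htC : (t : ℂ) ≠ 0 := by exact_mod_cast htne
      have hdC : ((dsq b : ℝ) : ℂ) ≠ 0 := by exact_mod_cast hd
      push_cast
      field_simp)

lemma PhiMap_mk {n : ℕ} (zt : CV n) (v₀ : RV n) (g : Module.Dual ℝ (RV n)) (hg : g ≠ 0) :
    PhiMap zt v₀ (Projectivization.mk ℝ g hg) = ((g v₀ / dsq g : ℝ) : ℂ) * extLD g zt := rfl

lemma continuous_coordDual {n : ℕ} (i : Fin (n + 1)) :
    Continuous (fun f : Module.Dual ℝ (RV n) => f (Pi.single i 1)) := by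
  have h1 : Continuous (fun f : Module.Dual ℝ (RV n) => (fun j => f (Pi.single j 1) : RV n)) :=
    continuous_induced_dom
  exact (continuous_apply i).comp h1

lemma continuous_PhiMap {n : ℕ} (zt : CV n) (v₀ : RV n) : Continuous (PhiMap zt v₀) := by
  apply isQuotientMap_quotient_mk'.continuous_iff.2
  show Continuous fun g : {g : Module.Dual ℝ (RV n) // g ≠ 0} =>
      ((g.1 v₀ / dsq g.1 : ℝ) : ℂ) * extLD g.1 zt
  have hcoord : ∀ i, Continuous fun g : {g : Module.Dual ℝ (RV n) // g ≠ 0} =>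
      g.1 (Pi.single i 1) := fun i => (continuous_coordDual i).comp continuous_subtype_val
  have hval : Continuous fun g : {g : Module.Dual ℝ (RV n) // g ≠ 0} => g.1 v₀ := by
    have : (fun g : {g : Module.Dual ℝ (RV n) // g ≠ 0} => g.1 v₀)
        = fun g => ∑ i, v₀ i * g.1 (Pi.single i 1) := by
      funext g; exact eval_sum g.1 v₀
    rw [this]
    exact continuous_finset_sum _ fun i _ => continuous_const.mul (hcoord i)
  have hdsq : Continuous fun g : {g : Module.Dual ℝ (RV n) // g ≠ 0} => dsq g.1 :=
    continuous_finset_sum _ fun i _ => ((hcoord i).pow 2)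
  have hext : Continuous fun g : {g : Module.Dual ℝ (RV n) // g ≠ 0} => extLD g.1 zt := by
    have : (fun g : {g : Module.Dual ℝ (RV n) // g ≠ 0} => extLD g.1 zt)
        = fun g => ∑ i, (g.1 (Pi.single i 1) : ℂ) * zt i := by
      funext g; exact extLD_apply g.1 zt
    rw [this]
    exact continuous_finset_sum _ fun i _ =>
      (Complex.continuous_ofReal.comp (hcoord i)).mul continuous_const
  exact ((Complex.continuous_ofReal.comp (hval.div hdsq fun g => ne_of_gt (dsq_pos g.2))).mul hext)

open scoped Real

lemma re_scaled (r s : ℝ) (X Y : ℂ) :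
    (((r:ℂ) * X) * conj ((s:ℂ) * Y)).re = r * s * (X * conj Y).re := by
  rw [show ((r:ℂ)*X)*conj ((s:ℂ)*Y) = (r:ℂ)*(s:ℂ)*(X*conj Y) by
    rw [map_mul, Complex.conj_ofReal]; ring]
  rw [← Complex.ofReal_mul, Complex.re_ofReal_mul]

/-- Lempert's description of the elliptic tube. -/
theorem eTube_eq_positivity_description
    (n : ℕ) (D : Set (RP n)) (hDo : IsOpen D) (hDc : convexR D)
    (Dt : Set (RV n)) (v₀ : RV n)
    (hv₀ : v₀ ∈ {v : RV n | ∃ h : v ≠ 0, Projectivization.mk ℝ v h ∈ D})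
    (hDt : Dt = connectedComponentIn {v : RV n | ∃ h : v ≠ 0, Projectivization.mk ℝ v h ∈ D} v₀)
    (F : Set (RPd n)) (hFc : IsCompact F) (hFd : dualCompF F = D)
    (lift : RPd n → Module.Dual ℝ (RV n))
    (hlift : ∀ f ∈ F, ∃ h : lift f ≠ 0, Projectivization.mk ℝ (lift f) h = f)
    (hpos : ∀ f ∈ F, ∀ v ∈ Dt, 0 < lift f v) :
    eTube D = {z : CP n | ∀ f ∈ F, ∀ g ∈ F,
      0 < (extLD (lift f) z.rep * conj (extLD (lift g) z.rep)).re} := by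
  have hv₀c : v₀ ∈ coneD D := hv₀
  have hDtc : Dt = connectedComponentIn (coneD D) v₀ := hDt
  have hv₀Dt : v₀ ∈ Dt := hDtc ▸ mem_connectedComponentIn hv₀c
  ext z
  simp only [Set.mem_setOf_eq]
  constructor
  · -- forward inclusion
    intro hz f hf g hg
    simp only [eTube, Set.mem_iUnion] at hz
    obtain ⟨w₀, w₁, hw₀ne, hw₁ne, hseg, hzt⟩ := hz
    obtain ⟨c₀, c₁, hRe, hvne, hzeq⟩ := hzt
    -- endpoints lie in D
    have hw₀D : Projectivization.mk ℝ w₀ hw₀ne ∈ D := by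
      apply hseg
      have he : (1:ℝ) • w₀ + (0:ℝ) • w₁ = w₀ := by rw [one_smul, zero_smul, add_zero]
      have hne' : (1:ℝ) • w₀ + (0:ℝ) • w₁ ≠ 0 := by rw [he]; exact hw₀ne
      exact ⟨1, 0, by norm_num, hne',
        (Projectivization.mk_eq_mk_iff' ℝ _ _ hw₀ne hne').2 ⟨1, by rw [one_smul]; exact he⟩⟩
    have hw₁D : Projectivization.mk ℝ w₁ hw₁ne ∈ D := by
      apply hseg
      have he : (0:ℝ) • w₀ + (1:ℝ) • w₁ = w₁ := by rw [one_smul, zero_smul, zero_add]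
      have hne' : (0:ℝ) • w₀ + (1:ℝ) • w₁ ≠ 0 := by rw [he]; exact hw₁ne
      exact ⟨0, 1, by norm_num, hne',
        (Projectivization.mk_eq_mk_iff' ℝ _ _ hw₁ne hne').2 ⟨1, by rw [one_smul]; exact he⟩⟩
    have hw₀c : w₀ ∈ coneD D := ⟨hw₀ne, hw₀D⟩
    have hw₁c : w₁ ∈ coneD D := ⟨hw₁ne, hw₁D⟩
    -- the representative
    obtain ⟨μ, hμ⟩ := Projectivization.exists_smul_eq_mk_rep ℂ _ hvne
    rw [← hzeq] at hμ
    have hμ' : (μ : ℂ) • (c₀ • cplx w₀ + c₁ • cplx w₁) = z.rep := hμ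
    have hμne : (μ : ℂ) ≠ 0 := μ.ne_zero
    have hext : ∀ h : Module.Dual ℝ (RV n),
        extLD h z.rep = (μ : ℂ) * (c₀ * (h w₀ : ℂ) + c₁ * (h w₁ : ℂ)) := by
      intro h
      rw [← hμ', map_smul, map_add, map_smul, map_smul, extLD_cplx, extLD_cplx]
      simp only [smul_eq_mul]
    by_cases hdep : ∃ t : ℝ, w₁ = t • w₀
    · -- degenerate segment
      obtain ⟨t, rfl⟩ := hdep
      have htC : ((t:ℝ):ℂ) = (t:ℂ) := rfl
      have hvec2 : c₀ • cplx w₀ + c₁ • cplx (t • w₀) = (c₀ + c₁ * t) • cplx w₀ := by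
        rw [cplx_smul, smul_smul, ← add_smul]
      have hAne : c₀ + c₁ * (t:ℂ) ≠ 0 := by
        intro h0
        apply hvne
        rw [hvec2, show (c₀ + c₁ * (t:ℂ)) = 0 from h0, zero_smul]
      -- sign of the pair at w₀
      have hαγ : 0 < lift f w₀ * lift g w₀ := by
        rcases two_components hDo hDc hv₀c hw₀c with h0 | h0
        · have h1 := hpos f hf w₀ (hDtc ▸ h0)
          have h2 := hpos g hg w₀ (hDtc ▸ h0)
          exact mul_pos h1 h2
        · have h1 := hpos f hf (-w₀) (hDtc ▸ h0)
          have h2 := hpos g hg (-w₀) (hDtc ▸ h0)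
          rw [map_neg] at h1 h2
          exact mul_pos_of_neg_of_neg (by linarith) (by linarith)
      rw [hext (lift f), hext (lift g)]
      have hf1 : lift f (t • w₀) = t * lift f w₀ := by rw [map_smul, smul_eq_mul]
      have hg1 : lift g (t • w₀) = t * lift g w₀ := by rw [map_smul, smul_eq_mul]
      rw [hf1, hg1]
      set α := lift f w₀
      set γ := lift g w₀
      have heq : ((μ:ℂ) * (c₀ * (α:ℂ) + c₁ * ((t * α : ℝ):ℂ))
          * conj ((μ:ℂ) * (c₀ * (γ:ℂ) + c₁ * ((t * γ : ℝ):ℂ)))).re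
          = Complex.normSq μ * Complex.normSq (c₀ + c₁ * (t:ℂ)) * (α * γ) := by
        push_cast
        simp only [Complex.mul_re, Complex.mul_im, Complex.add_re, Complex.add_im,
          Complex.normSq_apply, Complex.conj_re, Complex.conj_im, Complex.ofReal_re,
          Complex.ofReal_im]
        ring
      rw [heq]
      exact mul_pos (mul_pos (Complex.normSq_pos.2 hμne) (Complex.normSq_pos.2 hAne)) hαγ
    · -- independent case
      have hc01 : c₀ ≠ 0 ∨ c₁ ≠ 0 := by
        by_contra h0
        push_neg at h0
        apply hvne
        rw [h0.1, h0.2, zero_smul, zero_smul, add_zero]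
      -- w₀ and w₁ in the same component
      have hind : LinearIndependent ℝ ![w₁, w₀] := by
        rw [LinearIndependent.pair_iff]
        intro s t hst
        by_cases hs : s = 0
        · subst hs
          simp only [zero_smul, zero_add] at hst
          exact ⟨rfl, (smul_eq_zero.1 hst).resolve_right hw₀ne⟩
        · exfalso
          have h2 : s • w₁ = (-t) • w₀ := by rw [neg_smul]; rwa [add_eq_zero_iff_eq_neg] at hst
          refine hdep ⟨-t / s, ?_⟩
          calc w₁ = s⁻¹ • (s • w₁) := by rw [smul_smul, inv_mul_cancel₀ hs, one_smul]
          _ = s⁻¹ • ((-t) • w₀) := by rw [h2]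
          _ = (-t / s) • w₀ := by rw [smul_smul]; congr 1; field_simp
      have hcomp : w₁ ∈ connectedComponentIn (coneD D) w₀ := by
        have hσcont : Continuous (fun s : ℝ => (1 - s) • w₀ + s • w₁) := by
          exact ((continuous_const.sub continuous_id).smul continuous_const).add
            (continuous_id.smul continuous_const)
        have hσsub : (fun s : ℝ => (1 - s) • w₀ + s • w₁) '' Set.Icc 0 1 ⊆ coneD D := by
          rintro _ ⟨s, hs, rfl⟩
          have hsne : (1 - s) • w₀ + s • w₁ ≠ 0 := by
            intro h0
            obtain ⟨h1, h2⟩ := LinearIndependent.pair_iff.1 hind s (1 - s)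
              (by rw [add_comm]; exact h0)
            rw [h1] at h2
            simp at h2
          refine ⟨hsne, ?_⟩
          apply hseg
          exact ⟨1 - s, s, mul_nonneg (by linarith [hs.2]) hs.1, hsne, rfl⟩
        have hσpre : IsPreconnected ((fun s : ℝ => (1 - s) • w₀ + s • w₁) '' Set.Icc 0 1) :=
          isPreconnected_Icc.image _ hσcont.continuousOn
        have h0mem : w₀ ∈ (fun s : ℝ => (1 - s) • w₀ + s • w₁) '' Set.Icc 0 1 :=
          ⟨0, Set.mem_Icc.2 ⟨le_refl 0, zero_le_one⟩, by simp⟩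
        have h1mem : w₁ ∈ (fun s : ℝ => (1 - s) • w₀ + s • w₁) '' Set.Icc 0 1 :=
          ⟨1, Set.mem_Icc.2 ⟨zero_le_one, le_refl 1⟩, by simp⟩
        exact hσpre.subset_connectedComponentIn h0mem hσsub h1mem
      have hsame : (w₀ ∈ Dt ∧ w₁ ∈ Dt) ∨ (-w₀ ∈ Dt ∧ -w₁ ∈ Dt) := by
        rcases two_components hDo hDc hv₀c hw₀c with h0 | h0
        · left
          refine ⟨hDtc ▸ h0, ?_⟩
          rw [hDtc, connectedComponentIn_eq h0]
          exact hcomp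
        · right
          refine ⟨hDtc ▸ h0, ?_⟩
          rw [hDtc, connectedComponentIn_eq h0]
          exact neg_component hcomp
      set α := lift f w₀
      set β := lift f w₁
      set γ := lift g w₀
      set δ := lift g w₁
      have hsigns : 0 < α * γ ∧ 0 < β * δ ∧ 0 < α * δ + β * γ := by
        rcases hsame with ⟨h0, h1⟩ | ⟨h0, h1⟩
        · have ha := hpos f hf w₀ h0
          have hb := hpos f hf w₁ h1
          have hc := hpos g hg w₀ h0
          have hd := hpos g hg w₁ h1
          exact ⟨mul_pos ha hc, mul_pos hb hd,
            add_pos (mul_pos ha hd) (mul_pos hb hc)⟩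
        · have ha := hpos f hf (-w₀) h0
          have hb := hpos f hf (-w₁) h1
          have hc := hpos g hg (-w₀) h0
          have hd := hpos g hg (-w₁) h1
          rw [map_neg] at ha hb hc hd
          have ha' : α < 0 := by linarith
          have hb' : β < 0 := by linarith
          have hc' : γ < 0 := by linarith
          have hd' : δ < 0 := by linarith
          exact ⟨mul_pos_of_neg_of_neg ha' hc', mul_pos_of_neg_of_neg hb' hd',
            add_pos (mul_pos_of_neg_of_neg ha' hd') (mul_pos_of_neg_of_neg hb' hc')⟩
      obtain ⟨hαγ, hβδ, hcross⟩ := hsigns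
      rw [hext (lift f), hext (lift g), key_re]
      have h2 : 0 ≤ (α * δ + β * γ) * (c₀ * conj c₁).re := mul_nonneg hcross.le hRe
      have h3 : 0 < α * γ * Complex.normSq c₀ + β * δ * Complex.normSq c₁
          + (α * δ + β * γ) * (c₀ * conj c₁).re := by
        rcases hc01 with hc | hc
        · have := mul_pos hαγ (Complex.normSq_pos.2 hc)
          nlinarith [mul_nonneg hβδ.le (Complex.normSq_nonneg c₁)]
        · have := mul_pos hβδ (Complex.normSq_pos.2 hc)
          nlinarith [mul_nonneg hαγ.le (Complex.normSq_nonneg c₀)]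
      exact mul_pos (Complex.normSq_pos.2 hμne) h3
  · -- backward inclusion
    intro hz
    rcases Set.eq_empty_or_nonempty F with hF | hF
    · -- F empty : D is everything
      have hD : D = Set.univ := by
        rw [← hFd, hF]
        ext x
        simp [dualCompF]
      set x : RV n := fun i => (z.rep i).re with hx
      set y : RV n := fun i => (z.rep i).im with hy
      simp only [eTube, Set.mem_iUnion]
      by_cases hyz : y = 0
      · have hxz : x ≠ 0 := by
          intro h0
          apply z.rep_nonzero
          funext i
          have h1 : (z.rep i).re = 0 := congrFun h0 i
          have h2 : (z.rep i).im = 0 := congrFun hyz i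
          exact Complex.ext h1 h2
        have hveq : (1:ℂ) • cplx x + (0:ℂ) • cplx x = z.rep := by
          rw [one_smul, zero_smul, add_zero]
          funext i
          rw [cplx]
          exact Complex.ext rfl (congrFun hyz i).symm
        have hne' : (1:ℂ) • cplx x + (0:ℂ) • cplx x ≠ 0 := by
          rw [hveq]; exact z.rep_nonzero
        refine ⟨x, x, hxz, hxz, by rw [hD]; exact Set.subset_univ _, 1, 0, by simp, hne', ?_⟩
        conv_lhs => rw [← Projectivization.mk_rep z]
        exact (Projectivization.mk_eq_mk_iff' ℂ _ _ z.rep_nonzero hne').2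
          ⟨1, by rw [one_smul]; exact hveq⟩
      · have hveq : (1:ℂ) • cplx x + Complex.I • cplx y = z.rep := by
          funext i
          simp only [Pi.add_apply, Pi.smul_apply, one_smul, smul_eq_mul, cplx]
          rw [mul_comm]
          exact Complex.re_add_im (z.rep i)
        by_cases hxz : x = 0
        · have hveq2 : Complex.I • cplx y + (0:ℂ) • cplx y = z.rep := by
            rw [zero_smul, add_zero, ← hveq, hxz]
            have : cplx (0 : RV n) = 0 := by funext i; simp [cplx]
            rw [this, smul_zero, zero_add]
          have hne' : Complex.I • cplx y + (0:ℂ) • cplx y ≠ 0 := by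
            rw [hveq2]; exact z.rep_nonzero
          refine ⟨y, y, hyz, hyz, by rw [hD]; exact Set.subset_univ _, Complex.I, 0,
            by simp, hne', ?_⟩
          conv_lhs => rw [← Projectivization.mk_rep z]
          exact (Projectivization.mk_eq_mk_iff' ℂ _ _ z.rep_nonzero hne').2
            ⟨1, by rw [one_smul]; exact hveq2⟩
        · have hne' : (1:ℂ) • cplx x + Complex.I • cplx y ≠ 0 := by
            rw [hveq]; exact z.rep_nonzero
          refine ⟨x, y, hxz, hyz, by rw [hD]; exact Set.subset_univ _, 1, Complex.I,
            by simp, hne', ?_⟩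
          conv_lhs => rw [← Projectivization.mk_rep z]
          exact (Projectivization.mk_eq_mk_iff' ℂ _ _ z.rep_nonzero hne').2
            ⟨1, by rw [one_smul]; exact hveq⟩
    · -- F nonempty : use the rotation
      set Φ : RPd n → ℂ := PhiMap z.rep v₀ with hΦ
      set K : Set ℂ := Φ '' F with hK
      have hKc : IsCompact K := hFc.image (continuous_PhiMap _ _)
      have hKne : K.Nonempty := hF.image Φ
      -- value of Φ on F
      have hΦval : ∀ f ∈ F, Φ f = ((lift f v₀ / dsq (lift f) : ℝ) : ℂ)
          * extLD (lift f) z.rep := by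
        intro f hf
        obtain ⟨hne, hmk⟩ := hlift f hf
        conv_lhs => rw [← hmk]
        exact PhiMap_mk z.rep v₀ (lift f) hne
      have hcf : ∀ f ∈ F, 0 < lift f v₀ / dsq (lift f) := by
        intro f hf
        obtain ⟨hne, _⟩ := hlift f hf
        exact div_pos (hpos f hf v₀ hv₀Dt) (dsq_pos hne)
      have hKpos : ∀ a ∈ K, ∀ b ∈ K, 0 < (a * conj b).re := by
        rintro _ ⟨f, hf, rfl⟩ _ ⟨g, hg, rfl⟩
        rw [hΦval f hf, hΦval g hg, re_scaled]
        exact mul_pos (mul_pos (hcf f hf) (hcf g hg)) (hz f hf g hg)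
      obtain ⟨u, hu⟩ := quadrant_rotation hKc hKne hKpos
      obtain ⟨f₀, hf₀⟩ := hF
      have hune : u ≠ 0 := by
        intro h0
        have := (hu _ ⟨f₀, hf₀, rfl⟩).1
        rw [h0, zero_mul] at this
        simp at this
      set x : RV n := fun i => (u * z.rep i).re with hx
      set y : RV n := fun i => (u * z.rep i).im with hy
      -- evaluation identities
      have hre : ∀ h : Module.Dual ℝ (RV n), (u * extLD h z.rep).re = h x
          ∧ (u * extLD h z.rep).im = h y := by
        intro h
        have h1 : u * extLD h z.rep = ∑ i, (h (Pi.single i 1) : ℂ) * (u * z.rep i) := by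
          rw [extLD_apply, Finset.mul_sum]
          congr 1
          funext i
          ring
        constructor
        · rw [h1, Complex.re_sum, eval_sum h x]
          congr 1
          funext i
          rw [Complex.re_ofReal_mul, mul_comm]
        · rw [h1, Complex.im_sum, eval_sum h y]
          congr 1
          funext i
          rw [Complex.im_ofReal_mul, mul_comm]
      have hpxy : ∀ f ∈ F, 0 < lift f x ∧ 0 < lift f y := by
        intro f hf
        obtain ⟨h1, h2⟩ := hu (Φ f) ⟨f, hf, rfl⟩
        rw [hΦval f hf] at h1 h2
        have hcomm : u * (((lift f v₀ / dsq (lift f) : ℝ) : ℂ) * extLD (lift f) z.rep)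
            = ((lift f v₀ / dsq (lift f) : ℝ) : ℂ) * (u * extLD (lift f) z.rep) := by ring
        rw [hcomm, Complex.re_ofReal_mul] at h1
        rw [hcomm, Complex.im_ofReal_mul] at h2
        have hc := hcf f hf
        obtain ⟨hr, hi⟩ := hre (lift f)
        constructor
        · rw [← hr]
          have h3 : 0 < (lift f v₀ / dsq (lift f)) * (u * extLD (lift f) z.rep).re / (lift f v₀ / dsq (lift f)) := div_pos h1 hc
          rwa [mul_div_cancel_left₀ _ (ne_of_gt hc)] at h3
        · rw [← hi]
          have h3 : 0 < (lift f v₀ / dsq (lift f)) * (u * extLD (lift f) z.rep).im / (lift f v₀ / dsq (lift f)) := div_pos h2 hc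
          rwa [mul_div_cancel_left₀ _ (ne_of_gt hc)] at h3
      have hxne : x ≠ 0 := by
        intro h0
        have h1 := (hpxy f₀ hf₀).1
        rw [h0, map_zero] at h1
        exact lt_irrefl 0 h1
      have hyne : y ≠ 0 := by
        intro h0
        have h1 := (hpxy f₀ hf₀).2
        rw [h0, map_zero] at h1
        exact lt_irrefl 0 h1
      have hsegD : realSeg x y ⊆ D := by
        rintro _ ⟨c₀, c₁, hcc, hne', rfl⟩
        rw [← hFd]
        intro ξ hξ
        obtain ⟨hξne, hξmk⟩ := hlift ξ hξ
        obtain ⟨a, ha⟩ := (Projectivization.mk_eq_mk_iff ℝ _ _ hξne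
          (Projectivization.rep_nonzero ξ)).1 (hξmk.trans (Projectivization.mk_rep ξ).symm)
        obtain ⟨b, hb⟩ := Projectivization.exists_smul_eq_mk_rep ℝ _ hne'
        rw [← hb, Units.smul_def, map_smul, smul_eq_mul]
        apply mul_ne_zero b.ne_zero
        have hrel : lift ξ (c₀ • x + c₁ • y) = (a : ℝ) * ξ.rep (c₀ • x + c₁ • y) := by
          rw [← ha]; rfl
        have hval : lift ξ (c₀ • x + c₁ • y) ≠ 0 := by
          rw [map_add, map_smul, map_smul, smul_eq_mul, smul_eq_mul]
          obtain ⟨px, py⟩ := hpxy ξ hξ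
          have hc00 : ¬(c₀ = 0 ∧ c₁ = 0) := by
            rintro ⟨rfl, rfl⟩
            apply hne'
            rw [zero_smul, zero_smul, add_zero]
          rcases lt_trichotomy c₀ 0 with hneg | hzero | hpos2
          · have hc1 : c₁ ≤ 0 := by nlinarith
            have : c₀ * lift ξ x + c₁ * lift ξ y < 0 := by nlinarith
            exact ne_of_lt this
          · subst hzero
            have hc1 : c₁ ≠ 0 := fun h => hc00 ⟨rfl, h⟩
            rw [zero_mul, zero_add]
            exact mul_ne_zero hc1 (ne_of_gt py)
          · have hc1 : 0 ≤ c₁ := by nlinarith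
            have : 0 < c₀ * lift ξ x + c₁ * lift ξ y := by nlinarith
            exact (ne_of_lt this).symm
        intro h0
        apply hval
        rw [hrel, h0, mul_zero]
      have hveq : u⁻¹ • cplx x + (Complex.I * u⁻¹) • cplx y = z.rep := by
        funext i
        simp only [Pi.add_apply, Pi.smul_apply, smul_eq_mul, cplx, hx, hy]
        have h5 : (((u * z.rep i).re : ℝ) : ℂ) + (((u * z.rep i).im : ℝ) : ℂ) * Complex.I
            = u * z.rep i := Complex.re_add_im _
        calc u⁻¹ * (((u * z.rep i).re : ℝ) : ℂ)
            + Complex.I * u⁻¹ * (((u * z.rep i).im : ℝ) : ℂ)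
            = u⁻¹ * ((((u * z.rep i).re : ℝ) : ℂ) + (((u * z.rep i).im : ℝ) : ℂ) * Complex.I) := by
              ring
        _ = u⁻¹ * (u * z.rep i) := by rw [h5]
        _ = z.rep i := by field_simp
      have hne' : u⁻¹ • cplx x + (Complex.I * u⁻¹) • cplx y ≠ 0 := by
        rw [hveq]; exact z.rep_nonzero
      have hRe0 : 0 ≤ (u⁻¹ * conj (Complex.I * u⁻¹)).re := by
        have h6 : u⁻¹ * conj (Complex.I * u⁻¹) = (Complex.normSq u⁻¹ : ℂ) * (-Complex.I) := by
          rw [map_mul, Complex.conj_I, ← Complex.mul_conj]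
          ring
        rw [h6, Complex.re_ofReal_mul]
        simp
      simp only [eTube, Set.mem_iUnion]
      refine ⟨x, y, hxne, hyne, hsegD, u⁻¹, Complex.I * u⁻¹, hRe0, hne', ?_⟩
      conv_lhs => rw [← Projectivization.mk_rep z]
      exact (Projectivization.mk_eq_mk_iff' ℂ _ _ z.rep_nonzero hne').2
        ⟨1, by rw [one_smul]; exact hveq⟩
end
end

section
/- Let D ⊆ ℝⁿ be a bounded convex open set, arising as a properly convex open subset of ℝℙⁿ in an affine chart, and suppose ∂D is of class C^k for some k ∈ ℕ ∪ {∞} with k ≥ 1. Then the function p(x+iy) = inf{t > 0 : x + t⁻¹y ∈ D} is of class C^k on the set {x+iy : x ∈ D, y ∈ ℝⁿ, y ≠ 0}. -/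
open scoped ComplexConjugate

noncomputable section

abbrev Rn (n : ℕ) : Type := Fin n → ℝ
abbrev Cn (n : ℕ) : Type := Fin n → ℂ

/-- The inclusion `ℝⁿ ⊆ ℂⁿ`. -/
def ιC {n : ℕ} (x : Rn n) : Cn n := fun i => (x i : ℂ)

/-- The real part of a point of `ℂⁿ`. -/
def rePart {n : ℕ} (z : Cn n) : Rn n := fun i => (z i).re

/-- The imaginary part of a point of `ℂⁿ`. -/
def imPart {n : ℕ} (z : Cn n) : Rn n := fun i => (z i).im

/-- Lempert's function `p(x+iy) = inf {t > 0 : x + t⁻¹ y ∈ D}` on `D ⊕ iℝⁿ`. -/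
def pfun {n : ℕ} (D : Set (Rn n)) (z : Cn n) : ℝ :=
  sInf {t : ℝ | 0 < t ∧ rePart z + t⁻¹ • imPart z ∈ D}

/-- The elliptic tube over the closed affine segment `[x, y] ⊆ ℝⁿ`, written in the affine
chart `ℂⁿ ⊆ ℂℙⁿ`: the closed disk with diameter `[x, y]`. -/
def affSegTube {n : ℕ} (x y : Rn n) : Set (Cn n) :=
  {z | ∃ c₀ c₁ : ℂ, 0 ≤ (c₀ * conj c₁).re ∧ ∃ _ : c₀ + c₁ ≠ 0,
    z = (c₀ + c₁)⁻¹ • (c₀ • ιC x + c₁ • ιC y)}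

/-- The elliptic tube `D^e` of `D ⊆ ℝⁿ`, in the affine chart `ℂⁿ ⊆ ℂℙⁿ`. -/
def affTube {n : ℕ} (D : Set (Rn n)) : Set (Cn n) :=
  ⋃ (x : Rn n) (y : Rn n) (_ : segment ℝ x y ⊆ D), affSegTube x y

/-- The boundary of `D ⊆ ℝⁿ` is of class `C^k`: near every boundary point it is the zero
set of a `C^k` function with nonvanishing gradient. -/
def boundaryCk {n : ℕ} (k : ℕ∞) (D : Set (Rn n)) : Prop :=
  ∀ h ∈ frontier D, ∃ (U : Set (Rn n)) (f : Rn n → ℝ),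
    IsOpen U ∧ h ∈ U ∧ ContDiffOn ℝ k f U ∧
    frontier D ∩ U = {x ∈ U | f x = 0} ∧
    ∀ x ∈ frontier D ∩ U, fderiv ℝ f x ≠ 0

open Filter Topology

section Aux

/-- `D` translated so that `x` becomes the origin. -/
def eSet {n : ℕ} (D : Set (Rn n)) (x : Rn n) : Set (Rn n) := {p | x + p ∈ D}

variable {n : ℕ} {D : Set (Rn n)} {x y : Rn n}

lemma eSet_zero_mem (hx : x ∈ D) : (0 : Rn n) ∈ eSet D x := by simpa [eSet] using hx

lemma eSet_isOpen (hDo : IsOpen D) : IsOpen (eSet D x) :=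
  hDo.preimage (continuous_const.add continuous_id)

lemma eSet_convex (hDc : Convex ℝ D) : Convex ℝ (eSet D x) :=
  hDc.translate_preimage_right x

lemma eSet_nhds (hDo : IsOpen D) (hx : x ∈ D) : eSet D x ∈ 𝓝 0 :=
  (eSet_isOpen hDo).mem_nhds (eSet_zero_mem hx)

lemma eSet_bounded (hDb : Bornology.IsBounded D) :
    Bornology.IsVonNBounded ℝ (eSet D x) := by
  rw [NormedSpace.isVonNBounded_iff]
  rw [isBounded_iff_forall_norm_le] at hDb ⊢
  obtain ⟨C, hC⟩ := hDb
  refine ⟨C + ‖x‖, fun p hp => ?_⟩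
  calc ‖p‖ = ‖x + p - x‖ := by congr 1; abel
    _ ≤ ‖x + p‖ + ‖x‖ := norm_sub_le _ _
    _ ≤ C + ‖x‖ := by gcongr; exact hC _ hp

lemma mem_frontier_eSet : y ∈ frontier (eSet D x) ↔ x + y ∈ frontier D := by
  have : eSet D x = (Homeomorph.addLeft x) ⁻¹' D := rfl
  rw [this, ← Homeomorph.preimage_frontier]
  rfl

lemma pfun_eq_gauge (D : Set (Rn n)) (z : Cn n) :
    pfun D z = gauge (eSet D (rePart z)) (imPart z) := by
  rw [gauge_def, pfun]
  congr 1
  ext t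
  simp only [Set.mem_setOf_eq, Set.mem_sep_iff, Set.mem_Ioi]
  refine and_congr_right fun ht => ?_
  rw [Set.mem_smul_set_iff_inv_smul_mem₀ ht.ne']
  rfl

lemma gauge_eSet_pos (hDo : IsOpen D) (hDb : Bornology.IsBounded D) (hx : x ∈ D)
    (hy : y ≠ 0) : 0 < gauge (eSet D x) y :=
  (gauge_pos (absorbent_nhds_zero (eSet_nhds hDo hx)) (eSet_bounded hDb)).2 hy

lemma gauge_eSet_frontier (hDo : IsOpen D) (hDc : Convex ℝ D) (hDb : Bornology.IsBounded D)
    (hx : x ∈ D) (hy : y ≠ 0) :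
    x + (gauge (eSet D x) y)⁻¹ • y ∈ frontier D := by
  set t := gauge (eSet D x) y with htdef
  have ht : 0 < t := gauge_eSet_pos hDo hDb hx hy
  rw [← mem_frontier_eSet, ← gauge_eq_one_iff_mem_frontier (eSet_convex hDc) (eSet_nhds hDo hx),
    gauge_smul_of_nonneg (inv_nonneg.2 ht.le), ← htdef, smul_eq_mul]
  field_simp

lemma gauge_eSet_eq_of_frontier (hDo : IsOpen D) (hDc : Convex ℝ D)
    (hx : x ∈ D) {t : ℝ} (ht : 0 < t) (hfr : x + t⁻¹ • y ∈ frontier D) :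
    gauge (eSet D x) y = t := by
  have h1 : gauge (eSet D x) (t⁻¹ • y) = 1 := by
    rw [gauge_eq_one_iff_mem_frontier (eSet_convex hDc) (eSet_nhds hDo hx), mem_frontier_eSet]
    exact hfr
  rw [gauge_smul_of_nonneg (inv_nonneg.2 ht.le), smul_eq_mul] at h1
  field_simp at h1
  linarith

lemma frontier_not_mem_of_isOpen {hh : Rn n} (hDo : IsOpen D) (hfr : hh ∈ frontier D) :
    hh ∉ D := by
  rw [hDo.frontier_eq] at hfr
  exact hfr.2

end Aux

section Transversal
variable {n : ℕ} {D : Set (Rn n)} {x h : Rn n}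

set_option maxHeartbeats 1000000 in
lemma transversal (hDo : IsOpen D) (hDc : Convex ℝ D)
    (hx : x ∈ D) (hfr : h ∈ frontier D)
    {U : Set (Rn n)} {f : Rn n → ℝ} (hU : IsOpen U) (hhU : h ∈ U)
    (hfC : ContDiffOn ℝ 1 f U)
    (hfr0 : frontier D ∩ U = {p ∈ U | f p = 0})
    (hgrad : fderiv ℝ f h ≠ 0) : fderiv ℝ f h (h - x) ≠ 0 := by
  set ℓ := fderiv ℝ f h with hℓ
  intro hcontra
  set u := h - x with hu
  -- supporting functional
  obtain ⟨L, hL⟩ := geometric_hahn_banach_open_point hDc hDo (frontier_not_mem_of_isOpen hDo hfr)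
  have hLu : 0 < L u := by
    have := hL x hx
    simp only [hu, map_sub]
    linarith
  have hLclos : ∀ p ∈ closure D, L p ≤ L h := by
    intro p hp
    exact le_on_closure (fun a ha => (hL a ha).le) L.continuous.continuousOn
      continuousOn_const hp
  -- a vector with ℓ w = 1
  obtain ⟨v, hv⟩ : ∃ v, ℓ v ≠ 0 := by
    by_contra hno
    push_neg at hno
    exact hgrad (ContinuousLinearMap.ext fun v => hno v)
  set w := (ℓ v)⁻¹ • v with hw
  have hℓw : ℓ w = 1 := by
    simp [hw, map_smul, inv_mul_cancel₀ hv]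
  -- derivative of f at h
  have hfd : HasFDerivAt f ℓ h :=
    ((hfC.contDiffAt (hU.mem_nhds hhU)).differentiableAt one_ne_zero).hasFDerivAt
  have hfh0 : f h = 0 := by
    have : h ∈ frontier D ∩ U := ⟨hfr, hhU⟩
    rw [hfr0] at this
    exact this.2
  -- the map φ and Φ₂
  set B : ℝ × ℝ →L[ℝ] Rn n :=
    (ContinuousLinearMap.fst ℝ ℝ ℝ).smulRight u + (ContinuousLinearMap.snd ℝ ℝ ℝ).smulRight w
      with hB
  set φ : ℝ × ℝ → Rn n := fun p => h + B p with hφ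
  have hφ00 : φ (0, 0) = h := by simp [hφ]; exact map_zero B
  have hφd : HasFDerivAt φ B (0, 0) := (B.hasFDerivAt).const_add h
  have hφC : ContDiff ℝ 1 φ := contDiff_const.add (B.contDiff)
  set Φ : ℝ × ℝ → ℝ × ℝ := fun p => (p.1, f (φ p)) with hΦdef
  have hφ0 : φ 0 = h := hφ00
  have hΦ00 : Φ (0, 0) = (0, 0) := by simp [hΦdef, hφ0, hφ00, hfh0]
  have hgd : HasFDerivAt (fun p => f (φ p)) (ℓ.comp B) (0, 0) :=
    (hφ00 ▸ hfd).comp (0, 0) hφd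
  set e : (ℝ × ℝ) ≃L[ℝ] (ℝ × ℝ) := ContinuousLinearEquiv.refl ℝ (ℝ × ℝ) with he
  have hBe : ((ContinuousLinearMap.fst ℝ ℝ ℝ).prod (ℓ.comp B))
      = (e : (ℝ × ℝ) →L[ℝ] (ℝ × ℝ)) := by
    apply ContinuousLinearMap.ext
    rintro ⟨a, b⟩
    have : ℓ (B (a, b)) = b := by
      simp [hB, map_add, map_smul, hcontra, hℓw]
    simp [this, he]
  have hΦd : HasFDerivAt Φ (e : (ℝ × ℝ) →L[ℝ] (ℝ × ℝ)) (0, 0) := by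
    rw [← hBe]
    exact HasFDerivAt.prodMk (hasFDerivAt_fst) hgd
  have hΦC : ContDiffAt ℝ 1 Φ (0, 0) := by
    refine ContDiffAt.prodMk contDiffAt_fst ?_
    exact ((hfC.contDiffAt (hU.mem_nhds (hφ00 ▸ hhU))).comp _ hφC.contDiffAt)
  have hstrict : HasStrictFDerivAt Φ (e : (ℝ × ℝ) →L[ℝ] (ℝ × ℝ)) (0, 0) :=
    hΦC.hasStrictFDerivAt' hΦd one_ne_zero
  set ψ := hstrict.localInverse Φ e (0, 0) with hψ
  have hψ00 : ψ (0, 0) = (0, 0) := by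
    have := hstrict.localInverse_apply_image
    rwa [hΦ00] at this
  have hψcont : ContinuousAt ψ (0, 0) := by
    have := hstrict.localInverse_continuousAt
    rwa [hΦ00] at this
  have hψd : HasStrictFDerivAt ψ (e.symm : (ℝ × ℝ) →L[ℝ] (ℝ × ℝ)) (0, 0) := by
    have := hstrict.to_localInverse
    rwa [hΦ00] at this
  have hright : ∀ᶠ q in 𝓝 ((0 : ℝ), (0 : ℝ)), Φ (ψ q) = q := by
    have := hstrict.eventually_right_inverse
    rwa [hΦ00] at this
  -- restrict to the line s ↦ (s, 0)
  set τ : ℝ → ℝ := fun s => (ψ (s, 0)).2 with hτdef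
  have hjcont : ContinuousAt (fun s : ℝ => ((s : ℝ), (0 : ℝ))) 0 :=
    (continuous_id.prodMk continuous_const).continuousAt
  have hev1 : ∀ᶠ s : ℝ in 𝓝 0, Φ (ψ (s, 0)) = (s, 0) :=
    Filter.Tendsto.eventually (p := fun q => Φ (ψ q) = q) hjcont hright
  have hev2 : ∀ᶠ s : ℝ in 𝓝 0, f (h + s • u + τ s • w) = 0 := by
    filter_upwards [hev1] with s hs
    have h1 : (ψ (s, 0)).1 = s := congrArg Prod.fst hs
    have h2 : f (φ (ψ (s, 0))) = 0 := congrArg Prod.snd hs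
    rw [hφ] at h2
    rw [hB] at h2
    simpa [h1, hτdef, ← add_assoc] using h2
  have hevU : ∀ᶠ s : ℝ in 𝓝 0, h + s • u + τ s • w ∈ U := by
    have hc : ContinuousAt (fun s : ℝ => h + s • u + τ s • w) 0 := by
      have hψcont' : ContinuousAt ψ ((fun s : ℝ => ((s : ℝ), (0 : ℝ))) 0) := hψcont
      have hτc : ContinuousAt τ 0 :=
        (continuous_snd.continuousAt).comp (ContinuousAt.comp (g := ψ) (f := fun s : ℝ => ((s : ℝ), (0 : ℝ))) hψcont' hjcont)
      exact ((continuousAt_const.add ((continuousAt_id.smul continuousAt_const)))).add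
        (hτc.smul continuousAt_const)
    have hψ0 : ψ 0 = 0 := hψ00
    have hval : (fun s : ℝ => h + s • u + τ s • w) 0 = h := by
      have hτz : τ 0 = 0 := by simp [hτdef, hψ0, hψ00]
      simp [hτz]
    exact hc (hU.mem_nhds (hval.symm ▸ hhU))
  have hevfr : ∀ᶠ s : ℝ in 𝓝 0, s * L u + τ s * L w ≤ 0 := by
    filter_upwards [hev2, hevU] with s hs hsU
    have : h + s • u + τ s • w ∈ frontier D := by
      have : h + s • u + τ s • w ∈ {p ∈ U | f p = 0} := ⟨hsU, hs⟩
      rw [← hfr0] at this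
      exact this.1
    have hcl := hLclos _ this.1
    simp only [map_add, map_smul, smul_eq_mul] at hcl
    linarith
  -- derivative of τ at 0 is 0
  have hτd : HasDerivAt τ 0 0 := by
    have hj : HasDerivAt (fun s : ℝ => ((s : ℝ), (0 : ℝ))) ((1 : ℝ), (0 : ℝ)) 0 :=
      HasDerivAt.prodMk (hasDerivAt_id (0:ℝ)) (hasDerivAt_const (0:ℝ) (0:ℝ))
    have hψdf : HasFDerivAt ψ (e.symm : (ℝ × ℝ) →L[ℝ] (ℝ × ℝ))
        ((fun s : ℝ => ((s : ℝ), (0 : ℝ))) 0) := hψd.hasFDerivAt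
    have hcurve : HasDerivAt (fun s : ℝ => ψ (s, 0))
        ((e.symm : (ℝ × ℝ) →L[ℝ] (ℝ × ℝ)) (1, 0)) 0 :=
      HasFDerivAt.comp_hasDerivAt (f := fun s : ℝ => ((s : ℝ), (0 : ℝ))) 0 hψdf hj
    have := ((ContinuousLinearMap.snd ℝ ℝ ℝ).hasFDerivAt).comp_hasDerivAt 0 hcurve
    simp [he] at this
    exact this
  have hψ0' : ψ 0 = 0 := hψ00
  have hτ0 : τ 0 = 0 := by simp [hτdef, hψ0', hψ00]
  have hslope : Tendsto (fun s => τ s / s) (𝓝[≠] (0:ℝ)) (𝓝 0) := by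
    have := hasDerivAt_iff_tendsto_slope.1 hτd
    refine this.congr' ?_
    filter_upwards with s
    simp [slope, hτ0, div_eq_inv_mul]
  -- contradiction for small positive s
  have hε : 0 < L u / (|L w| + 1) := by positivity
  have hsmall : ∀ᶠ s : ℝ in 𝓝[>] (0:ℝ), |τ s / s| < L u / (|L w| + 1) := by
    have := (hslope.eventually (eventually_abs_sub_lt 0 hε))
    have h2 := nhdsWithin_mono (0:ℝ) (fun s (hs : s ∈ Set.Ioi 0) => (ne_of_gt hs : s ≠ 0)) this
    simp at h2
    exact h2
  have hfin : ∀ᶠ s : ℝ in 𝓝[>] (0:ℝ), False := by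
    have hfr' : ∀ᶠ s : ℝ in 𝓝[>] (0:ℝ), s * L u + τ s * L w ≤ 0 :=
      nhdsWithin_le_nhds hevfr
    filter_upwards [hsmall, hfr', self_mem_nhdsWithin] with s h1 h2 (hs : 0 < s)
    have habs : |τ s| = |τ s / s| * s := by
      rw [abs_div, abs_of_pos hs]
      field_simp
    have h3 : -(τ s * L w) ≤ |τ s| * |L w| := by
      calc -(τ s * L w) ≤ |τ s * L w| := neg_le_abs _
        _ = |τ s| * |L w| := abs_mul _ _
    have e1 : s * L u ≤ |τ s / s| * s * |L w| := by
      calc s * L u ≤ -(τ s * L w) := by linarith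
        _ ≤ |τ s| * |L w| := h3
        _ = |τ s / s| * s * |L w| := by rw [habs]
    have e2 : |τ s / s| * (|L w| + 1) < L u := by
      have := (lt_div_iff₀ (by positivity : (0:ℝ) < |L w| + 1)).1 h1
      linarith
    have e3 : |τ s / s| * s * |L w| ≤ (|τ s / s| * (|L w| + 1)) * s := by
      nlinarith [abs_nonneg (τ s / s), hs.le]
    have e4 : (|τ s / s| * (|L w| + 1)) * s < L u * s :=
      mul_lt_mul_of_pos_right e2 hs
    nlinarith [e1, e3, e4]
  obtain ⟨s, hs⟩ := hfin.exists
  exact hs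

end Transversal

/-- The derivative of the map `Φ(x,y,t) = (x, y, f(x + t⁻¹y))` as a linear equivalence. -/
def derivEquiv {n : ℕ} (ℓ : Rn n →L[ℝ] ℝ) (t c : ℝ) (ht : t ≠ 0) (hc : c ≠ 0) :
    (Rn n × Rn n × ℝ) ≃ₗ[ℝ] (Rn n × Rn n × ℝ) where
  toFun w := (w.1, w.2.1, ℓ w.1 + t⁻¹ * ℓ w.2.1 - (t ^ 2)⁻¹ * w.2.2 * c)
  invFun w := (w.1, w.2.1, (ℓ w.1 + t⁻¹ * ℓ w.2.1 - w.2.2) * t ^ 2 * c⁻¹)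
  map_add' a b := by
    refine Prod.ext rfl (Prod.ext rfl ?_)
    simp [map_add]
    ring
  map_smul' r a := by
    refine Prod.ext rfl (Prod.ext rfl ?_)
    simp [map_smul, smul_eq_mul]
    ring
  left_inv a := by
    refine Prod.ext rfl (Prod.ext rfl ?_)
    simp only
    field_simp
    ring
  right_inv w := by
    refine Prod.ext rfl (Prod.ext rfl ?_)
    simp only
    field_simp
    ring

set_option maxHeartbeats 1000000 in
lemma phi_deriv {n : ℕ} {U : Set (Rn n)} {f : Rn n → ℝ} (hU : IsOpen U)
    {x₀ y₀ : Rn n} {t₀ : ℝ} (ht₀ : t₀ ≠ 0)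
    (hh₀U : x₀ + t₀⁻¹ • y₀ ∈ U)
    {k : WithTop ℕ∞} (hk : 1 ≤ k) (hfC : ContDiffOn ℝ k f U)
    (hc : fderiv ℝ f (x₀ + t₀⁻¹ • y₀) y₀ ≠ 0) :
    HasFDerivAt (fun w : Rn n × Rn n × ℝ => (w.1, w.2.1, f (w.1 + w.2.2⁻¹ • w.2.1)))
      ((derivEquiv (fderiv ℝ f (x₀ + t₀⁻¹ • y₀)) t₀ (fderiv ℝ f (x₀ + t₀⁻¹ • y₀) y₀) ht₀
        hc).toContinuousLinearEquiv : (Rn n × Rn n × ℝ) →L[ℝ] (Rn n × Rn n × ℝ))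
      (x₀, y₀, t₀) ∧
    ContDiffAt ℝ k (fun w : Rn n × Rn n × ℝ => (w.1, w.2.1, f (w.1 + w.2.2⁻¹ • w.2.1)))
      (x₀, y₀, t₀) := by
  set h₀ := x₀ + t₀⁻¹ • y₀ with hh₀
  set ℓ := fderiv ℝ f h₀ with hℓ
  set W := Rn n × Rn n × ℝ
  set w₀ : W := (x₀, y₀, t₀) with hw₀
  -- projections
  set p₁ : W →L[ℝ] Rn n := ContinuousLinearMap.fst ℝ (Rn n) (Rn n × ℝ) with hp₁
  set p₂ : W →L[ℝ] Rn n :=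
    (ContinuousLinearMap.fst ℝ (Rn n) ℝ).comp (ContinuousLinearMap.snd ℝ (Rn n) (Rn n × ℝ))
    with hp₂
  set p₃ : W →L[ℝ] ℝ :=
    (ContinuousLinearMap.snd ℝ (Rn n) ℝ).comp (ContinuousLinearMap.snd ℝ (Rn n) (Rn n × ℝ))
    with hp₃
  -- derivative of the inner map m
  have hfd : HasFDerivAt f ℓ h₀ :=
    ((hfC.contDiffAt (hU.mem_nhds hh₀U)).differentiableAt (ne_of_gt (lt_of_lt_of_le zero_lt_one hk))).hasFDerivAt
  have hinvd : HasFDerivAt (fun w : W => (w.2.2)⁻¹) (-(t₀ ^ 2)⁻¹ • p₃) w₀ := by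
    have h1 : HasDerivAt (fun s : ℝ => s⁻¹) (-(t₀ ^ 2)⁻¹) t₀ := hasDerivAt_inv ht₀
    have := h1.comp_hasFDerivAt (f := fun w : W => w.2.2) w₀ p₃.hasFDerivAt
    simpa [Function.comp_def, ← neg_smul] using this
  have hsm : HasFDerivAt (fun w : W => (w.2.2)⁻¹ • w.2.1)
      (t₀⁻¹ • p₂ + (-(t₀ ^ 2)⁻¹ • p₃).smulRight y₀) w₀ :=
    hinvd.smul p₂.hasFDerivAt
  set M : W →L[ℝ] Rn n := p₁ + (t₀⁻¹ • p₂ + (-(t₀ ^ 2)⁻¹ • p₃).smulRight y₀) with hM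
  have hmd : HasFDerivAt (fun w : W => w.1 + (w.2.2)⁻¹ • w.2.1) M w₀ :=
    p₁.hasFDerivAt.add hsm
  have hgd : HasFDerivAt (fun w : W => f (w.1 + (w.2.2)⁻¹ • w.2.1)) (ℓ.comp M) w₀ :=
    hfd.comp w₀ hmd
  constructor
  · have heq : (p₁.prod (p₂.prod (ℓ.comp M)))
        = ((derivEquiv ℓ t₀ (ℓ y₀) ht₀ hc).toContinuousLinearEquiv : W →L[ℝ] W) := by
      apply ContinuousLinearMap.ext
      intro w
      have hA : ((derivEquiv ℓ t₀ (ℓ y₀) ht₀ hc).toContinuousLinearEquiv : W →L[ℝ] W) w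
          = (w.1, w.2.1, ℓ w.1 + t₀⁻¹ * ℓ w.2.1 - (t₀ ^ 2)⁻¹ * w.2.2 * (ℓ y₀)) := rfl
      rw [hA]
      refine Prod.ext rfl (Prod.ext rfl ?_)
      show (ℓ.comp M) w = _
      simp [hM, hp₁, hp₂, hp₃, map_add, map_smul, smul_eq_mul]
      have e1 : (ContinuousLinearMap.fst ℝ (Rn n) (Rn n × ℝ)) w = w.1 := rfl
      have e2 : (ContinuousLinearMap.snd ℝ (Rn n) (Rn n × ℝ)) w = w.2 := rfl
      rw [e1, e2]
      ring
    rw [← heq]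
    exact HasFDerivAt.prodMk p₁.hasFDerivAt (HasFDerivAt.prodMk p₂.hasFDerivAt hgd)
  · refine ContDiffAt.prodMk contDiffAt_fst (ContDiffAt.prodMk ?_ ?_)
    · exact (contDiff_fst.comp contDiff_snd).contDiffAt
    · have h22 : ContDiffAt ℝ k (fun w : W => w.2.2) w₀ :=
        (contDiff_snd.comp contDiff_snd).contDiffAt
      have hinv : ContDiffAt ℝ k (fun w : W => (w.2.2)⁻¹) w₀ := h22.inv ht₀
      have h21 : ContDiffAt ℝ k (fun w : W => w.2.1) w₀ :=
        (contDiff_fst.comp contDiff_snd).contDiffAt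
      have hm : ContDiffAt ℝ k (fun w : W => w.1 + (w.2.2)⁻¹ • w.2.1) w₀ :=
        contDiffAt_fst.add (hinv.smul h21)
      exact ((hfC.contDiffAt (hU.mem_nhds hh₀U)).comp w₀ hm)

section Main

variable {n : ℕ} {D : Set (Rn n)}

lemma rePart_eq_CLM (z : Cn n) :
    rePart z = (ContinuousLinearMap.pi
      (fun i : Fin n => Complex.reCLM.comp (ContinuousLinearMap.proj i)) : Cn n →L[ℝ] Rn n) z :=
  rfl

lemma imPart_eq_CLM (z : Cn n) :
    imPart z = (ContinuousLinearMap.pi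
      (fun i : Fin n => Complex.imCLM.comp (ContinuousLinearMap.proj i)) : Cn n →L[ℝ] Rn n) z :=
  rfl

end Main

set_option maxHeartbeats 2000000 in
theorem pfun_contDiffOn'
    (n : ℕ) (D : Set (Rn n)) (hDo : IsOpen D) (hDconv : Convex ℝ D)
    (hDb : Bornology.IsBounded D) (hDne : D.Nonempty)
    (k : ℕ∞) (hk : 1 ≤ k) (hbd : boundaryCk k D) :
    ContDiffOn ℝ k (pfun D) {z : Cn n | rePart z ∈ D ∧ imPart z ≠ 0} := by
  intro z₀ hz₀
  obtain ⟨hx₀, hy₀⟩ := hz₀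
  set x₀ := rePart z₀ with hx₀def
  set y₀ := imPart z₀ with hy₀def
  set t₀ := gauge (eSet D x₀) y₀ with ht₀def
  have ht₀ : 0 < t₀ := gauge_eSet_pos hDo hDb hx₀ hy₀
  have hfr : x₀ + t₀⁻¹ • y₀ ∈ frontier D := gauge_eSet_frontier hDo hDconv hDb hx₀ hy₀
  obtain ⟨U, f, hU, hh₀U, hfC, hfr0, hgrad⟩ := hbd _ hfr
  have hk1 : (1 : WithTop ℕ∞) ≤ (k : WithTop ℕ∞) := by exact_mod_cast hk
  have hfC1 : ContDiffOn ℝ 1 f U := hfC.of_le hk1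
  set ℓ := fderiv ℝ f (x₀ + t₀⁻¹ • y₀) with hℓdef
  have hgne : ℓ ≠ 0 := hgrad _ ⟨hfr, hh₀U⟩
  have htrans : ℓ ((x₀ + t₀⁻¹ • y₀) - x₀) ≠ 0 :=
    transversal hDo hDconv hx₀ hfr hU hh₀U hfC1 hfr0 hgne
  have hc : ℓ y₀ ≠ 0 := by
    have hsub : (x₀ + t₀⁻¹ • y₀) - x₀ = t₀⁻¹ • y₀ := by abel
    rw [hsub, map_smul, smul_eq_mul] at htrans
    exact fun h0 => htrans (by rw [h0, mul_zero])
  -- the map Φ and its local inverse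
  obtain ⟨hΦd, hΦC⟩ := phi_deriv hU ht₀.ne' hh₀U hk1 hfC hc
  set W := Rn n × Rn n × ℝ
  set Φ : W → W := fun w => (w.1, w.2.1, f (w.1 + w.2.2⁻¹ • w.2.1)) with hΦdef
  set w₀ : W := (x₀, y₀, t₀) with hw₀def
  set A := (derivEquiv ℓ t₀ (ℓ y₀) ht₀.ne' hc).toContinuousLinearEquiv with hAdef
  have hstrict : HasStrictFDerivAt Φ (A : W →L[ℝ] W) w₀ :=
    hΦC.hasStrictFDerivAt' hΦd (ne_of_gt (lt_of_lt_of_le zero_lt_one hk1))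
  set ψ := hstrict.localInverse Φ A w₀ with hψdef
  have hψC : ContDiffAt ℝ k ψ (Φ w₀) := hΦC.to_localInverse hΦd (ne_of_gt (lt_of_lt_of_le zero_lt_one hk1))
  have hfh₀ : f (x₀ + t₀⁻¹ • y₀) = 0 := by
    have hmem : (x₀ + t₀⁻¹ • y₀) ∈ frontier D ∩ U := ⟨hfr, hh₀U⟩
    rw [hfr0] at hmem
    exact hmem.2
  have hΦw₀ : Φ w₀ = (x₀, y₀, 0) := by
    simp only [hΦdef, hw₀def, hfh₀]
  -- the real-linear map z ↦ (Re z, Im z, 0)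
  set R : Cn n → W := fun z => (rePart z, imPart z, (0 : ℝ)) with hRdef
  have hRC : ContDiff ℝ k R := by
    have h1 : ContDiff ℝ k (fun z : Cn n => rePart z) := by
      have heq : (fun z : Cn n => rePart z) = ⇑(ContinuousLinearMap.pi
        (fun i : Fin n => Complex.reCLM.comp (ContinuousLinearMap.proj i)) :
          Cn n →L[ℝ] Rn n) := funext fun z => rePart_eq_CLM z
      rw [heq]
      exact ContinuousLinearMap.contDiff _
    have h2 : ContDiff ℝ k (fun z : Cn n => imPart z) := by
      have heq : (fun z : Cn n => imPart z) = ⇑(ContinuousLinearMap.pi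
        (fun i : Fin n => Complex.imCLM.comp (ContinuousLinearMap.proj i)) :
          Cn n →L[ℝ] Rn n) := funext fun z => imPart_eq_CLM z
      rw [heq]
      exact ContinuousLinearMap.contDiff _
    exact ContDiff.prodMk h1 (ContDiff.prodMk h2 contDiff_const)
  have hRz₀ : R z₀ = (x₀, y₀, 0) := rfl
  have hRcont : ContinuousAt R z₀ := hRC.continuous.continuousAt
  -- eventual identity
  have hright : ∀ᶠ q in 𝓝 ((x₀, y₀, 0) : W), Φ (ψ q) = q := by
    have := hstrict.eventually_right_inverse
    rwa [hΦw₀] at this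
  have hrinv : ∀ᶠ z in 𝓝 z₀, Φ (ψ (R z)) = R z := by
    have hT : Filter.Tendsto R (𝓝 z₀) (𝓝 ((x₀, y₀, 0) : W)) := by
      rw [← hRz₀]
      exact hRcont
    exact hT.eventually hright
  have hψR0 : ψ (R z₀) = w₀ := by
    rw [hRz₀, ← hΦw₀]
    exact hstrict.localInverse_apply_image
  have hPcont : ContinuousAt (fun z => ψ (R z)) z₀ := by
    have hψcont : ContinuousAt ψ (Φ w₀) := hstrict.localInverse_continuousAt
    rw [hΦw₀, ← hRz₀] at hψcont
    exact ContinuousAt.comp (g := ψ) (f := R) hψcont hRcont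
  have hpos : ∀ᶠ z in 𝓝 z₀, 0 < (ψ (R z)).2.2 := by
    have hc3 : ContinuousAt (fun z => (ψ (R z)).2.2) z₀ := hPcont.snd.snd
    have : Set.Ioi (0 : ℝ) ∈ 𝓝 ((fun z => (ψ (R z)).2.2) z₀) := by
      have hb : (fun z => (ψ (R z)).2.2) z₀ = t₀ := by
        show (ψ (R z₀)).2.2 = t₀
        rw [hψR0]
      rw [hb]
      exact Ioi_mem_nhds ht₀
    exact hc3 this
  have hmemU : ∀ᶠ z in 𝓝 z₀,
      (ψ (R z)).1 + ((ψ (R z)).2.2)⁻¹ • (ψ (R z)).2.1 ∈ U := by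
    have hmcont : ContinuousAt
        (fun z => (ψ (R z)).1 + ((ψ (R z)).2.2)⁻¹ • (ψ (R z)).2.1) z₀ := by
      have h1 : ContinuousAt (fun z => (ψ (R z)).1) z₀ := hPcont.fst
      have h2 : ContinuousAt (fun z => (ψ (R z)).2.1) z₀ := hPcont.snd.fst
      have h3 : ContinuousAt (fun z => (ψ (R z)).2.2) z₀ := hPcont.snd.snd
      have h4 : ContinuousAt (fun z => ((ψ (R z)).2.2)⁻¹) z₀ := by
        apply h3.inv₀
        show (ψ (R z₀)).2.2 ≠ 0
        rw [hψR0]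
        exact ht₀.ne'
      exact h1.add (h4.smul h2)
    have hval : (fun z => (ψ (R z)).1 + ((ψ (R z)).2.2)⁻¹ • (ψ (R z)).2.1) z₀
        = x₀ + t₀⁻¹ • y₀ := by
      show (ψ (R z₀)).1 + ((ψ (R z₀)).2.2)⁻¹ • (ψ (R z₀)).2.1 = x₀ + t₀⁻¹ • y₀
      rw [hψR0]
    exact hmcont (by rw [hval]; exact hU.mem_nhds hh₀U)
  have hreD : ∀ᶠ z in 𝓝 z₀, rePart z ∈ D := by
    have hrec : ContinuousAt (fun z : Cn n => rePart z) z₀ := by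
      have heq : (fun z : Cn n => rePart z) = ⇑(ContinuousLinearMap.pi
        (fun i : Fin n => Complex.reCLM.comp (ContinuousLinearMap.proj i)) :
          Cn n →L[ℝ] Rn n) := funext fun z => rePart_eq_CLM z
      rw [heq]
      exact (ContinuousLinearMap.continuous _).continuousAt
    exact hrec (hDo.mem_nhds hx₀)
  have hev : pfun D =ᶠ[𝓝 z₀] fun z => (ψ (R z)).2.2 := by
    filter_upwards [hrinv, hpos, hmemU, hreD] with z h1 h2 h3 h4
    have e1 : (ψ (R z)).1 = rePart z := congrArg Prod.fst h1
    have e2 : (ψ (R z)).2.1 = imPart z := congrArg (fun q : W => q.2.1) h1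
    have e3 : f ((ψ (R z)).1 + ((ψ (R z)).2.2)⁻¹ • (ψ (R z)).2.1) = 0 := by
      have := congrArg (fun q : W => q.2.2) h1
      simpa [hΦdef, hRdef] using this
    rw [e1, e2] at h3 e3
    have hqfr : rePart z + ((ψ (R z)).2.2)⁻¹ • imPart z ∈ frontier D := by
      have hmem : rePart z + ((ψ (R z)).2.2)⁻¹ • imPart z ∈ {p ∈ U | f p = 0} := ⟨h3, e3⟩
      rw [← hfr0] at hmem
      exact hmem.1
    rw [pfun_eq_gauge]
    exact gauge_eSet_eq_of_frontier hDo hDconv h4 h2 hqfr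
  -- conclude
  have hcomp : ContDiffAt ℝ k (fun z => (ψ (R z)).2.2) z₀ := by
    have h1 : ContDiffAt ℝ k ψ (R z₀) := by
      rw [hRz₀, ← hΦw₀]
      exact hψC
    have h3 := ContDiffAt.comp (g := ψ) (f := R) z₀ h1 hRC.contDiffAt
    exact ContDiffAt.comp (g := fun w : W => w.2.2) z₀
      ((contDiff_snd.comp contDiff_snd).contDiffAt) h3
  exact (hcomp.congr_of_eventuallyEq hev).contDiffWithinAt

/-- If `D ⊆ ℝⁿ` is a bounded convex open set (a properly convex open set
in an affine chart of `ℝℙⁿ`) with boundary of class `C^k`, `k ∈ ℕ ∪ {∞}`, `k ≥ 1`, then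
`p(x+iy) = inf {t > 0 : x + t⁻¹ y ∈ D}` is of class `C^k` on `{x+iy : x ∈ D, y ≠ 0}`. -/
theorem pfun_contDiffOn
    (n : ℕ) (D : Set (Rn n)) (hDo : IsOpen D) (hDconv : Convex ℝ D)
    (hDb : Bornology.IsBounded D) (hDne : D.Nonempty)
    (k : ℕ∞) (hk : 1 ≤ k) (hbd : boundaryCk k D) :
    ContDiffOn ℝ k (pfun D) {z : Cn n | rePart z ∈ D ∧ imPart z ≠ 0} :=
  pfun_contDiffOn' n D hDo hDconv hDb hDne k hk hbd
end
end

section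
/- Let a < b be real numbers and regard the segment [a,b] ⊆ ℝ ⊆ ℂ, where ℂ is the standard affine chart of ℂℙ¹. Then the elliptic tube of the closed segment [a,b], identified with its image in ℂ, equals the closed disk with diameter [a,b]: [a,b]^e = {z ∈ ℂ : Re((z−a)·conj(b−z)) ≥ 0} = {z ∈ ℂ : |z − (a+b)/2| ≤ (b−a)/2}; and the elliptic tube of the open segment (a,b) equals the corresponding open disk {z ∈ ℂ : |z − (a+b)/2| < (b−a)/2}. -/
open scoped ComplexConjugate

noncomputable section

/-- The open projective segment spanned by two lifts. -/
def openRealSeg {n : ℕ} (v₀ v₁ : RV n) : Set (RP n) :=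
  {x | ∃ c₀ c₁ : ℝ, 0 < c₀ * c₁ ∧ ∃ h : c₀ • v₀ + c₁ • v₁ ≠ 0,
    x = Projectivization.mk ℝ (c₀ • v₀ + c₁ • v₁) h}

/-- The elliptic tube over the open segment determined by the lifts `v₀ v₁`. -/
def openSegTube {n : ℕ} (v₀ v₁ : RV n) : Set (CP n) :=
  {z | ∃ c₀ c₁ : ℂ, 0 < (c₀ * conj c₁).re ∧ ∃ h : c₀ • cplx v₀ + c₁ • cplx v₁ ≠ 0,
    z = Projectivization.mk ℂ (c₀ • cplx v₀ + c₁ • cplx v₁) h}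

/-- The standard affine chart `ℝ ⊆ ℝℙ¹`. -/
def chartR (x : ℝ) : RP 1 :=
  Projectivization.mk ℝ ![x, 1] (by
    intro h
    have := congrFun h 1
    simp at this)

/-- The standard affine chart `ℂ ⊆ ℂℙ¹`. -/
def chartC (z : ℂ) : CP 1 :=
  Projectivization.mk ℂ ![z, 1] (by
    intro h
    have := congrFun h 1
    simp at this)


section Aux

open Projectivization

def eR (x : ℝ) : RV 1 := ![x, 1]
def eC (z : ℂ) : CV 1 := ![z, 1]

lemma eR_ne (x : ℝ) : eR x ≠ 0 := by
  intro h
  have := congrFun h 1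
  simp [eR] at this

lemma eC_ne (z : ℂ) : eC z ≠ 0 := by
  intro h
  have := congrFun h 1
  simp [eC] at this

lemma chartR_eq (x : ℝ) : chartR x = Projectivization.mk ℝ (eR x) (eR_ne x) := rfl

lemma chartC_eq (z : ℂ) : chartC z = Projectivization.mk ℂ (eC z) (eC_ne z) := rfl

lemma chartR_inj : Function.Injective chartR := by
  intro x y h
  rw [chartR_eq, chartR_eq, Projectivization.mk_eq_mk_iff] at h
  obtain ⟨u, hu⟩ := h
  have h1 := congrFun hu 1
  have h0 := congrFun hu 0
  simp [eR, Units.smul_def] at h1 h0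
  rw [h1] at h0
  simp at h0
  exact h0.symm

lemma cplx_smul_eR (l : ℝ) (x : ℝ) : cplx (l • eR x) = (l : ℂ) • eC x := by
  funext i
  fin_cases i <;> simp [cplx, eR, eC]

-- independence helpers
lemma dep_of_det (v₀ v₁ : RV 1) (h₀ : v₀ ≠ 0)
    (hdet : v₀ 0 * v₁ 1 - v₁ 0 * v₀ 1 = 0) : ∃ c : ℝ, v₁ = c • v₀ := by
  by_cases h : v₀ 0 = 0
  · have h1 : v₀ 1 ≠ 0 := by
      intro h1
      apply h₀
      funext i; fin_cases i <;> simp [h, h1]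
    have hv10 : v₁ 0 = 0 := by
      have h2 : v₁ 0 * v₀ 1 = 0 := by rw [h] at hdet; linarith
      exact (mul_eq_zero.mp h2).resolve_right h1
    refine ⟨v₁ 1 / v₀ 1, ?_⟩
    funext i
    fin_cases i
    · simp [Pi.smul_apply, smul_eq_mul, hv10, h]
    · simp [Pi.smul_apply, smul_eq_mul]
      field_simp
  · refine ⟨v₁ 0 / v₀ 0, ?_⟩
    funext i
    fin_cases i
    · simp [Pi.smul_apply, smul_eq_mul]
      field_simp
    · simp [Pi.smul_apply, smul_eq_mul]
      field_simp
      linarith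

lemma coeff_unique {v₀ v₁ : RV 1} (hdet : v₀ 0 * v₁ 1 - v₁ 0 * v₀ 1 ≠ 0)
    {α β α' β' : ℝ} (h : α • v₀ + β • v₁ = α' • v₀ + β' • v₁) : α = α' ∧ β = β' := by
  have h0 := congrFun h 0
  have h1 := congrFun h 1
  simp only [Pi.add_apply, Pi.smul_apply, smul_eq_mul] at h0 h1
  constructor
  · have : (α - α') * (v₀ 0 * v₁ 1 - v₁ 0 * v₀ 1) = 0 := by linear_combination v₁ 1 * h0 - v₁ 0 * h1
    have := (mul_eq_zero.mp this).resolve_right hdet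
    linarith
  · have : (β - β') * (v₀ 0 * v₁ 1 - v₁ 0 * v₀ 1) = 0 := by linear_combination v₀ 0 * h1 - v₀ 1 * h0
    have := (mul_eq_zero.mp this).resolve_right hdet
    linarith

lemma combo_ne {v₀ v₁ : RV 1} (hdet : v₀ 0 * v₁ 1 - v₁ 0 * v₀ 1 ≠ 0)
    {α β : ℝ} (h : ¬(α = 0 ∧ β = 0)) : α • v₀ + β • v₁ ≠ 0 := by
  intro h0
  have h00 := congrFun h0 0
  have h01 := congrFun h0 1
  simp only [Pi.add_apply, Pi.smul_apply, smul_eq_mul, Pi.zero_apply] at h00 h01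
  apply h
  constructor
  · have : α * (v₀ 0 * v₁ 1 - v₁ 0 * v₀ 1) = 0 := by linear_combination v₁ 1 * h00 - v₁ 0 * h01
    exact (mul_eq_zero.mp this).resolve_right hdet
  · have : β * (v₀ 0 * v₁ 1 - v₁ 0 * v₀ 1) = 0 := by linear_combination v₀ 0 * h01 - v₀ 1 * h00
    exact (mul_eq_zero.mp this).resolve_right hdet

end Aux

section Aux2

open Projectivization

lemma mem_realSeg_iff {v₀ v₁ : RV 1} (hdet : v₀ 0 * v₁ 1 - v₁ 0 * v₀ 1 ≠ 0)
    (α β : ℝ) (hne : α • v₀ + β • v₁ ≠ 0) :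
    Projectivization.mk ℝ (α • v₀ + β • v₁) hne ∈ realSeg v₀ v₁ ↔ 0 ≤ α * β := by
  constructor
  · rintro ⟨c₀, c₁, hc, hne', heq⟩
    rw [Projectivization.mk_eq_mk_iff] at heq
    obtain ⟨u, hu⟩ := heq
    have hu' : ((u : ℝ) * c₀) • v₀ + ((u : ℝ) * c₁) • v₁ = α • v₀ + β • v₁ := by
      rw [← hu, Units.smul_def, smul_add, smul_smul, smul_smul]
    obtain ⟨hα, hβ⟩ := coeff_unique hdet hu'
    rw [← hα, ← hβ]
    have : (u:ℝ) * c₀ * ((u:ℝ) * c₁) = (u:ℝ)^2 * (c₀ * c₁) := by ring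
    rw [this]
    positivity
  · intro h
    exact ⟨α, β, h, hne, rfl⟩

lemma mem_openRealSeg_iff {v₀ v₁ : RV 1} (hdet : v₀ 0 * v₁ 1 - v₁ 0 * v₀ 1 ≠ 0)
    (α β : ℝ) (hne : α • v₀ + β • v₁ ≠ 0) :
    Projectivization.mk ℝ (α • v₀ + β • v₁) hne ∈ openRealSeg v₀ v₁ ↔ 0 < α * β := by
  constructor
  · rintro ⟨c₀, c₁, hc, hne', heq⟩
    rw [Projectivization.mk_eq_mk_iff] at heq
    obtain ⟨u, hu⟩ := heq
    have hu' : ((u : ℝ) * c₀) • v₀ + ((u : ℝ) * c₁) • v₁ = α • v₀ + β • v₁ := by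
      rw [← hu, Units.smul_def, smul_add, smul_smul, smul_smul]
    obtain ⟨hα, hβ⟩ := coeff_unique hdet hu'
    rw [← hα, ← hβ]
    have h2 : (u:ℝ) * c₀ * ((u:ℝ) * c₁) = (u:ℝ)^2 * (c₀ * c₁) := by ring
    rw [h2]
    have hu2 : (0:ℝ) < (u:ℝ)^2 := by
      have := u.ne_zero
      positivity
    exact mul_pos hu2 hc
  · intro h
    exact ⟨α, β, h, hne, rfl⟩

end Aux2

section Aux3

/-- Perturbation preserving sign of a product. -/
lemma pert_sign (p₀ p₁ q₀ q₁ : ℝ) (hp₀ : p₀ ≠ 0) (hp₁ : p₁ ≠ 0) :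
    ∃ ε : ℝ, 0 < ε ∧ 0 < (p₀ * p₁) * ((p₀ + ε * q₀) * (p₁ + ε * q₁)) := by
  set ε := min |p₀| |p₁| / (|q₀| + |q₁| + 1) with hε
  have hm : 0 < min |p₀| |p₁| := lt_min (abs_pos.mpr hp₀) (abs_pos.mpr hp₁)
  have hD : 0 < |q₀| + |q₁| + 1 := by positivity
  have hεpos : 0 < ε := div_pos hm hD
  have hεq₀ : ε * |q₀| < |p₀| := by
    have h1 : ε * (|q₀| + |q₁| + 1) = min |p₀| |p₁| := div_mul_cancel₀ _ (ne_of_gt hD)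
    have h2 : min |p₀| |p₁| ≤ |p₀| := min_le_left _ _
    nlinarith [abs_nonneg q₁, hεpos]
  have hεq₁ : ε * |q₁| < |p₁| := by
    have h1 : ε * (|q₀| + |q₁| + 1) = min |p₀| |p₁| := div_mul_cancel₀ _ (ne_of_gt hD)
    have h2 : min |p₀| |p₁| ≤ |p₁| := min_le_right _ _
    nlinarith [abs_nonneg q₀, hεpos]
  refine ⟨ε, hεpos, ?_⟩
  have k₀ : 0 < p₀ * (p₀ + ε * q₀) := by
    nlinarith [abs_nonneg p₀, sq_abs p₀, abs_mul p₀ q₀, neg_abs_le (p₀ * q₀),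
      abs_pos.mpr hp₀, mul_pos hεpos (abs_pos.mpr hp₀)]
  have k₁ : 0 < p₁ * (p₁ + ε * q₁) := by
    nlinarith [abs_nonneg p₁, sq_abs p₁, abs_mul p₁ q₁, neg_abs_le (p₁ * q₁),
      abs_pos.mpr hp₁, mul_pos hεpos (abs_pos.mpr hp₁)]
  nlinarith [mul_pos k₀ k₁]

lemma classify_arith_closed (p₀ p₁ q₀ q₁ : ℝ)
    (hP : ¬(p₀ = 0 ∧ p₁ = 0)) (hQ : ¬(q₀ = 0 ∧ q₁ = 0))
    (hPq : 0 ≤ p₀ * p₁) (hQq : 0 ≤ q₀ * q₁)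
    (hmix : ∀ s t : ℝ, s * t < 0 → (s * p₀ + t * q₀) * (s * p₁ + t * q₁) < 0) :
    (p₁ = 0 ∧ q₀ = 0 ∧ 0 < p₀ * q₁) ∨ (p₀ = 0 ∧ q₁ = 0 ∧ 0 < p₁ * q₀) := by
  -- p₀ * p₁ = 0
  have hpz : p₀ * p₁ = 0 := by
    rcases eq_or_lt_of_le hPq with h | h
    · exact h.symm
    · exfalso
      have hp₀ : p₀ ≠ 0 := by rintro rfl; simp at h
      have hp₁ : p₁ ≠ 0 := by rintro rfl; simp at h
      obtain ⟨ε, hεpos, hsign⟩ := pert_sign p₀ p₁ (-q₀) (-q₁) hp₀ hp₁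
      have := hmix 1 (-ε) (by nlinarith)
      nlinarith
  have hqz : q₀ * q₁ = 0 := by
    rcases eq_or_lt_of_le hQq with h | h
    · exact h.symm
    · exfalso
      have hq₀ : q₀ ≠ 0 := by rintro rfl; simp at h
      have hq₁ : q₁ ≠ 0 := by rintro rfl; simp at h
      obtain ⟨ε, hεpos, hsign⟩ := pert_sign q₀ q₁ (-p₀) (-p₁) hq₀ hq₁
      have := hmix (-ε) 1 (by nlinarith)
      nlinarith
  rcases mul_eq_zero.mp hpz with hp | hp
  · -- p₀ = 0, p₁ ≠ 0
    have hp₁ : p₁ ≠ 0 := fun h => hP ⟨hp, h⟩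
    have hm := hmix 1 (-1) (by norm_num)
    right
    rcases mul_eq_zero.mp hqz with hq | hq
    · exfalso
      rw [hp, hq] at hm
      nlinarith
    · refine ⟨hp, hq, ?_⟩
      rw [hp, hq] at hm
      nlinarith
  · -- p₁ = 0, p₀ ≠ 0
    have hp₀ : p₀ ≠ 0 := fun h => hP ⟨h, hp⟩
    have hm := hmix 1 (-1) (by norm_num)
    left
    rcases mul_eq_zero.mp hqz with hq | hq
    · refine ⟨hp, hq, ?_⟩
      rw [hp, hq] at hm
      nlinarith
    · exfalso
      rw [hp, hq] at hm
      nlinarith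

lemma classify_arith_open (p₀ p₁ q₀ q₁ : ℝ)
    (hPq : p₀ * p₁ ≤ 0) (hQq : q₀ * q₁ ≤ 0)
    (hpos : ∀ s t : ℝ, 0 < s → 0 < t → 0 < (s * p₀ + t * q₀) * (s * p₁ + t * q₁)) :
    (p₁ = 0 ∧ q₀ = 0 ∧ 0 < p₀ * q₁) ∨ (p₀ = 0 ∧ q₁ = 0 ∧ 0 < p₁ * q₀) := by
  have hpz : p₀ * p₁ = 0 := by
    rcases eq_or_lt_of_le hPq with h | h
    · exact h
    · exfalso
      have hp₀ : p₀ ≠ 0 := by rintro rfl; simp at h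
      have hp₁ : p₁ ≠ 0 := by rintro rfl; simp at h
      obtain ⟨ε, hεpos, hsign⟩ := pert_sign p₀ p₁ q₀ q₁ hp₀ hp₁
      have := hpos 1 ε one_pos hεpos
      nlinarith
  have hqz : q₀ * q₁ = 0 := by
    rcases eq_or_lt_of_le hQq with h | h
    · exact h
    · exfalso
      have hq₀ : q₀ ≠ 0 := by rintro rfl; simp at h
      have hq₁ : q₁ ≠ 0 := by rintro rfl; simp at h
      obtain ⟨ε, hεpos, hsign⟩ := pert_sign q₀ q₁ p₀ p₁ hq₀ hq₁
      have := hpos ε 1 hεpos one_pos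
      nlinarith
  have hm := hpos 1 1 one_pos one_pos
  rcases mul_eq_zero.mp hpz with hp | hp
  · right
    rcases mul_eq_zero.mp hqz with hq | hq
    · exfalso
      rw [hp, hq] at hm
      nlinarith
    · refine ⟨hp, hq, ?_⟩
      rw [hp, hq] at hm
      nlinarith
  · left
    rcases mul_eq_zero.mp hqz with hq | hq
    · refine ⟨hp, hq, ?_⟩
      rw [hp, hq] at hm
      nlinarith
    · exfalso
      rw [hp, hq] at hm
      nlinarith

end Aux3

section Aux4

open Projectivization

lemma det_ne_of_realSeg {a b : ℝ} (hab : a < b) {v₀ v₁ : RV 1} (h₀ : v₀ ≠ 0) (h₁ : v₁ ≠ 0)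
    (hseg : realSeg v₀ v₁ = chartR '' Set.Icc a b) :
    v₀ 0 * v₁ 1 - v₁ 0 * v₀ 1 ≠ 0 := by
  intro hdet
  obtain ⟨c, rfl⟩ := dep_of_det v₀ v₁ h₀ hdet
  -- every element of realSeg equals mk v₀
  have key : ∀ x ∈ realSeg v₀ (c • v₀), x = Projectivization.mk ℝ v₀ h₀ := by
    rintro x ⟨c₀, c₁, hc, hne, rfl⟩
    rw [Projectivization.mk_eq_mk_iff']
    exact ⟨c₀ + c₁ * c, by rw [add_smul, mul_smul]⟩
  have ha : chartR a ∈ realSeg v₀ (c • v₀) := by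
    rw [hseg]; exact ⟨a, ⟨le_refl a, le_of_lt hab⟩, rfl⟩
  have hb : chartR b ∈ realSeg v₀ (c • v₀) := by
    rw [hseg]; exact ⟨b, ⟨le_of_lt hab, le_refl b⟩, rfl⟩
  have : a = b := chartR_inj ((key _ ha).trans (key _ hb).symm)
  exact absurd this (ne_of_lt hab)

lemma det_ne_of_openRealSeg {a b : ℝ} (hab : a < b) {v₀ v₁ : RV 1} (h₀ : v₀ ≠ 0) (h₁ : v₁ ≠ 0)
    (hseg : openRealSeg v₀ v₁ = chartR '' Set.Ioo a b) :
    v₀ 0 * v₁ 1 - v₁ 0 * v₀ 1 ≠ 0 := by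
  intro hdet
  obtain ⟨c, rfl⟩ := dep_of_det v₀ v₁ h₀ hdet
  have key : ∀ x ∈ openRealSeg v₀ (c • v₀), x = Projectivization.mk ℝ v₀ h₀ := by
    rintro x ⟨c₀, c₁, hc, hne, rfl⟩
    rw [Projectivization.mk_eq_mk_iff']
    exact ⟨c₀ + c₁ * c, by rw [add_smul, mul_smul]⟩
  have hm1 : a + (b - a)/3 ∈ Set.Ioo a b := by constructor <;> nlinarith
  have hm2 : a + 2*(b - a)/3 ∈ Set.Ioo a b := by constructor <;> nlinarith
  have ha : chartR (a + (b - a)/3) ∈ openRealSeg v₀ (c • v₀) := by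
    rw [hseg]; exact ⟨_, hm1, rfl⟩
  have hb : chartR (a + 2*(b - a)/3) ∈ openRealSeg v₀ (c • v₀) := by
    rw [hseg]; exact ⟨_, hm2, rfl⟩
  have : a + (b - a)/3 = a + 2*(b - a)/3 := chartR_inj ((key _ ha).trans (key _ hb).symm)
  nlinarith [this]

/-- `chartR x` as the mk of a linear combination equal to a multiple of `eR x`. -/
lemma chartR_eq_mk_of_eq {α β : ℝ} {v₀ v₁ : RV 1} (x : ℝ)
    (h : α • v₀ + β • v₁ = eR x) (hne : α • v₀ + β • v₁ ≠ 0) :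
    chartR x = Projectivization.mk ℝ (α • v₀ + β • v₁) hne := by
  rw [chartR_eq, Projectivization.mk_eq_mk_iff']
  exact ⟨1, by rw [one_smul, h]⟩

lemma classify_closed {a b : ℝ} (hab : a < b) {v₀ v₁ : RV 1} (h₀ : v₀ ≠ 0) (h₁ : v₁ ≠ 0)
    (hseg : realSeg v₀ v₁ = chartR '' Set.Icc a b) :
    ∃ l₀ l₁ : ℝ, 0 < l₀ * l₁ ∧
      ((v₀ = l₀ • eR a ∧ v₁ = l₁ • eR b) ∨ (v₀ = l₀ • eR b ∧ v₁ = l₁ • eR a)) := by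
  have hdet := det_ne_of_realSeg hab h₀ h₁ hseg
  set D := v₀ 0 * v₁ 1 - v₁ 0 * v₀ 1 with hD
  set p₀ := (a * v₁ 1 - v₁ 0) / D with hp₀def
  set p₁ := (v₀ 0 - a * v₀ 1) / D with hp₁def
  set q₀ := (b * v₁ 1 - v₁ 0) / D with hq₀def
  set q₁ := (v₀ 0 - b * v₀ 1) / D with hq₁def
  have hp : p₀ • v₀ + p₁ • v₁ = eR a := by
    funext i
    fin_cases i <;>
      simp only [Pi.add_apply, Pi.smul_apply, smul_eq_mul, hp₀def, hp₁def, eR, Fin.zero_eta, Fin.mk_one,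
        Matrix.cons_val_zero, Matrix.cons_val_one, Matrix.head_cons] <;>
      field_simp <;> ring
  have hq : q₀ • v₀ + q₁ • v₁ = eR b := by
    funext i
    fin_cases i <;>
      simp only [Pi.add_apply, Pi.smul_apply, smul_eq_mul, hq₀def, hq₁def, eR, Fin.zero_eta, Fin.mk_one,
        Matrix.cons_val_zero, Matrix.cons_val_one, Matrix.head_cons] <;>
      field_simp <;> ring
  have hPne : ¬(p₀ = 0 ∧ p₁ = 0) := by
    rintro ⟨h1, h2⟩
    rw [h1, h2] at hp
    simp at hp
    exact eR_ne a hp.symm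
  have hQne : ¬(q₀ = 0 ∧ q₁ = 0) := by
    rintro ⟨h1, h2⟩
    rw [h1, h2] at hq
    simp at hq
    exact eR_ne b hq.symm
  have hpne : p₀ • v₀ + p₁ • v₁ ≠ 0 := by rw [hp]; exact eR_ne a
  have hqne : q₀ • v₀ + q₁ • v₁ ≠ 0 := by rw [hq]; exact eR_ne b
  have hPq : 0 ≤ p₀ * p₁ := by
    rw [← mem_realSeg_iff hdet p₀ p₁ hpne, ← chartR_eq_mk_of_eq a hp hpne, hseg]
    exact ⟨a, ⟨le_refl a, le_of_lt hab⟩, rfl⟩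
  have hQq : 0 ≤ q₀ * q₁ := by
    rw [← mem_realSeg_iff hdet q₀ q₁ hqne, ← chartR_eq_mk_of_eq b hq hqne, hseg]
    exact ⟨b, ⟨le_of_lt hab, le_refl b⟩, rfl⟩
  have hmix : ∀ s t : ℝ, s * t < 0 →
      (s * p₀ + t * q₀) * (s * p₁ + t * q₁) < 0 := by
    intro s t hst
    have hs : s ≠ 0 := by rintro rfl; simp at hst
    have hcombo : (s * p₀ + t * q₀) • v₀ + (s * p₁ + t * q₁) • v₁ = s • eR a + t • eR b := by
      rw [← hp, ← hq]
      module
    have hVne : (s * p₀ + t * q₀) • v₀ + (s * p₁ + t * q₁) • v₁ ≠ 0 := by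
      rw [hcombo]
      intro h0
      have h00 := congrFun h0 0
      have h01 := congrFun h0 1
      simp [eR] at h00 h01
      have ht : t = -s := by linarith
      rw [ht] at h00
      have hsab : s * (a - b) = 0 := by linarith
      rcases mul_eq_zero.mp hsab with h | h
      · exact hs h
      · linarith
    by_contra hcon
    push_neg at hcon
    have hmem := (mem_realSeg_iff hdet _ _ hVne).mpr hcon
    rw [hseg] at hmem
    obtain ⟨x, hx, hxe⟩ := hmem
    rw [chartR_eq, Projectivization.mk_eq_mk_iff] at hxe
    obtain ⟨u, hu⟩ := hxe
    rw [hcombo] at hu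
    have h0 := congrFun hu 0
    have h1 := congrFun hu 1
    simp [eR, Units.smul_def] at h0 h1
    -- h0 : u * (s * a + t * b) = x, h1 : u * (s + t) = 1
    have e1 : x - a = (u : ℝ) * t * (b - a) := by linear_combination (-1 : ℝ) * h0 + a * h1
    have e2 : b - x = (u : ℝ) * s * (b - a) := by linear_combination h0 - b * h1
    have hxa : 0 ≤ x - a := by linarith [hx.1]
    have hbx : 0 ≤ b - x := by linarith [hx.2]
    have e3 : (x - a) * (b - x) = (u:ℝ)^2 * (b - a)^2 * (s * t) := by rw [e1, e2]; ring
    have hu2 : (0:ℝ) < (u:ℝ)^2 * (b - a)^2 := by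
      have := u.ne_zero
      have hba : b - a > 0 := by linarith
      positivity
    nlinarith [mul_nonneg hxa hbx, e3, hu2, hst]
  rcases classify_arith_closed p₀ p₁ q₀ q₁ hPne hQne hPq hQq hmix with
    ⟨h1, h2, h3⟩ | ⟨h1, h2, h3⟩
  · -- p₁ = 0, q₀ = 0 : v₀ ∥ eR a, v₁ ∥ eR b
    have hp' : p₀ • v₀ = eR a := by rw [← hp, h1]; simp
    have hq' : q₁ • v₁ = eR b := by rw [← hq, h2]; simp
    have hp₀ : p₀ ≠ 0 := by intro hz; rw [hz] at h3; simp at h3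
    have hq₁ : q₁ ≠ 0 := by intro hz; rw [hz] at h3; simp at h3
    refine ⟨p₀⁻¹, q₁⁻¹, ?_, Or.inl ⟨?_, ?_⟩⟩
    · rw [← mul_inv]
      exact inv_pos.mpr h3
    · rw [← hp', smul_smul, inv_mul_cancel₀ hp₀, one_smul]
    · rw [← hq', smul_smul, inv_mul_cancel₀ hq₁, one_smul]
  · -- p₀ = 0, q₁ = 0 : v₀ ∥ eR b, v₁ ∥ eR a
    have hp' : p₁ • v₁ = eR a := by rw [← hp, h1]; simp
    have hq' : q₀ • v₀ = eR b := by rw [← hq, h2]; simp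
    have hp₁ : p₁ ≠ 0 := by intro hz; rw [hz] at h3; simp at h3
    have hq₀ : q₀ ≠ 0 := by intro hz; rw [hz] at h3; simp at h3
    refine ⟨q₀⁻¹, p₁⁻¹, ?_, Or.inr ⟨?_, ?_⟩⟩
    · rw [← mul_inv]
      exact inv_pos.mpr (by nlinarith)
    · rw [← hq', smul_smul, inv_mul_cancel₀ hq₀, one_smul]
    · rw [← hp', smul_smul, inv_mul_cancel₀ hp₁, one_smul]

end Aux4

section Aux5

open Projectivization

lemma classify_open {a b : ℝ} (hab : a < b) {v₀ v₁ : RV 1} (h₀ : v₀ ≠ 0) (h₁ : v₁ ≠ 0)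
    (hseg : openRealSeg v₀ v₁ = chartR '' Set.Ioo a b) :
    ∃ l₀ l₁ : ℝ, 0 < l₀ * l₁ ∧
      ((v₀ = l₀ • eR a ∧ v₁ = l₁ • eR b) ∨ (v₀ = l₀ • eR b ∧ v₁ = l₁ • eR a)) := by
  have hdet := det_ne_of_openRealSeg hab h₀ h₁ hseg
  set D := v₀ 0 * v₁ 1 - v₁ 0 * v₀ 1 with hD
  set p₀ := (a * v₁ 1 - v₁ 0) / D with hp₀def
  set p₁ := (v₀ 0 - a * v₀ 1) / D with hp₁def
  set q₀ := (b * v₁ 1 - v₁ 0) / D with hq₀def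
  set q₁ := (v₀ 0 - b * v₀ 1) / D with hq₁def
  have hp : p₀ • v₀ + p₁ • v₁ = eR a := by
    funext i
    fin_cases i <;>
      simp only [Pi.add_apply, Pi.smul_apply, smul_eq_mul, hp₀def, hp₁def, eR, Fin.zero_eta, Fin.mk_one,
        Matrix.cons_val_zero, Matrix.cons_val_one, Matrix.head_cons] <;>
      field_simp <;> ring
  have hq : q₀ • v₀ + q₁ • v₁ = eR b := by
    funext i
    fin_cases i <;>
      simp only [Pi.add_apply, Pi.smul_apply, smul_eq_mul, hq₀def, hq₁def, eR, Fin.zero_eta, Fin.mk_one,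
        Matrix.cons_val_zero, Matrix.cons_val_one, Matrix.head_cons] <;>
      field_simp <;> ring
  have hpne : p₀ • v₀ + p₁ • v₁ ≠ 0 := by rw [hp]; exact eR_ne a
  have hqne : q₀ • v₀ + q₁ • v₁ ≠ 0 := by rw [hq]; exact eR_ne b
  have hPq : p₀ * p₁ ≤ 0 := by
    by_contra hcon
    push_neg at hcon
    have hmem := (mem_openRealSeg_iff hdet p₀ p₁ hpne).mpr hcon
    rw [← chartR_eq_mk_of_eq a hp hpne, hseg] at hmem
    obtain ⟨x, hx, hxe⟩ := hmem
    have := chartR_inj hxe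
    rw [this] at hx
    exact lt_irrefl a hx.1
  have hQq : q₀ * q₁ ≤ 0 := by
    by_contra hcon
    push_neg at hcon
    have hmem := (mem_openRealSeg_iff hdet q₀ q₁ hqne).mpr hcon
    rw [← chartR_eq_mk_of_eq b hq hqne, hseg] at hmem
    obtain ⟨x, hx, hxe⟩ := hmem
    have := chartR_inj hxe
    rw [this] at hx
    exact lt_irrefl b hx.2
  have hpos : ∀ s t : ℝ, 0 < s → 0 < t →
      0 < (s * p₀ + t * q₀) * (s * p₁ + t * q₁) := by
    intro s t hs ht
    set x := (s * a + t * b) / (s + t) with hx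
    have hst : 0 < s + t := by linarith
    have hxI : x ∈ Set.Ioo a b := by
      constructor
      · rw [hx, lt_div_iff₀ hst]; nlinarith
      · rw [hx, div_lt_iff₀ hst]; nlinarith
    have hcombo : (s * p₀ + t * q₀) • v₀ + (s * p₁ + t * q₁) • v₁ = (s + t) • eR x := by
      have hsum : (s + t) • eR x = s • eR a + t • eR b := by
        funext i
        fin_cases i <;> simp [eR, hx, Pi.smul_apply, smul_eq_mul] <;> field_simp <;> ring
      rw [hsum, ← hp, ← hq]
      module
    have hVne : (s * p₀ + t * q₀) • v₀ + (s * p₁ + t * q₁) • v₁ ≠ 0 := by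
      rw [hcombo]
      intro h0
      have h01 := congrFun h0 1
      simp [eR, Pi.smul_apply] at h01
      linarith
    rw [← mem_openRealSeg_iff hdet _ _ hVne]
    have hmk : Projectivization.mk ℝ ((s * p₀ + t * q₀) • v₀ + (s * p₁ + t * q₁) • v₁) hVne
        = chartR x := by
      rw [chartR_eq, Projectivization.mk_eq_mk_iff']
      exact ⟨s + t, hcombo.symm⟩
    rw [hmk, hseg]
    exact ⟨x, hxI, rfl⟩
  rcases classify_arith_open p₀ p₁ q₀ q₁ hPq hQq hpos with
    ⟨h1, h2, h3⟩ | ⟨h1, h2, h3⟩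
  · have hp' : p₀ • v₀ = eR a := by rw [← hp, h1]; simp
    have hq' : q₁ • v₁ = eR b := by rw [← hq, h2]; simp
    have hp₀ : p₀ ≠ 0 := by intro hz; rw [hz] at h3; simp at h3
    have hq₁ : q₁ ≠ 0 := by intro hz; rw [hz] at h3; simp at h3
    refine ⟨p₀⁻¹, q₁⁻¹, ?_, Or.inl ⟨?_, ?_⟩⟩
    · rw [← mul_inv]
      exact inv_pos.mpr h3
    · rw [← hp', smul_smul, inv_mul_cancel₀ hp₀, one_smul]
    · rw [← hq', smul_smul, inv_mul_cancel₀ hq₁, one_smul]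
  · have hp' : p₁ • v₁ = eR a := by rw [← hp, h1]; simp
    have hq' : q₀ • v₀ = eR b := by rw [← hq, h2]; simp
    have hp₁ : p₁ ≠ 0 := by intro hz; rw [hz] at h3; simp at h3
    have hq₀ : q₀ ≠ 0 := by intro hz; rw [hz] at h3; simp at h3
    refine ⟨q₀⁻¹, p₁⁻¹, ?_, Or.inr ⟨?_, ?_⟩⟩
    · rw [← mul_inv]
      exact inv_pos.mpr (by nlinarith)
    · rw [← hq', smul_smul, inv_mul_cancel₀ hq₀, one_smul]
    · rw [← hp', smul_smul, inv_mul_cancel₀ hp₁, one_smul]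

end Aux5

section Aux6

open Projectivization

lemma re_conj_comm (u v : ℂ) : (u * conj v).re = (v * conj u).re := by
  simp [Complex.mul_re]
  ring

lemma real_mul_re (r : ℝ) (u : ℂ) : ((r : ℂ) * u).re = r * u.re := by
  simp [Complex.mul_re]

lemma segTube_smul_eq (p q : ℝ) (hpq : p ≠ q) (l₀ l₁ : ℝ) (hl : 0 < l₀ * l₁) :
    segTube (l₀ • eR p) (l₁ • eR q) = chartC '' {z : ℂ | 0 ≤ ((z - p) * conj (q - z)).re} := by
  have hl₀ : l₀ ≠ 0 := by rintro rfl; simp at hl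
  have hl₁ : l₁ ≠ 0 := by rintro rfl; simp at hl
  have hqp : ((q : ℂ) - p) ≠ 0 := by
    rw [sub_ne_zero]
    exact_mod_cast hpq.symm
  ext z
  constructor
  · rintro ⟨c₀, c₁, hre, hne, rfl⟩
    set d₀ := c₀ * (l₀ : ℂ) with hd₀
    set d₁ := c₁ * (l₁ : ℂ) with hd₁
    have hvec : c₀ • cplx (l₀ • eR p) + c₁ • cplx (l₁ • eR q) = d₀ • eC p + d₁ • eC q := by
      rw [cplx_smul_eR, cplx_smul_eR, smul_smul, smul_smul]
    have hdre : (d₀ * conj d₁).re = (l₀ * l₁) * (c₀ * conj c₁).re := by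
      have : d₀ * conj d₁ = ((l₀ * l₁ : ℝ) : ℂ) * (c₀ * conj c₁) := by
        rw [hd₀, hd₁, map_mul, Complex.conj_ofReal]
        push_cast
        ring
      rw [this, real_mul_re]
    have hre' : 0 ≤ (d₀ * conj d₁).re := by
      rw [hdre]
      exact mul_nonneg hl.le hre
    have hs : d₀ + d₁ ≠ 0 := by
      intro h0
      have hd1 : d₁ = -d₀ := by linear_combination h0
      rw [hd1] at hre'
      simp [Complex.mul_re, Complex.conj_re, Complex.conj_im] at hre'
      have hns2 : Complex.normSq d₀ ≤ 0 := by
        rw [Complex.normSq_apply]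
        linarith [hre']
      have hd₀0 : d₀ = 0 :=
        Complex.normSq_eq_zero.mp (le_antisymm hns2 (Complex.normSq_nonneg _))
      apply hne
      rw [hvec, hd₀0, hd1, hd₀0]
      simp
    set w := (d₀ * p + d₁ * q) / (d₀ + d₁) with hw
    have hwset : 0 ≤ ((w - p) * conj ((q : ℂ) - w)).re := by
      have e1 : (w - (p : ℂ)) * (d₀ + d₁) = d₁ * (((q - p : ℝ)) : ℂ) := by
        rw [hw]
        field_simp
        push_cast
        ring
      have e2' : ((q : ℂ) - w) * (d₀ + d₁) = d₀ * (((q - p : ℝ)) : ℂ) := by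
        rw [hw]
        field_simp
        push_cast
        ring
      have e2 : conj ((q : ℂ) - w) * conj (d₀ + d₁) = conj d₀ * (((q - p : ℝ)) : ℂ) := by
        rw [← map_mul, e2', map_mul, Complex.conj_ofReal]
      have hkey : ((w - p) * conj ((q : ℂ) - w)) * ((Complex.normSq (d₀ + d₁) : ℝ) : ℂ)
          = (d₁ * conj d₀) * ((((q - p : ℝ)) : ℂ))^2 := by
        rw [show ((Complex.normSq (d₀ + d₁) : ℝ) : ℂ) = (d₀ + d₁) * conj (d₀ + d₁) from
          (Complex.mul_conj _).symm]
        linear_combination (conj ((q : ℂ) - w) * conj (d₀ + d₁)) * e1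
          + (d₁ * (((q - p : ℝ)) : ℂ)) * e2
      have hre2 := congrArg Complex.re hkey
      rw [show (((w - p) * conj ((q : ℂ) - w)) * ((Complex.normSq (d₀ + d₁) : ℝ) : ℂ)).re
          = ((w - p) * conj ((q : ℂ) - w)).re * Complex.normSq (d₀ + d₁) from by
        rw [mul_comm, real_mul_re]; ring] at hre2
      rw [show ((d₁ * conj d₀) * ((((q - p : ℝ)) : ℂ))^2).re
          = (d₁ * conj d₀).re * (q - p)^2 from by
        rw [mul_comm, ← Complex.ofReal_pow, real_mul_re]; ring] at hre2
      have hnum : 0 ≤ (d₁ * conj d₀).re := by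
        rw [re_conj_comm]
        exact hre'
      have hns : 0 < Complex.normSq (d₀ + d₁) := Complex.normSq_pos.mpr hs
      nlinarith [sq_nonneg (q - p)]
    refine ⟨w, hwset, ?_⟩
    rw [chartC_eq, Projectivization.mk_eq_mk_iff']
    refine ⟨(d₀ + d₁)⁻¹, ?_⟩
    rw [hvec]
    funext i
    fin_cases i
    · simp [eC, Pi.smul_apply, smul_eq_mul, hw]
      field_simp
    · simp [eC, Pi.smul_apply, smul_eq_mul]
      exact inv_mul_cancel₀ hs
  · rintro ⟨w, hwmem, rfl⟩
    refine ⟨((q : ℂ) - w) / (l₀ : ℂ), (w - (p : ℂ)) / (l₁ : ℂ), ?_, ?_, ?_⟩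
    · have h1 : ((q : ℂ) - w) / (l₀ : ℂ) * conj ((w - (p : ℂ)) / (l₁ : ℂ))
          = (((l₀ * l₁)⁻¹ : ℝ) : ℂ) * (((q : ℂ) - w) * conj (w - (p : ℂ))) := by
        rw [map_div₀, Complex.conj_ofReal]
        push_cast
        field_simp
      rw [h1, real_mul_re]
      have := hwmem
      rw [Set.mem_setOf_eq] at this
      rw [re_conj_comm]
      exact mul_nonneg (inv_nonneg.mpr hl.le) this
    all_goals {
      have hvec2 : (((q : ℂ) - w) / (l₀ : ℂ)) • cplx (l₀ • eR p)
          + ((w - (p : ℂ)) / (l₁ : ℂ)) • cplx (l₁ • eR q) = ((q : ℂ) - (p : ℂ)) • eC w := by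
        rw [cplx_smul_eR, cplx_smul_eR, smul_smul, smul_smul]
        have e₀ : ((q : ℂ) - w) / (l₀ : ℂ) * (l₀ : ℂ) = (q : ℂ) - w :=
          div_mul_cancel₀ _ (Complex.ofReal_ne_zero.mpr hl₀)
        have e₁ : (w - (p : ℂ)) / (l₁ : ℂ) * (l₁ : ℂ) = w - (p : ℂ) :=
          div_mul_cancel₀ _ (Complex.ofReal_ne_zero.mpr hl₁)
        rw [e₀, e₁]
        funext i
        fin_cases i <;> simp [eC, Pi.smul_apply, smul_eq_mul] <;> ring
      first
      | · rw [hvec2]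
          exact smul_ne_zero hqp (eC_ne w)
      | · rw [chartC_eq]
          rw [Projectivization.mk_eq_mk_iff']
          refine ⟨((q : ℂ) - (p : ℂ))⁻¹, ?_⟩
          rw [hvec2, smul_smul, inv_mul_cancel₀ hqp, one_smul]
    }

end Aux6

section Aux7

open Projectivization

lemma openSegTube_smul_eq (p q : ℝ) (hpq : p ≠ q) (l₀ l₁ : ℝ) (hl : 0 < l₀ * l₁) :
    openSegTube (l₀ • eR p) (l₁ • eR q) = chartC '' {z : ℂ | 0 < ((z - p) * conj (q - z)).re} := by
  have hl₀ : l₀ ≠ 0 := by rintro rfl; simp at hl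
  have hl₁ : l₁ ≠ 0 := by rintro rfl; simp at hl
  have hqp : ((q : ℂ) - p) ≠ 0 := by
    rw [sub_ne_zero]
    exact_mod_cast hpq.symm
  ext z
  constructor
  · rintro ⟨c₀, c₁, hre, hne, rfl⟩
    set d₀ := c₀ * (l₀ : ℂ) with hd₀
    set d₁ := c₁ * (l₁ : ℂ) with hd₁
    have hvec : c₀ • cplx (l₀ • eR p) + c₁ • cplx (l₁ • eR q) = d₀ • eC p + d₁ • eC q := by
      rw [cplx_smul_eR, cplx_smul_eR, smul_smul, smul_smul]
    have hdre : (d₀ * conj d₁).re = (l₀ * l₁) * (c₀ * conj c₁).re := by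
      have : d₀ * conj d₁ = ((l₀ * l₁ : ℝ) : ℂ) * (c₀ * conj c₁) := by
        rw [hd₀, hd₁, map_mul, Complex.conj_ofReal]
        push_cast
        ring
      rw [this, real_mul_re]
    have hre' : 0 < (d₀ * conj d₁).re := by
      rw [hdre]
      exact mul_pos hl hre
    have hs : d₀ + d₁ ≠ 0 := by
      intro h0
      have hd1 : d₁ = -d₀ := by linear_combination h0
      rw [hd1] at hre'
      simp [Complex.mul_re, Complex.conj_re, Complex.conj_im] at hre'
      have hns2 : Complex.normSq d₀ < 0 := by
        rw [Complex.normSq_apply]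
        linarith [hre']
      exact absurd hns2 (not_lt.mpr (Complex.normSq_nonneg _))
    set w := (d₀ * p + d₁ * q) / (d₀ + d₁) with hw
    have hwset : 0 < ((w - p) * conj ((q : ℂ) - w)).re := by
      have e1 : (w - (p : ℂ)) * (d₀ + d₁) = d₁ * (((q - p : ℝ)) : ℂ) := by
        rw [hw]
        field_simp
        push_cast
        ring
      have e2' : ((q : ℂ) - w) * (d₀ + d₁) = d₀ * (((q - p : ℝ)) : ℂ) := by
        rw [hw]
        field_simp
        push_cast
        ring
      have e2 : conj ((q : ℂ) - w) * conj (d₀ + d₁) = conj d₀ * (((q - p : ℝ)) : ℂ) := by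
        rw [← map_mul, e2', map_mul, Complex.conj_ofReal]
      have hkey : ((w - p) * conj ((q : ℂ) - w)) * ((Complex.normSq (d₀ + d₁) : ℝ) : ℂ)
          = (d₁ * conj d₀) * ((((q - p : ℝ)) : ℂ))^2 := by
        rw [show ((Complex.normSq (d₀ + d₁) : ℝ) : ℂ) = (d₀ + d₁) * conj (d₀ + d₁) from
          (Complex.mul_conj _).symm]
        linear_combination (conj ((q : ℂ) - w) * conj (d₀ + d₁)) * e1
          + (d₁ * (((q - p : ℝ)) : ℂ)) * e2
      have hre2 := congrArg Complex.re hkey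
      rw [show (((w - p) * conj ((q : ℂ) - w)) * ((Complex.normSq (d₀ + d₁) : ℝ) : ℂ)).re
          = ((w - p) * conj ((q : ℂ) - w)).re * Complex.normSq (d₀ + d₁) from by
        rw [mul_comm, real_mul_re]; ring] at hre2
      rw [show ((d₁ * conj d₀) * ((((q - p : ℝ)) : ℂ))^2).re
          = (d₁ * conj d₀).re * (q - p)^2 from by
        rw [mul_comm, ← Complex.ofReal_pow, real_mul_re]; ring] at hre2
      have hnum : 0 < (d₁ * conj d₀).re := by
        rw [re_conj_comm]
        exact hre'
      have hns : 0 < Complex.normSq (d₀ + d₁) := Complex.normSq_pos.mpr hs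
      have hqp2 : 0 < (q - p)^2 := by
        have h' : q - p ≠ 0 := sub_ne_zero.mpr hpq.symm
        positivity
      nlinarith [mul_pos hnum hqp2]
    refine ⟨w, hwset, ?_⟩
    rw [chartC_eq, Projectivization.mk_eq_mk_iff']
    refine ⟨(d₀ + d₁)⁻¹, ?_⟩
    rw [hvec]
    funext i
    fin_cases i
    · simp [eC, Pi.smul_apply, smul_eq_mul, hw]
      field_simp
    · simp [eC, Pi.smul_apply, smul_eq_mul]
      exact inv_mul_cancel₀ hs
  · rintro ⟨w, hwmem, rfl⟩
    refine ⟨((q : ℂ) - w) / (l₀ : ℂ), (w - (p : ℂ)) / (l₁ : ℂ), ?_, ?_, ?_⟩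
    · have h1 : ((q : ℂ) - w) / (l₀ : ℂ) * conj ((w - (p : ℂ)) / (l₁ : ℂ))
          = (((l₀ * l₁)⁻¹ : ℝ) : ℂ) * (((q : ℂ) - w) * conj (w - (p : ℂ))) := by
        rw [map_div₀, Complex.conj_ofReal]
        push_cast
        field_simp
      rw [h1, real_mul_re]
      have := hwmem
      rw [Set.mem_setOf_eq] at this
      rw [re_conj_comm]
      exact mul_pos (inv_pos.mpr hl) this
    all_goals {
      have hvec2 : (((q : ℂ) - w) / (l₀ : ℂ)) • cplx (l₀ • eR p)
          + ((w - (p : ℂ)) / (l₁ : ℂ)) • cplx (l₁ • eR q) = ((q : ℂ) - (p : ℂ)) • eC w := by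
        rw [cplx_smul_eR, cplx_smul_eR, smul_smul, smul_smul]
        have e₀ : ((q : ℂ) - w) / (l₀ : ℂ) * (l₀ : ℂ) = (q : ℂ) - w :=
          div_mul_cancel₀ _ (Complex.ofReal_ne_zero.mpr hl₀)
        have e₁ : (w - (p : ℂ)) / (l₁ : ℂ) * (l₁ : ℂ) = w - (p : ℂ) :=
          div_mul_cancel₀ _ (Complex.ofReal_ne_zero.mpr hl₁)
        rw [e₀, e₁]
        funext i
        fin_cases i <;> simp [eC, Pi.smul_apply, smul_eq_mul] <;> ring
      first
      | · rw [hvec2]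
          exact smul_ne_zero hqp (eC_ne w)
      | · rw [chartC_eq]
          rw [Projectivization.mk_eq_mk_iff']
          refine ⟨((q : ℂ) - (p : ℂ))⁻¹, ?_⟩
          rw [hvec2, smul_smul, inv_mul_cancel₀ hqp, one_smul]
    }

end Aux7

section Aux8

lemma re_sym (p q : ℝ) (z : ℂ) :
    ((z - p) * conj ((q : ℂ) - z)).re = ((z - q) * conj ((p : ℂ) - z)).re := by
  simp [Complex.mul_re, Complex.sub_re, Complex.sub_im, Complex.conj_re, Complex.conj_im]
  ring

lemma closed_disk (a b : ℝ) (hab : a < b) :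
    {z : ℂ | 0 ≤ ((z - a) * conj (b - z)).re} =
      Metric.closedBall (((a + b) / 2 : ℝ) : ℂ) ((b - a) / 2) := by
  ext z
  have hr : (0:ℝ) ≤ (b - a)/2 := by linarith
  rw [Set.mem_setOf_eq, Metric.mem_closedBall, Complex.dist_eq, Complex.norm_def]
  rw [show (b-a)/2 = Real.sqrt (((b-a)/2)^2) from (Real.sqrt_sq hr).symm]
  rw [Real.sqrt_le_sqrt_iff (sq_nonneg _)]
  simp only [Complex.normSq_apply, Complex.mul_re, Complex.sub_re, Complex.sub_im,
    Complex.conj_re, Complex.conj_im, Complex.ofReal_re, Complex.ofReal_im]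
  constructor <;> intro h <;> nlinarith

lemma open_disk (a b : ℝ) (hab : a < b) :
    {z : ℂ | 0 < ((z - a) * conj (b - z)).re} =
      Metric.ball (((a + b) / 2 : ℝ) : ℂ) ((b - a) / 2) := by
  ext z
  have hr : (0:ℝ) ≤ (b - a)/2 := by linarith
  rw [Set.mem_setOf_eq, Metric.mem_ball, Complex.dist_eq, Complex.norm_def]
  rw [show (b-a)/2 = Real.sqrt (((b-a)/2)^2) from (Real.sqrt_sq hr).symm]
  rw [Real.sqrt_lt_sqrt_iff (Complex.normSq_nonneg _)]
  simp only [Complex.normSq_apply, Complex.mul_re, Complex.sub_re, Complex.sub_im,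
    Complex.conj_re, Complex.conj_im, Complex.ofReal_re, Complex.ofReal_im]
  constructor <;> intro h <;> nlinarith

end Aux8

/-- The elliptic tube of the closed segment `[a,b] ⊆ ℝ ⊆ ℂ ⊆ ℂℙ¹`
(for any choice of lifts of its extremes) is the closed disk with diameter `[a,b]`,
namely `{z : Re((z-a) conj(b-z)) ≥ 0} = closedBall ((a+b)/2) ((b-a)/2)`; the tube of the
open segment `(a,b)` is the corresponding open disk. -/
theorem segTube_eq_disk (a b : ℝ) (hab : a < b) :
    (∀ v₀ v₁ : RV 1, v₀ ≠ 0 → v₁ ≠ 0 → realSeg v₀ v₁ = chartR '' Set.Icc a b →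
      segTube v₀ v₁ = chartC '' {z : ℂ | 0 ≤ ((z - a) * conj (b - z)).re}) ∧
    {z : ℂ | 0 ≤ ((z - a) * conj (b - z)).re} =
      Metric.closedBall (((a + b) / 2 : ℝ) : ℂ) ((b - a) / 2) ∧
    (∀ v₀ v₁ : RV 1, v₀ ≠ 0 → v₁ ≠ 0 → openRealSeg v₀ v₁ = chartR '' Set.Ioo a b →
      openSegTube v₀ v₁ = chartC '' Metric.ball (((a + b) / 2 : ℝ) : ℂ) ((b - a) / 2)) := by
  refine ⟨?_, closed_disk a b hab, ?_⟩
  · intro v₀ v₁ h₀ h₁ hseg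
    obtain ⟨l₀, l₁, hl, hcase⟩ := classify_closed hab h₀ h₁ hseg
    rcases hcase with ⟨hv₀, hv₁⟩ | ⟨hv₀, hv₁⟩
    · rw [hv₀, hv₁]
      exact segTube_smul_eq a b (ne_of_lt hab) l₀ l₁ hl
    · have hset : {z : ℂ | 0 ≤ ((z - (b:ℂ)) * conj ((a:ℂ) - z)).re}
          = {z : ℂ | 0 ≤ ((z - (a:ℂ)) * conj ((b:ℂ) - z)).re} := by
        ext z
        rw [Set.mem_setOf_eq, Set.mem_setOf_eq, re_sym b a z]
      rw [hv₀, hv₁, segTube_smul_eq b a (ne_of_gt hab) l₀ l₁ hl, hset]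
  · intro v₀ v₁ h₀ h₁ hseg
    obtain ⟨l₀, l₁, hl, hcase⟩ := classify_open hab h₀ h₁ hseg
    rcases hcase with ⟨hv₀, hv₁⟩ | ⟨hv₀, hv₁⟩
    · rw [hv₀, hv₁, openSegTube_smul_eq a b (ne_of_lt hab) l₀ l₁ hl, open_disk a b hab]
    · have hset : {z : ℂ | 0 < ((z - (b:ℂ)) * conj ((a:ℂ) - z)).re}
          = {z : ℂ | 0 < ((z - (a:ℂ)) * conj ((b:ℂ) - z)).re} := by
        ext z
        rw [Set.mem_setOf_eq, Set.mem_setOf_eq, re_sym b a z]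
      rw [hv₀, hv₁, openSegTube_smul_eq b a (ne_of_gt hab) l₀ l₁ hl, hset,
        open_disk a b hab]
end
end
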